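/- arXiv:2109.09249 — 4 statements merged into one kernel-verified Lean document; each statement's English description precedes it below -/
import Mathlib

section
/- Let T be a weighted tree with positive edge weights that edge-transfers to the weighted tree T' with respect to size. Then the sum of the reciprocals of the nonzero eigenvalues of the combinatorial Laplacian of T is strictly greater than the corresponding sum for T'. (Since T and T' have the same number of vertices and the same volume, this expresses α(T) > α(T'), where α is the average hitting time.) -/
open scoped Classical

noncomputable section

/-- A weighted graph on vertex set `Fin n`: a simple graph together with a symmetric
weight function which is positive on edges and zero on non-edges. -/
structure WGraph (n : ℕ) where
  G : SimpleGraph (Fin n)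
  w : Fin n → Fin n → ℝ
  symm : ∀ u v, w u v = w v u
  pos : ∀ u v, G.Adj u v → 0 < w u v
  zero : ∀ u v, ¬ G.Adj u v → w u v = 0

namespace WGraph

variable {n : ℕ}

/-- The weighted degree `d_G(u) = Σ_v ω(uv)`. -/
def deg (T : WGraph n) (u : Fin n) : ℝ := ∑ v, T.w u v

/-- The volume of the whole graph: sum of all weighted degrees. -/
def vol (T : WGraph n) : ℝ := ∑ u, T.deg u

/-- The combinatorial Laplacian `L = D - A`. -/
def lap (T : WGraph n) : Matrix (Fin n) (Fin n) ℝ :=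
  Matrix.of fun u v => (if u = v then T.deg u else 0) - T.w u v

/-- The normalized Laplacian `𝓛 = D^{-1/2} L D^{-1/2}`. -/
def nlap (T : WGraph n) : Matrix (Fin n) (Fin n) ℝ :=
  Matrix.of fun u v => T.lap u v / (Real.sqrt (T.deg u) * Real.sqrt (T.deg v))

/-- The weight of an (unordered) edge. -/
def ew (T : WGraph n) : Sym2 (Fin n) → ℝ := Sym2.lift ⟨T.w, T.symm⟩

/-- `ω(H)`: the product of the weights of all edges of a (spanning) subgraph `H`. -/
def wOf (T : WGraph n) (H : SimpleGraph (Fin n)) : ℝ := ∏ᶠ e ∈ H.edgeSet, T.ew e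

/-- `τ(G)`: the sum of `ω(H)` over all spanning trees `H` of `G`. -/
def tau (T : WGraph n) : ℝ :=
  ∑ᶠ H ∈ {H : SimpleGraph (Fin n) | H ≤ T.G ∧ H.IsTree}, T.wOf H

/-- The multiset of edge-weights of a weighted graph. -/
def edgeWeights (T : WGraph n) : Multiset ℝ := T.G.edgeFinset.val.map T.ew

end WGraph

/-- The sum of the reciprocals of the nonzero eigenvalues of a hermitian real matrix
(in `ℝ`, `0⁻¹ = 0`, so the zero eigenvalues contribute nothing to the sum). -/
def sumInvEig {n : ℕ} (M : Matrix (Fin n) (Fin n) ℝ) : ℝ :=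
  if h : M.IsHermitian then ∑ i, (h.eigenvalues i)⁻¹ else 0

/-- `H` is a spanning 2-forest of `G`: an acyclic subgraph of `G` on the full
vertex set with exactly two connected components. -/
def IsTwoForestOf {n : ℕ} (G H : SimpleGraph (Fin n)) : Prop :=
  H ≤ G ∧ H.IsAcyclic ∧ Nat.card H.ConnectedComponent = 2

/-- `S(F)`: the product of the numbers of vertices of the components of `F`. -/
def SVal {n : ℕ} (F : SimpleGraph (Fin n)) : ℝ :=
  ∏ᶠ c : F.ConnectedComponent, (Nat.card c.supp : ℝ)

/-- `V_T(F)`: the product over the components of `F` of their volumes in `T`,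
i.e. of the sums of `T`-degrees of their vertices. -/
def VVal {n : ℕ} (T : WGraph n) (F : SimpleGraph (Fin n)) : ℝ :=
  ∏ᶠ c : F.ConnectedComponent, ∑ᶠ u ∈ c.supp, T.deg u

/-- The number of vertices of the connected component of `v` in `H`. -/
def compSize {n : ℕ} (H : SimpleGraph (Fin n)) (v : Fin n) : ℕ :=
  Nat.card ((H.connectedComponentMk v).supp)

/-- The volume of the connected component of `v` in `H`, computed intrinsically
(with the weights of `T`): the sum over vertices `u` of the component of the sum of
weights of edges of the component at `u`. -/
def compVol {n : ℕ} (T : WGraph n) (H : SimpleGraph (Fin n)) (v : Fin n) : ℝ :=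
  ∑ᶠ u ∈ (H.connectedComponentMk v).supp, ∑ᶠ x ∈ (H.connectedComponentMk v).supp, T.w u x

/-- The common part of the two edge-transfer operations: `T'` is obtained from `T` by
deleting the edge `e₂ = v₂v₃` and adding the edge `v₁v₃` carrying the weight of `e₂`,
where `e₁ = v₁v₂` and `e₂ = v₂v₃` are adjacent edges of `T`. -/
def EdgeTransferAux {n : ℕ} (T T' : WGraph n) (v1 v2 v3 : Fin n) : Prop :=
  T.G.Adj v1 v2 ∧ T.G.Adj v2 v3 ∧ v1 ≠ v3 ∧
  T'.G = T.G.deleteEdges {s(v2, v3)} ⊔ SimpleGraph.fromEdgeSet {s(v1, v3)} ∧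
  T'.w v1 v3 = T.w v2 v3 ∧
  (∀ u v : Fin n, s(u, v) ≠ s(v1, v3) → s(u, v) ≠ s(v2, v3) → T'.w u v = T.w u v)

/-- `T` edge-transfers to `T'` with respect to size (via `v₁, v₂, v₃`):
the component `T₁` of `T ∖ {e₁, e₂}` containing `v₁` has more vertices than the
component `T₂` containing `v₂`. -/
def EdgeTransferSize {n : ℕ} (T T' : WGraph n) (v1 v2 v3 : Fin n) : Prop :=
  EdgeTransferAux T T' v1 v2 v3 ∧
  compSize (T.G.deleteEdges {s(v1, v2), s(v2, v3)}) v2 <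
    compSize (T.G.deleteEdges {s(v1, v2), s(v2, v3)}) v1

/-- `T` edge-transfers to `T'` with respect to volume (via `v₁, v₂, v₃`):
the component `T₁` of `T ∖ {e₁, e₂}` containing `v₁` has larger intrinsic volume than
the component `T₂` containing `v₂`. -/
def EdgeTransferVol {n : ℕ} (T T' : WGraph n) (v1 v2 v3 : Fin n) : Prop :=
  EdgeTransferAux T T' v1 v2 v3 ∧
  compVol T (T.G.deleteEdges {s(v1, v2), s(v2, v3)}) v2 <
    compVol T (T.G.deleteEdges {s(v1, v2), s(v2, v3)}) v1

/-- Isomorphism of weighted graphs: a graph isomorphism preserving the weights. -/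
def WIso {n : ℕ} (T T' : WGraph n) : Prop :=
  ∃ f : T.G ≃g T'.G, ∀ u v, T'.w (f u) (f v) = T.w u v

/-- The star graph on `Fin n`, centered at the vertex `0`. -/
def starGraph (n : ℕ) : SimpleGraph (Fin n) :=
  SimpleGraph.fromRel fun u _ => u.val = 0

/-- `T` is a polarized weighted path: its underlying graph is a path
`v₁ v₂ … v_n` and, writing `e_i = v_i v_{i+1}` and `c(e_i) = min {i, n - i}`,
one has `ω(e_i) ≥ ω(e_j)` whenever `c(e_i) ≤ c(e_j)`. -/
def IsPolarizedPath {n : ℕ} (T : WGraph n) : Prop :=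
  ∃ f : SimpleGraph.pathGraph n ≃g T.G,
    ∀ (i j : ℕ) (hi : i + 1 < n) (hj : j + 1 < n),
      min (i + 1) (n - 1 - i) ≤ min (j + 1) (n - 1 - j) →
      T.w (f ⟨j, by omega⟩) (f ⟨j + 1, hj⟩) ≤ T.w (f ⟨i, by omega⟩) (f ⟨i + 1, hi⟩)

/-- Unweighted: adjacency indicator. -/
def adjW {n : ℕ} (G : SimpleGraph (Fin n)) (u v : Fin n) : ℝ := if G.Adj u v then 1 else 0

/-- Unweighted degree. -/
def degG {n : ℕ} (G : SimpleGraph (Fin n)) (u : Fin n) : ℝ := ∑ v, adjW G u v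

/-- The combinatorial Laplacian `L = D - A` of a simple graph. -/
def lapG {n : ℕ} (G : SimpleGraph (Fin n)) : Matrix (Fin n) (Fin n) ℝ :=
  Matrix.of fun u v => (if u = v then degG G u else 0) - adjW G u v

/-- The normalized Laplacian `𝓛 = D^{-1/2} L D^{-1/2}` of a simple graph. -/
def nlapG {n : ℕ} (G : SimpleGraph (Fin n)) : Matrix (Fin n) (Fin n) ℝ :=
  Matrix.of fun u v => lapG G u v / (Real.sqrt (degG G u) * Real.sqrt (degG G v))


open Matrix

lemma mul_vecMulVec_mul {n : ℕ} (X Y : Matrix (Fin n) (Fin n) ℝ) (r s : Fin n → ℝ) :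
    X * vecMulVec r s * Y = vecMulVec (X *ᵥ r) (s ᵥ* Y) := by
  ext i j
  simp only [Matrix.mul_apply, vecMulVec_apply, Matrix.mulVec, Matrix.vecMul,
    dotProduct, Finset.sum_mul, Finset.mul_sum]
  apply Finset.sum_congr rfl
  intro k _
  apply Finset.sum_congr rfl
  intro l _
  ring

lemma specAux {n : ℕ} (hn : 0 < n) (L : Matrix (Fin n) (Fin n) ℝ)
    (hL : L.IsHermitian)
    (h1 : L *ᵥ (fun _ => (1:ℝ)) = 0)
    (hker : ∀ x : Fin n → ℝ, L *ᵥ x = 0 → ∀ i j, x i = x j) :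
    IsUnit (L + (n:ℝ)⁻¹ • Matrix.of (fun _ _ => (1:ℝ))).det ∧
      sumInvEig L = (L + (n:ℝ)⁻¹ • Matrix.of (fun _ _ => (1:ℝ)))⁻¹.trace - 1 := by
  classical
  set U : Matrix (Fin n) (Fin n) ℝ := (hL.eigenvectorUnitary : Matrix (Fin n) (Fin n) ℝ) with hU
  set μ : Fin n → ℝ := hL.eigenvalues with hμdef
  have hUU : star U * U = 1 := Matrix.mem_unitaryGroup_iff'.mp hL.eigenvectorUnitary.2
  have hUU' : U * star U = 1 := Matrix.mem_unitaryGroup_iff.mp hL.eigenvectorUnitary.2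
  have hspec : L = U * diagonal μ * star U := by
    have := hL.spectral_theorem
    simpa [RCLike.ofReal_real_eq_id] using this
  have hdiag : star U * L * U = diagonal μ := by
    calc star U * L * U = (star U * U) * diagonal μ * (star U * U) := by rw [hspec]; noncomm_ring
      _ = diagonal μ := by rw [hUU]; simp
  set one : Fin n → ℝ := fun _ => 1 with hone
  set v : Fin n → ℝ := star U *ᵥ one with hv
  -- each μ i * v i = 0
  have hμv : ∀ i, μ i * v i = 0 := by
    have hcomm : star U * L = diagonal μ * star U := by
      calc star U * L = star U * (U * diagonal μ * star U) := by rw [← hspec]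
        _ = (star U * U) * diagonal μ * star U := by noncomm_ring
        _ = diagonal μ * star U := by rw [hUU, one_mul]
    have : diagonal μ *ᵥ v = 0 := by
      rw [hv, mulVec_mulVec, ← hcomm, ← mulVec_mulVec, h1, mulVec_zero]
    intro i
    have := congrFun this i
    simpa [mulVec_diagonal] using this
  -- ‖v‖² = n
  have hvv : v ⬝ᵥ v = (n : ℝ) := by
    have hsym : star U = Uᵀ := by
      ext i j; simp [conjTranspose_apply]
    have h2 : v ⬝ᵥ v = (U *ᵥ v) ⬝ᵥ one := by
      rw [hv, dotProduct_mulVec, hsym, vecMul_transpose]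
    rw [h2, hv, mulVec_mulVec, hUU', one_mulVec]
    simp [dotProduct, hone]
  obtain ⟨i0, hi0⟩ : ∃ i0, v i0 ≠ 0 := by
    by_contra hc
    push_neg at hc
    have : v ⬝ᵥ v = 0 := by simp [dotProduct, hc]
    rw [hvv] at this
    exact absurd this (by positivity)
  have hμ0 : μ i0 = 0 := by
    rcases mul_eq_zero.mp (hμv i0) with h | h
    · exact h
    · exact absurd h hi0
  -- the zero eigenvalue is unique
  have hconst : ∀ i, μ i = 0 → ∀ a b, (hL.eigenvectorBasis i : EuclideanSpace ℝ (Fin n)) a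
      = hL.eigenvectorBasis i b := by
    intro i h0 a b
    have hmv := hL.mulVec_eigenvectorBasis i
    rw [hμdef] at h0
    rw [h0, zero_smul] at hmv
    exact hker _ hmv a b
  have horth := hL.eigenvectorBasis.orthonormal
  rw [orthonormal_iff_ite] at horth
  have hinner : ∀ i j : Fin n, (inner ℝ (hL.eigenvectorBasis i) (hL.eigenvectorBasis j))
      = ∑ a, (hL.eigenvectorBasis i : EuclideanSpace ℝ (Fin n)) a *
          (hL.eigenvectorBasis j : EuclideanSpace ℝ (Fin n)) a := by
    intro i j
    rw [PiLp.inner_apply]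
    simp
    exact Finset.sum_congr rfl fun _ _ => mul_comm _ _
  have hunique : ∀ i, i ≠ i0 → μ i ≠ 0 := by
    intro i hi h0
    have hfc := hconst i h0
    have hgc := hconst i0 hμ0
    have hno : (inner ℝ (hL.eigenvectorBasis i) (hL.eigenvectorBasis i)) = 1 := by
      rw [horth i i]; simp
    have hno0 : (inner ℝ (hL.eigenvectorBasis i0) (hL.eigenvectorBasis i0)) = 1 := by
      rw [horth i0 i0]; simp
    have hoi : (inner ℝ (hL.eigenvectorBasis i) (hL.eigenvectorBasis i0)) = 0 := by
      rw [horth i i0]; simp [hi]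
    have hne : Nonempty (Fin n) := ⟨⟨0, hn⟩⟩
    obtain ⟨a0⟩ := hne
    have hf : ∀ a, (hL.eigenvectorBasis i : EuclideanSpace ℝ (Fin n)) a
        = hL.eigenvectorBasis i a0 := fun a => hfc a a0
    have hg : ∀ a, (hL.eigenvectorBasis i0 : EuclideanSpace ℝ (Fin n)) a
        = hL.eigenvectorBasis i0 a0 := fun a => hgc a a0
    rw [hinner] at hno hno0 hoi
    have hf0 : (hL.eigenvectorBasis i : EuclideanSpace ℝ (Fin n)) a0 ≠ 0 := by
      intro h
      rw [Finset.sum_congr rfl (fun a _ => by rw [hf a, h, zero_mul])] at hno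
      simpa using hno
    have hg0 : (hL.eigenvectorBasis i0 : EuclideanSpace ℝ (Fin n)) a0 ≠ 0 := by
      intro h
      rw [Finset.sum_congr rfl (fun a _ => by rw [hg a, h, zero_mul])] at hno0
      simpa using hno0
    rw [Finset.sum_congr rfl (fun a _ => by rw [hf a, hg a])] at hoi
    simp only [Finset.sum_const, Finset.card_univ, Fintype.card_fin, nsmul_eq_mul] at hoi
    have hn' : (n:ℝ) ≠ 0 := by positivity
    have h2 := (mul_eq_zero.mp hoi).resolve_left hn'
    rcases mul_eq_zero.mp h2 with h | h
    · exact hf0 h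
    · exact hg0 h
  have hv0 : ∀ i, i ≠ i0 → v i = 0 := by
    intro i hi
    rcases mul_eq_zero.mp (hμv i) with h | h
    · exact absurd h (hunique i hi)
    · exact h
  have hvsq : v i0 * v i0 = (n : ℝ) := by
    rw [← hvv]
    rw [dotProduct]
    rw [Finset.sum_eq_single i0]
    · intro b _ hb; rw [hv0 b hb, zero_mul]
    · intro h; exact absurd (Finset.mem_univ i0) h
  set J : Matrix (Fin n) (Fin n) ℝ := Matrix.of (fun _ _ => (1:ℝ)) with hJ
  set M : Matrix (Fin n) (Fin n) ℝ := L + (n:ℝ)⁻¹ • J with hM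
  have hJv : J = vecMulVec one one := by
    ext i j; simp [hJ, vecMulVec_apply, hone]
  have hUJU : star U * J * U = vecMulVec v v := by
    have hvu : one ᵥ* U = v := by
      funext j
      simp [hv, Matrix.vecMul, Matrix.mulVec, dotProduct, hone, conjTranspose_apply]
    rw [hJv, mul_vecMulVec_mul, hvu, ← hv]
  have hvecd : vecMulVec v v = diagonal (fun i => if i = i0 then (n:ℝ) else 0) := by
    ext i j
    rcases eq_or_ne i i0 with rfl | hi
    · rcases eq_or_ne j i with rfl | hj
      · simp [vecMulVec_apply, hvsq, diagonal_apply]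
      · simp [vecMulVec_apply, hv0 j (fun h => hj (h ▸ rfl)), diagonal_apply, Ne.symm hj]
    · simp [vecMulVec_apply, hv0 i hi, diagonal_apply, hi]
  set d : Fin n → ℝ := fun i => if i = i0 then 1 else μ i with hd
  have hd0 : ∀ i, d i ≠ 0 := by
    intro i
    rcases eq_or_ne i i0 with rfl | hi
    · simp [hd]
    · simp only [hd, if_neg hi]
      exact hunique i hi
  have hMU : star U * M * U = diagonal d := by
    have expand : star U * M * U
        = diagonal μ + (n:ℝ)⁻¹ • diagonal (fun i => if i = i0 then (n:ℝ) else 0) := by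
      rw [hM, mul_add, add_mul, hdiag, mul_smul_comm, smul_mul_assoc, hUJU, hvecd]
    rw [expand]
    ext i j
    rcases eq_or_ne i j with rfl | hij
    · rcases eq_or_ne i i0 with rfl | hi
      · have hnn : (n:ℝ) ≠ 0 := by positivity
        simp [diagonal_apply, hd, hμ0]
        field_simp
      · simp [diagonal_apply, hd, hi]
    · simp [diagonal_apply, hij]
  have hMdiag : M = U * diagonal d * star U := by
    calc M = (U * star U) * M * (U * star U) := by rw [hUU']; simp
    _ = U * (star U * M * U) * star U := by noncomm_ring
    _ = U * diagonal d * star U := by rw [hMU]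
  have hdet : M.det = ∏ i, d i := by
    rw [hMdiag, det_mul_right_comm, hUU', one_mul, det_diagonal]
  have hdetu : IsUnit M.det := by
    rw [hdet, isUnit_iff_ne_zero]
    exact Finset.prod_ne_zero_iff.mpr (fun i _ => hd0 i)
  have hMinv : M⁻¹ = U * diagonal (fun i => (d i)⁻¹) * star U := by
    apply inv_eq_right_inv
    rw [hMdiag]
    calc U * diagonal d * star U * (U * diagonal (fun i => (d i)⁻¹) * star U)
        = U * (diagonal d * ((star U * U) * diagonal (fun i => (d i)⁻¹))) * star U := by
          noncomm_ring
      _ = U * (diagonal d * diagonal fun i => (d i)⁻¹) * star U := by rw [hUU, one_mul]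
      _ = 1 := by
          rw [diagonal_mul_diagonal]
          have h11 : (fun i => d i * (d i)⁻¹) = fun _ => (1:ℝ) := by
            funext i; exact mul_inv_cancel₀ (hd0 i)
          rw [h11, diagonal_one, mul_one, hUU']
  have htr : M⁻¹.trace = ∑ i, (d i)⁻¹ := by
    rw [hMinv, trace_mul_cycle, hUU, one_mul, trace_diagonal]
  have hsum : ∑ i, (d i)⁻¹ = (∑ i, (μ i)⁻¹) + 1 := by
    have hterm : ∀ i, (d i)⁻¹ = (μ i)⁻¹ + (if i = i0 then 1 else 0) := by
      intro i
      rcases eq_or_ne i i0 with rfl | hi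
      · simp [hd, hμ0]
      · simp [hd, hi]
    rw [Finset.sum_congr rfl (fun i _ => hterm i), Finset.sum_add_distrib]
    simp
  refine ⟨hdetu, ?_⟩
  rw [sumInvEig, dif_pos hL, htr, hsum, ← hμdef]
  ring


open Matrix

lemma trace_vecMulVec {n : ℕ} (r s : Fin n → ℝ) :
    (vecMulVec r s).trace = r ⬝ᵥ s := by
  simp [Matrix.trace, vecMulVec_apply, dotProduct, Matrix.diag]

namespace WGraph

variable {n : ℕ}

lemma w_nonneg (T : WGraph n) (u v : Fin n) : 0 ≤ T.w u v := by
  by_cases h : T.G.Adj u v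
  · exact (T.pos u v h).le
  · rw [T.zero u v h]

lemma w_self (T : WGraph n) (u : Fin n) : T.w u u = 0 :=
  T.zero u u (T.G.irrefl)

lemma lap_mulVec (T : WGraph n) (x : Fin n → ℝ) (u : Fin n) :
    (T.lap *ᵥ x) u = ∑ v, T.w u v * (x u - x v) := by
  simp only [lap, Matrix.mulVec, dotProduct, Matrix.of_apply, sub_mul, ite_mul, zero_mul,
    mul_sub]
  rw [Finset.sum_sub_distrib, Finset.sum_sub_distrib, Finset.sum_ite_eq]
  simp only [Finset.mem_univ, if_true]
  congr 1
  rw [deg, Finset.sum_mul]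

lemma lap_isHermitian (T : WGraph n) : T.lap.IsHermitian := by
  ext u v
  simp only [Matrix.conjTranspose_apply, lap, Matrix.of_apply, star_trivial]
  rcases eq_or_ne u v with rfl | h
  · rfl
  · simp [h, Ne.symm h, T.symm v u]

lemma lap_mulVec_one (T : WGraph n) : T.lap *ᵥ (fun _ => (1:ℝ)) = 0 := by
  funext u
  rw [lap_mulVec]
  simp

lemma lap_ker (T : WGraph n) (hc : T.G.Connected) (x : Fin n → ℝ)
    (hx : T.lap *ᵥ x = 0) : ∀ i j, x i = x j := by
  have key : ∀ u v, T.G.Adj u v → x u = x v := by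
    have hsum : ∑ u, x u * ((T.lap *ᵥ x) u) = 0 := by
      rw [hx]; simp
    have hexp : ∑ u, x u * ((T.lap *ᵥ x) u)
        = ∑ u, ∑ v, T.w u v * (x u * x u - x u * x v) := by
      refine Finset.sum_congr rfl fun u _ => ?_
      rw [lap_mulVec, Finset.mul_sum]
      exact Finset.sum_congr rfl fun v _ => by ring
    have hswap : (∑ u, ∑ v, T.w u v * (x v * x v - x u * x v))
        = ∑ u, ∑ v, T.w u v * (x u * x u - x u * x v) := by
      rw [Finset.sum_comm]
      exact Finset.sum_congr rfl fun u _ => Finset.sum_congr rfl fun v _ => by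
        rw [T.symm]; ring
    have h2 : ∑ u, ∑ v, T.w u v * (x u - x v)^2 = 0 := by
      have hsplit : ∑ u, ∑ v, T.w u v * (x u - x v)^2
          = (∑ u, ∑ v, T.w u v * (x u * x u - x u * x v))
            + ∑ u, ∑ v, T.w u v * (x v * x v - x u * x v) := by
        rw [← Finset.sum_add_distrib]
        refine Finset.sum_congr rfl fun u _ => ?_
        rw [← Finset.sum_add_distrib]
        exact Finset.sum_congr rfl fun v _ => by ring
      rw [hsplit, hswap, ← hexp, hsum, add_zero]
    have hnn : ∀ u v : Fin n, 0 ≤ T.w u v * (x u - x v)^2 :=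
      fun u v => mul_nonneg (T.w_nonneg u v) (sq_nonneg _)
    intro u v huv
    have hrow : ∀ u ∈ Finset.univ (α := Fin n), (0:ℝ) ≤ ∑ v, T.w u v * (x u - x v)^2 :=
      fun u _ => Finset.sum_nonneg fun v _ => hnn u v
    have hrow0 := (Finset.sum_eq_zero_iff_of_nonneg hrow).mp h2 u (Finset.mem_univ u)
    have hterm := (Finset.sum_eq_zero_iff_of_nonneg
      (fun v _ => hnn u v)).mp hrow0 v (Finset.mem_univ v)
    have : (x u - x v)^2 = 0 := by
      rcases mul_eq_zero.mp hterm with h | h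
      · exact absurd h (T.pos u v huv).ne'
      · exact h
    have := pow_eq_zero_iff (n := 2) (by norm_num) |>.mp this
    linarith [this]
  intro i j
  obtain ⟨wlk⟩ := hc.preconnected i j
  induction wlk with
  | nil => rfl
  | cons h p ih => exact (key _ _ h).trans ih

lemma lap_mulVec_special (T : WGraph n) (a b c : Fin n) (hab : a ≠ b) (hbc : b ≠ c)
    (hac : a ≠ c) (x : Fin n → ℝ)
    (hx : ∀ u v, T.G.Adj u v → s(u,v) ≠ s(a,b) → s(u,v) ≠ s(b,c) → x u = x v) (u : Fin n) :
    (T.lap *ᵥ x) u =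
      (if u = a then T.w a b * (x a - x b) else 0)
      + (if u = b then T.w b a * (x b - x a) + T.w b c * (x b - x c) else 0)
      + (if u = c then T.w c b * (x c - x b) else 0) := by
  have hf0 : ∀ v : Fin n, s(u,v) ≠ s(a,b) → s(u,v) ≠ s(b,c) → T.w u v * (x u - x v) = 0 := by
    intro v h1 h2
    by_cases hadj : T.G.Adj u v
    · rw [hx u v hadj h1 h2, sub_self, mul_zero]
    · rw [T.zero u v hadj, zero_mul]
  rw [lap_mulVec]
  by_cases hu1 : u = a
  · subst hu1
    rw [if_pos rfl, if_neg hab, if_neg hac, add_zero, add_zero]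
    rw [Finset.sum_eq_single b]
    · intro v _ hv
      refine hf0 v ?_ ?_
      · rw [ne_eq, Sym2.eq_iff]
        rintro (⟨-, h⟩ | ⟨h, -⟩)
        · exact hv h
        · exact hab h
      · rw [ne_eq, Sym2.eq_iff]
        rintro (⟨h, -⟩ | ⟨h, -⟩)
        · exact hab h
        · exact hac h
    · intro h; exact absurd (Finset.mem_univ b) h
  by_cases hu2 : u = b
  · subst hu2
    rw [if_neg hu1, if_pos rfl, if_neg hbc, zero_add, add_zero]
    have hsub : ∑ v, T.w u v * (x u - x v) = ∑ v ∈ ({a, c} : Finset (Fin n)), T.w u v * (x u - x v) := by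
      symm
      apply Finset.sum_subset (Finset.subset_univ _)
      intro v _ hv
      simp only [Finset.mem_insert, Finset.mem_singleton, not_or] at hv
      refine hf0 v ?_ ?_
      · rw [ne_eq, Sym2.eq_iff]
        rintro (⟨h, -⟩ | ⟨-, h⟩)
        · exact hu1 h
        · exact hv.1 h
      · rw [ne_eq, Sym2.eq_iff]
        rintro (⟨-, h⟩ | ⟨h, -⟩)
        · exact hv.2 h
        · exact hbc h
    rw [hsub, Finset.sum_pair hac]
  by_cases hu3 : u = c
  · subst hu3
    rw [if_neg hu1, if_neg hu2, if_pos rfl, zero_add, zero_add]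
    rw [Finset.sum_eq_single b]
    · intro v _ hv
      refine hf0 v ?_ ?_
      · rw [ne_eq, Sym2.eq_iff]
        rintro (⟨h, -⟩ | ⟨h, -⟩)
        · exact hac h.symm
        · exact hu2 h
      · rw [ne_eq, Sym2.eq_iff]
        rintro (⟨h, -⟩ | ⟨-, h⟩)
        · exact hu2 h
        · exact hv h
    · intro h; exact absurd (Finset.mem_univ b) h
  · rw [if_neg hu1, if_neg hu2, if_neg hu3, add_zero, add_zero]
    apply Finset.sum_eq_zero
    intro v _
    refine hf0 v ?_ ?_
    · rw [ne_eq, Sym2.eq_iff]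
      rintro (⟨h, -⟩ | ⟨h, -⟩)
      · exact hu1 h
      · exact hu2 h
    · rw [ne_eq, Sym2.eq_iff]
      rintro (⟨h, -⟩ | ⟨h, -⟩)
      · exact hu2 h
      · exact hu3 h

end WGraph

set_option maxHeartbeats 4000000 in
theorem stmt8 {n : ℕ} (T T' : WGraph n) (hT : T.G.IsTree) (hT' : T'.G.IsTree)
    (h : ∃ v1 v2 v3 : Fin n, EdgeTransferSize T T' v1 v2 v3) :
    sumInvEig T'.lap < sumInvEig T.lap := by
  classical
  obtain ⟨v1, v2, v3, ⟨⟨h12, h23, hne13, hG', hw13, hwoth⟩, hsize⟩⟩ := h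
  have hne12 : v1 ≠ v2 := h12.ne
  have hne23 : v2 ≠ v3 := h23.ne
  have hne21 : v2 ≠ v1 := hne12.symm
  have hne32 : v3 ≠ v2 := hne23.symm
  have hne31 : v3 ≠ v1 := hne13.symm
  have hn : 0 < n := by
    obtain ⟨u⟩ := hT.isConnected.nonempty
    exact u.pos
  have hnR : (0:ℝ) < n := by exact_mod_cast hn
  set H := T.G.deleteEdges {s(v1, v2), s(v2, v3)} with hH
  set K := T.G.deleteEdges {s(v2, v3)} with hK
  -- bridge facts
  have hbr : ∀ {x y : Fin n}, T.G.Adj x y → ¬ (T.G.deleteEdges {s(x,y)}).Reachable x y := by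
    intro x y hxy
    have hb := (SimpleGraph.isAcyclic_iff_forall_adj_isBridge.mp hT.IsAcyclic) hxy
    exact SimpleGraph.isBridge_iff.mp hb
  have hHK : H ≤ K := by
    rw [hH, hK]
    exact SimpleGraph.deleteEdges_anti (by simp)
  have NR12 : ¬ H.Reachable v1 v2 := by
    intro hr
    refine hbr h12 (hr.mono ?_)
    rw [hH]
    exact SimpleGraph.deleteEdges_anti (by simp)
  have NR23K : ¬ K.Reachable v2 v3 := hbr h23
  have NR23 : ¬ H.Reachable v2 v3 := fun hr => NR23K (hr.mono hHK)
  have hKadj21 : K.Adj v2 v1 := by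
    rw [hK, SimpleGraph.deleteEdges_adj]
    refine ⟨h12.symm, ?_⟩
    simp only [Set.mem_singleton_iff]
    rw [Sym2.eq_iff]
    rintro (⟨-, h⟩ | ⟨h, -⟩)
    · exact hne13 h
    · exact hne23 h
  have NR13 : ¬ H.Reachable v1 v3 := fun hr =>
    NR23K (hKadj21.reachable.trans (hr.mono hHK))
  have hnadj13 : ¬ T.G.Adj v1 v3 := by
    intro hadj
    have hKadj13 : K.Adj v1 v3 := by
      rw [hK, SimpleGraph.deleteEdges_adj]
      refine ⟨hadj, ?_⟩
      simp only [Set.mem_singleton_iff]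
      rw [Sym2.eq_iff]
      rintro (⟨h, -⟩ | ⟨h, -⟩)
      · exact hne12 h
      · exact hne13 h
    exact NR23K (hKadj21.reachable.trans hKadj13.reachable)
  -- T' adjacency
  have hadj'13 : T'.G.Adj v1 v3 := by
    rw [hG', SimpleGraph.sup_adj]
    right
    rw [SimpleGraph.fromEdgeSet_adj]
    exact ⟨rfl, hne13⟩
  have hnadj'23 : ¬ T'.G.Adj v2 v3 := by
    rw [hG', SimpleGraph.sup_adj]
    rintro (hl | hr)
    · rw [SimpleGraph.deleteEdges_adj] at hl
      exact hl.2 rfl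
    · rw [SimpleGraph.fromEdgeSet_adj, Set.mem_singleton_iff, Sym2.eq_iff] at hr
      rcases hr.1 with ⟨h, -⟩ | ⟨-, h⟩
      · exact hne21 h
      · exact hne13 h.symm
  have hT'edge : ∀ x y : Fin n, T'.G.Adj x y → s(x,y) ≠ s(v1,v2) → s(x,y) ≠ s(v1,v3) →
      (T.G.Adj x y ∧ s(x,y) ≠ s(v1,v2) ∧ s(x,y) ≠ s(v2,v3)) := by
    intro x y hadj hA hB
    rw [hG', SimpleGraph.sup_adj] at hadj
    rcases hadj with hl | hr
    · rw [SimpleGraph.deleteEdges_adj] at hl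
      exact ⟨hl.1, hA, by simpa using hl.2⟩
    · rw [SimpleGraph.fromEdgeSet_adj, Set.mem_singleton_iff] at hr
      exact absurd hr.1 hB
  -- weights
  set w1 := T.w v1 v2 with hw1def
  set w2 := T.w v2 v3 with hw2def
  have hw1 : 0 < w1 := T.pos _ _ h12
  have hw2 : 0 < w2 := T.pos _ _ h23
  have hTw13 : T.w v1 v3 = 0 := T.zero _ _ hnadj13
  have hTw31 : T.w v3 v1 = 0 := by rw [T.symm v3 v1]; exact hTw13
  have hTw21 : T.w v2 v1 = w1 := by rw [T.symm v2 v1]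
  have hTw32 : T.w v3 v2 = w2 := by rw [T.symm v3 v2]
  have hT'w13 : T'.w v1 v3 = w2 := hw13
  have hT'w31 : T'.w v3 v1 = w2 := by rw [T'.symm v3 v1]; exact hw13
  have hT'w23 : T'.w v2 v3 = 0 := T'.zero _ _ hnadj'23
  have hT'w32 : T'.w v3 v2 = 0 := by
    rw [T'.symm v3 v2]; exact hT'w23
  have hs21ne : s(v2,v1) ≠ s(v1,v3) := by
    rw [ne_eq, Sym2.eq_iff]
    rintro (⟨h, -⟩ | ⟨h, -⟩)
    · exact hne21 h
    · exact hne23 h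
  have hs21ne' : s(v2,v1) ≠ s(v2,v3) := by
    rw [ne_eq, Sym2.eq_iff]
    rintro (⟨-, h⟩ | ⟨h, -⟩)
    · exact hne13 h
    · exact hne23 h
  have hT'w21 : T'.w v2 v1 = w1 := by
    rw [hwoth v2 v1 hs21ne hs21ne', T.symm v2 v1]
  have hT'w12 : T'.w v1 v2 = w1 := by
    rw [T'.symm v1 v2]; exact hT'w21
  -- H edges
  have hHadj : ∀ x y : Fin n, T.G.Adj x y → s(x,y) ≠ s(v1,v2) → s(x,y) ≠ s(v2,v3) →
      H.Adj x y := by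
    intro x y hxy hA hB
    rw [hH, SimpleGraph.deleteEdges_adj]
    refine ⟨hxy, ?_⟩
    simp only [Set.mem_insert_iff, Set.mem_singleton_iff]
    rintro (h | h)
    · exact hA h
    · exact hB h
  -- cover
  have cover : ∀ u : Fin n, H.Reachable u v1 ∨ H.Reachable u v2 ∨ H.Reachable u v3 := by
    have step : ∀ (x y : Fin n), T.G.Walk x y →
        (H.Reachable y v1 ∨ H.Reachable y v2 ∨ H.Reachable y v3) →
        (H.Reachable x v1 ∨ H.Reachable x v2 ∨ H.Reachable x v3) := by
      intro x y p
      induction p with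
      | nil => exact id
      | @cons a b c hadj p ih =>
        intro hy
        by_cases he1 : s(a, b) = s(v1, v2)
        · rcases Sym2.eq_iff.mp he1 with ⟨rfl, rfl⟩ | ⟨rfl, rfl⟩
          · exact Or.inl (SimpleGraph.Reachable.refl _)
          · exact Or.inr (Or.inl (SimpleGraph.Reachable.refl _))
        by_cases he2 : s(a, b) = s(v2, v3)
        · rcases Sym2.eq_iff.mp he2 with ⟨rfl, rfl⟩ | ⟨rfl, rfl⟩
          · exact Or.inr (Or.inl (SimpleGraph.Reachable.refl _))
          · exact Or.inr (Or.inr (SimpleGraph.Reachable.refl _))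
        have hHxy : H.Adj a b := hHadj a b hadj he1 he2
        rcases ih hy with h | h | h
        · exact Or.inl (hHxy.reachable.trans h)
        · exact Or.inr (Or.inl (hHxy.reachable.trans h))
        · exact Or.inr (Or.inr (hHxy.reachable.trans h))
    intro u
    obtain ⟨p⟩ := hT.isConnected.preconnected u v2
    exact step u v2 p (Or.inr (Or.inl (SimpleGraph.Reachable.refl _)))
  have hclass : ∀ {x y : Fin n}, H.Adj x y → ∀ i : Fin n,
      (H.Reachable x i ↔ H.Reachable y i) :=
    fun hxy i => ⟨fun hr => hxy.symm.reachable.trans hr, fun hr => hxy.reachable.trans hr⟩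
  have hR12 : ∀ u, H.Reachable u v1 → H.Reachable u v2 → False :=
    fun u h1 h2 => NR12 (h1.symm.trans h2)
  have hR13 : ∀ u, H.Reachable u v1 → H.Reachable u v3 → False :=
    fun u h1 h2 => NR13 (h1.symm.trans h2)
  have hR23 : ∀ u, H.Reachable u v2 → H.Reachable u v3 → False :=
    fun u h1 h2 => NR23 (h1.symm.trans h2)
  -- the test vectors
  set q : Fin n → ℝ := fun u => if H.Reachable u v2 then -w1⁻¹
    else if H.Reachable u v3 then -(w1⁻¹ + w2⁻¹) else 0 with hqdef
  set p : Fin n → ℝ := fun u => if H.Reachable u v1 then -w1⁻¹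
    else if H.Reachable u v3 then -(w1⁻¹ + w2⁻¹) else 0 with hpdef
  set z : Fin n → ℝ := fun u => if H.Reachable u v3 then 1 else 0 with hzdef
  set aV : Fin n → ℝ := fun u => (if u = v2 then 1 else 0) - (if u = v3 then 1 else 0)
    with hadef
  set bV : Fin n → ℝ := fun u => (if u = v1 then 1 else 0) - (if u = v3 then 1 else 0)
    with hbdef
  have NR21 : ¬ H.Reachable v2 v1 := fun h => NR12 h.symm
  have NR31 : ¬ H.Reachable v3 v1 := fun h => NR13 h.symm
  have NR32 : ¬ H.Reachable v3 v2 := fun h => NR23 h.symm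
  have hqv1 : q v1 = 0 := by
    simp only [hqdef]; rw [if_neg NR12, if_neg NR13]
  have hqv2 : q v2 = -w1⁻¹ := by
    simp only [hqdef]; rw [if_pos (SimpleGraph.Reachable.refl _)]
  have hqv3 : q v3 = -(w1⁻¹ + w2⁻¹) := by
    simp only [hqdef]; rw [if_neg NR32, if_pos (SimpleGraph.Reachable.refl _)]
  have hpv1 : p v1 = -w1⁻¹ := by
    simp only [hpdef]; rw [if_pos (SimpleGraph.Reachable.refl _)]
  have hpv2 : p v2 = 0 := by
    simp only [hpdef]; rw [if_neg NR21, if_neg NR23]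
  have hpv3 : p v3 = -(w1⁻¹ + w2⁻¹) := by
    simp only [hpdef]; rw [if_neg NR31, if_pos (SimpleGraph.Reachable.refl _)]
  have hzv1 : z v1 = 0 := by
    simp only [hzdef]; rw [if_neg NR13]
  have hzv2 : z v2 = 0 := by
    simp only [hzdef]; rw [if_neg NR23]
  have hzv3 : z v3 = 1 := by
    simp only [hzdef]; rw [if_pos (SimpleGraph.Reachable.refl _)]
  have hav1 : aV v1 = 0 := by simp [hadef, hne12, hne13]
  have hav2 : aV v2 = 1 := by simp [hadef, hne23]
  have hav3 : aV v3 = -1 := by simp [hadef, hne32]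
  have hbv1 : bV v1 = 1 := by simp [hbdef, hne13]
  have hbv2 : bV v2 = 0 := by simp [hbdef, hne21, hne23]
  have hbv3 : bV v3 = -1 := by simp [hbdef, hne31]
  have ha0 : ∀ u : Fin n, u ≠ v2 → u ≠ v3 → aV u = 0 := by
    intro u h1 h2; simp [hadef, h1, h2]
  have hb0 : ∀ u : Fin n, u ≠ v1 → u ≠ v3 → bV u = 0 := by
    intro u h1 h2; simp [hbdef, h1, h2]
  -- invariance along H-edges
  have hqsame : ∀ x y : Fin n, H.Adj x y → q x = q y := by
    intro x y hxy
    simp only [hqdef]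
    exact if_congr (hclass hxy v2) rfl (if_congr (hclass hxy v3) rfl rfl)
  have hpsame : ∀ x y : Fin n, H.Adj x y → p x = p y := by
    intro x y hxy
    simp only [hpdef]
    exact if_congr (hclass hxy v1) rfl (if_congr (hclass hxy v3) rfl rfl)
  have hzsame : ∀ x y : Fin n, H.Adj x y → z x = z y := by
    intro x y hxy
    simp only [hzdef]
    exact if_congr (hclass hxy v3) rfl rfl
  have hqT : ∀ u v : Fin n, T.G.Adj u v → s(u,v) ≠ s(v1,v2) → s(u,v) ≠ s(v2,v3) → q u = q v :=
    fun u v h hA hB => hqsame u v (hHadj u v h hA hB)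
  have hzT : ∀ u v : Fin n, T.G.Adj u v → s(u,v) ≠ s(v1,v2) → s(u,v) ≠ s(v2,v3) → z u = z v :=
    fun u v h hA hB => hzsame u v (hHadj u v h hA hB)
  have hswap12 : s(v2,v1) = s(v1,v2) := Sym2.eq_swap
  have hpT' : ∀ u v : Fin n, T'.G.Adj u v → s(u,v) ≠ s(v2,v1) → s(u,v) ≠ s(v1,v3) →
      p u = p v := by
    intro u v h hA hB
    rw [hswap12] at hA
    obtain ⟨hadj, h1, h2⟩ := hT'edge u v h hA hB
    exact hpsame u v (hHadj u v hadj h1 h2)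
  have hzT' : ∀ u v : Fin n, T'.G.Adj u v → s(u,v) ≠ s(v2,v1) → s(u,v) ≠ s(v1,v3) →
      z u = z v := by
    intro u v h hA hB
    rw [hswap12] at hA
    obtain ⟨hadj, h1, h2⟩ := hT'edge u v h hA hB
    exact hzsame u v (hHadj u v hadj h1 h2)
  -- Laplacian applied to the test vectors
  have hLq : T.lap *ᵥ q = bV := by
    funext u
    rw [T.lap_mulVec_special v1 v2 v3 hne12 hne23 hne13 q hqT u]
    by_cases hu1 : u = v1
    · subst hu1
      rw [if_pos rfl, if_neg hne12, if_neg hne13, add_zero, add_zero, hqv1, hqv2, hbv1,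
        ← hw1def]
      field_simp
      try ring
    by_cases hu2 : u = v2
    · subst hu2
      rw [if_neg hne21, if_pos rfl, if_neg hne23, zero_add, add_zero, hqv1, hqv2, hqv3,
        hbv2, hTw21, ← hw2def]
      field_simp
      try ring
    by_cases hu3 : u = v3
    · subst hu3
      rw [if_neg hne31, if_neg hne32, if_pos rfl, zero_add, zero_add, hqv2, hqv3, hbv3,
        hTw32]
      field_simp
      try ring
    · rw [if_neg hu1, if_neg hu2, if_neg hu3, hb0 u hu1 hu3]
      ring
  have hLz : T.lap *ᵥ z = fun u => -w2 * aV u := by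
    funext u
    rw [T.lap_mulVec_special v1 v2 v3 hne12 hne23 hne13 z hzT u]
    show _ = -w2 * aV u
    by_cases hu1 : u = v1
    · subst hu1
      rw [if_pos rfl, if_neg hne12, if_neg hne13, add_zero, add_zero, hzv1, hzv2, hav1]
      ring
    by_cases hu2 : u = v2
    · subst hu2
      rw [if_neg hne21, if_pos rfl, if_neg hne23, zero_add, add_zero, hzv1, hzv2, hzv3,
        hav2, hTw21, ← hw2def]
      ring
    by_cases hu3 : u = v3
    · subst hu3
      rw [if_neg hne31, if_neg hne32, if_pos rfl, zero_add, zero_add, hzv2, hzv3, hav3,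
        hTw32]
      ring
    · rw [if_neg hu1, if_neg hu2, if_neg hu3, ha0 u hu2 hu3]
      ring
  have hL'p : T'.lap *ᵥ p = aV := by
    funext u
    rw [T'.lap_mulVec_special v2 v1 v3 hne21 hne13 hne23 p hpT' u]
    by_cases hu2 : u = v2
    · subst hu2
      rw [if_pos rfl, if_neg hne21, if_neg hne23, add_zero, add_zero, hpv1, hpv2, hav2,
        hT'w21]
      field_simp
      try ring
    by_cases hu1 : u = v1
    · subst hu1
      rw [if_neg hne12, if_pos rfl, if_neg hne13, zero_add, add_zero, hpv1, hpv2, hpv3,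
        hav1, hT'w12, hT'w13]
      field_simp
      try ring
    by_cases hu3 : u = v3
    · subst hu3
      rw [if_neg hne32, if_neg hne31, if_pos rfl, zero_add, zero_add, hpv1, hpv3, hav3,
        hT'w31]
      field_simp
      try ring
    · rw [if_neg hu2, if_neg hu1, if_neg hu3, ha0 u hu2 hu3]
      ring
  have hL'z : T'.lap *ᵥ z = fun u => -w2 * bV u := by
    funext u
    rw [T'.lap_mulVec_special v2 v1 v3 hne21 hne13 hne23 z hzT' u]
    show _ = -w2 * bV u
    by_cases hu2 : u = v2
    · subst hu2
      rw [if_pos rfl, if_neg hne21, if_neg hne23, add_zero, add_zero, hzv1, hzv2, hbv2]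
      ring
    by_cases hu1 : u = v1
    · subst hu1
      rw [if_neg hne12, if_pos rfl, if_neg hne13, zero_add, add_zero, hzv1, hzv2, hzv3,
        hbv1, hT'w13]
      ring
    by_cases hu3 : u = v3
    · subst hu3
      rw [if_neg hne32, if_neg hne31, if_pos rfl, zero_add, zero_add, hzv1, hzv3, hbv3,
        hT'w31]
      ring
    · rw [if_neg hu2, if_neg hu1, if_neg hu3, hb0 u hu1 hu3]
      ring
  have hw2ne : w2 ≠ 0 := ne_of_gt hw2
  have hw1ne : w1 ≠ 0 := ne_of_gt hw1
  have hnne : (n:ℝ) ≠ 0 := ne_of_gt hnR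
  -- cardinalities
  set S1 := (Finset.univ.filter (fun u => H.Reachable u v1)).card with hS1def
  set S2 := (Finset.univ.filter (fun u => H.Reachable u v2)).card with hS2def
  set S3 := (Finset.univ.filter (fun u => H.Reachable u v3)).card with hS3def
  have hcomp : ∀ v : Fin n,
      compSize H v = (Finset.univ.filter (fun u => H.Reachable u v)).card := by
    intro v
    rw [compSize]
    have hsupp : (H.connectedComponentMk v).supp = {u | H.Reachable u v} := by
      ext u
      rw [SimpleGraph.ConnectedComponent.mem_supp_iff, Set.mem_setOf_eq,
        SimpleGraph.ConnectedComponent.eq]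
    rw [hsupp, Nat.card_coe_set_eq, Set.ncard_eq_toFinset_card', Set.toFinset_setOf]
  have hS12 : S2 < S1 := by
    rw [hS2def, hS1def, ← hcomp v2, ← hcomp v1]
    exact hsize
  have hS3pos : 0 < S3 := by
    rw [hS3def]
    apply Finset.card_pos.mpr
    exact ⟨v3, Finset.mem_filter.mpr ⟨Finset.mem_univ _, SimpleGraph.Reachable.refl _⟩⟩
  have hSz : ∑ u, z u = (S3 : ℝ) := by
    rw [hS3def, hzdef, Finset.sum_boole]
  -- matrices
  set J : Matrix (Fin n) (Fin n) ℝ := Matrix.of (fun _ _ => (1:ℝ)) with hJdef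
  set M : Matrix (Fin n) (Fin n) ℝ := T.lap + (n:ℝ)⁻¹ • J with hMdef
  set M' : Matrix (Fin n) (Fin n) ℝ := T'.lap + (n:ℝ)⁻¹ • J with hM'def
  obtain ⟨hdetM, htrM⟩ := specAux hn T.lap T.lap_isHermitian T.lap_mulVec_one
    (T.lap_ker hT.isConnected)
  obtain ⟨hdetM', htrM'⟩ := specAux hn T'.lap T'.lap_isHermitian T'.lap_mulVec_one
    (T'.lap_ker hT'.isConnected)
  rw [← hJdef, ← hMdef] at hdetM htrM
  rw [← hJdef, ← hM'def] at hdetM' htrM'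
  have hJmulVec : ∀ x : Fin n → ℝ, J *ᵥ x = fun _ => (∑ v, x v) := by
    intro x
    funext u
    rw [hJdef]
    simp [Matrix.mulVec, dotProduct]
  set one : Fin n → ℝ := fun _ => 1 with honedef
  have hsum_one : ∑ v : Fin n, one v = (n:ℝ) := by simp [honedef]
  have hshift : ∀ (A : Matrix (Fin n) (Fin n) ℝ), A *ᵥ one = 0 →
      ∀ x : Fin n → ℝ, (A + (n:ℝ)⁻¹ • J) *ᵥ (x - ((∑ v, x v)/n) • one) = A *ᵥ x := by
    intro A hA x
    have hy0 : ∑ v, (x - ((∑ v, x v)/n) • one) v = 0 := by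
      simp only [Pi.sub_apply, Pi.smul_apply, smul_eq_mul]
      rw [Finset.sum_sub_distrib, ← Finset.mul_sum, hsum_one]
      field_simp
      ring
    rw [Matrix.add_mulVec, Matrix.mulVec_sub, Matrix.mulVec_smul, hA, smul_zero, sub_zero,
      Matrix.smul_mulVec, hJmulVec, hy0]
    funext u
    simp
  have hone' : T.lap *ᵥ one = 0 := by rw [honedef]; exact T.lap_mulVec_one
  have hone'' : T'.lap *ᵥ one = 0 := by rw [honedef]; exact T'.lap_mulVec_one
  have hMq : M *ᵥ (q - ((∑ v, q v)/n) • one) = bV := by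
    rw [hMdef, hshift T.lap hone' q, hLq]
  have hMz : M *ᵥ (z - ((∑ v, z v)/n) • one) = fun u => -w2 * aV u := by
    rw [hMdef, hshift T.lap hone' z, hLz]
  have hM'p : M' *ᵥ (p - ((∑ v, p v)/n) • one) = aV := by
    rw [hM'def, hshift T'.lap hone'' p, hL'p]
  have hM'z : M' *ᵥ (z - ((∑ v, z v)/n) • one) = fun u => -w2 * bV u := by
    rw [hM'def, hshift T'.lap hone'' z, hL'z]
  set y : Fin n → ℝ := (-(w2⁻¹)) • (z - ((∑ v, z v)/n) • one) with hydef
  have hMy : M *ᵥ y = aV := by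
    rw [hydef, Matrix.mulVec_smul, hMz]
    funext u
    simp only [Pi.smul_apply, smul_eq_mul]
    field_simp
  have hM'y : M' *ᵥ y = bV := by
    rw [hydef, Matrix.mulVec_smul, hM'z]
    funext u
    simp only [Pi.smul_apply, smul_eq_mul]
    field_simp
  have hMinvb : M⁻¹ *ᵥ bV = q - ((∑ v, q v)/n) • one := by
    rw [← hMq, Matrix.mulVec_mulVec, Matrix.nonsing_inv_mul _ hdetM, Matrix.one_mulVec]
  have hMinva : M⁻¹ *ᵥ aV = y := by
    rw [← hMy, Matrix.mulVec_mulVec, Matrix.nonsing_inv_mul _ hdetM, Matrix.one_mulVec]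
  have hM'invb : M'⁻¹ *ᵥ bV = y := by
    rw [← hM'y, Matrix.mulVec_mulVec, Matrix.nonsing_inv_mul _ hdetM', Matrix.one_mulVec]
  have hM'inva : M'⁻¹ *ᵥ aV = p - ((∑ v, p v)/n) • one := by
    rw [← hM'p, Matrix.mulVec_mulVec, Matrix.nonsing_inv_mul _ hdetM', Matrix.one_mulVec]
  -- entrywise difference of the weights
  have hw'w : ∀ u v : Fin n, T'.w u v - T.w u v
      = w2 * ((if s(u,v) = s(v1,v3) then (1:ℝ) else 0)
        - (if s(u,v) = s(v2,v3) then 1 else 0)) := by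
    intro u v
    by_cases h13 : s(u,v) = s(v1,v3)
    · have h23 : s(u,v) ≠ s(v2,v3) := by
        rw [h13, ne_eq, Sym2.eq_iff]
        rintro (⟨h, -⟩ | ⟨h, -⟩)
        · exact hne12 h
        · exact hne13 h
      rw [if_pos h13, if_neg h23]
      rcases Sym2.eq_iff.mp h13 with ⟨rfl, rfl⟩ | ⟨rfl, rfl⟩
      · rw [hT'w13, hTw13]; ring
      · rw [hT'w31, hTw31]; ring
    by_cases h23 : s(u,v) = s(v2,v3)
    · rw [if_neg h13, if_pos h23]
      rcases Sym2.eq_iff.mp h23 with ⟨rfl, rfl⟩ | ⟨rfl, rfl⟩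
      · rw [hT'w23, ← hw2def]; ring
      · rw [hT'w32, hTw32]; ring
    · rw [if_neg h13, if_neg h23, hwoth u v h13 h23]; ring
  have hdeg' : ∀ u : Fin n, T'.deg u - T.deg u
      = w2 * ((if u = v1 then (1:ℝ) else 0) - (if u = v2 then 1 else 0)) := by
    intro u
    rw [WGraph.deg, WGraph.deg, ← Finset.sum_sub_distrib,
      Finset.sum_congr rfl (fun v _ => hw'w u v), ← Finset.mul_sum]
    congr 1
    by_cases hu1 : u = v1
    · have hu2' : u ≠ v2 := by rw [hu1]; exact hne12
      rw [if_pos hu1, if_neg hu2']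
      have e : ∀ v : Fin n, ((if s(u,v) = s(v1,v3) then (1:ℝ) else 0)
          - (if s(u,v) = s(v2,v3) then 1 else 0)) = (if v = v3 then 1 else 0) := by
        intro v
        have c1 : (s(u,v) = s(v1,v3)) ↔ v = v3 := by
          rw [hu1]; exact Sym2.congr_right
        have c2 : ¬ (s(u,v) = s(v2,v3)) := by
          rw [hu1, Sym2.eq_iff]
          rintro (⟨h, -⟩ | ⟨h, -⟩)
          · exact hne12 h
          · exact hne13 h
        rw [if_neg c2, if_congr c1 rfl rfl, sub_zero]
      rw [Finset.sum_congr rfl (fun v _ => e v),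
        Finset.sum_ite_eq' Finset.univ v3 (fun _ => (1:ℝ))]
      simp
    by_cases hu2 : u = v2
    · have hu1' : u ≠ v1 := by rw [hu2]; exact hne21
      rw [if_neg hu1', if_pos hu2]
      have e : ∀ v : Fin n, ((if s(u,v) = s(v1,v3) then (1:ℝ) else 0)
          - (if s(u,v) = s(v2,v3) then 1 else 0)) = -(if v = v3 then 1 else 0) := by
        intro v
        have c2 : (s(u,v) = s(v2,v3)) ↔ v = v3 := by
          rw [hu2]; exact Sym2.congr_right
        have c1 : ¬ (s(u,v) = s(v1,v3)) := by
          rw [hu2, Sym2.eq_iff]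
          rintro (⟨h, -⟩ | ⟨h, -⟩)
          · exact hne21 h
          · exact hne23 h
        rw [if_neg c1, if_congr c2 rfl rfl, zero_sub]
      rw [Finset.sum_congr rfl (fun v _ => e v), Finset.sum_neg_distrib,
        Finset.sum_ite_eq' Finset.univ v3 (fun _ => (1:ℝ))]
      simp
    by_cases hu3 : u = v3
    · rw [if_neg hu1, if_neg hu2]
      have e : ∀ v : Fin n, ((if s(u,v) = s(v1,v3) then (1:ℝ) else 0)
          - (if s(u,v) = s(v2,v3) then 1 else 0))
          = (if v = v1 then (1:ℝ) else 0) - (if v = v2 then 1 else 0) := by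
        intro v
        have c1 : (s(u,v) = s(v1,v3)) ↔ v = v1 := by
          rw [hu3, Sym2.eq_iff]
          constructor
          · rintro (⟨h, -⟩ | ⟨-, h⟩)
            · exact absurd h hne31
            · exact h
          · rintro rfl
            exact Or.inr ⟨rfl, rfl⟩
        have c2 : (s(u,v) = s(v2,v3)) ↔ v = v2 := by
          rw [hu3, Sym2.eq_iff]
          constructor
          · rintro (⟨h, -⟩ | ⟨-, h⟩)
            · exact absurd h hne32
            · exact h
          · rintro rfl
            exact Or.inr ⟨rfl, rfl⟩
        rw [if_congr c1 rfl rfl, if_congr c2 rfl rfl]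
      rw [Finset.sum_congr rfl (fun v _ => e v), Finset.sum_sub_distrib,
        Finset.sum_ite_eq' Finset.univ v1 (fun _ => (1:ℝ)),
        Finset.sum_ite_eq' Finset.univ v2 (fun _ => (1:ℝ))]
      simp
    · rw [if_neg hu1, if_neg hu2]
      have e : ∀ v : Fin n, ((if s(u,v) = s(v1,v3) then (1:ℝ) else 0)
          - (if s(u,v) = s(v2,v3) then 1 else 0)) = 0 := by
        intro v
        have c1 : ¬ (s(u,v) = s(v1,v3)) := by
          rw [Sym2.eq_iff]
          rintro (⟨h, -⟩ | ⟨h, -⟩)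
          · exact hu1 h
          · exact hu3 h
        have c2 : ¬ (s(u,v) = s(v2,v3)) := by
          rw [Sym2.eq_iff]
          rintro (⟨h, -⟩ | ⟨h, -⟩)
          · exact hu2 h
          · exact hu3 h
        rw [if_neg c1, if_neg c2, sub_zero]
      rw [Finset.sum_congr rfl (fun v _ => e v)]
      simp
  have hkey : ∀ u v : Fin n, u ≠ v → bV u * bV v - aV u * aV v
      = (if s(u,v) = s(v2,v3) then (1:ℝ) else 0) - (if s(u,v) = s(v1,v3) then 1 else 0) := by
    intro u v huv
    by_cases h13 : s(u,v) = s(v1,v3)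
    · have h23 : s(u,v) ≠ s(v2,v3) := by
        rw [h13, ne_eq, Sym2.eq_iff]
        rintro (⟨h, -⟩ | ⟨h, -⟩)
        · exact hne12 h
        · exact hne13 h
      rw [if_pos h13, if_neg h23]
      rcases Sym2.eq_iff.mp h13 with ⟨rfl, rfl⟩ | ⟨rfl, rfl⟩
      · rw [hbv1, hbv3, hav1]; ring
      · rw [hbv3, hbv1, hav1]; ring
    by_cases h23 : s(u,v) = s(v2,v3)
    · rw [if_pos h23, if_neg h13]
      rcases Sym2.eq_iff.mp h23 with ⟨rfl, rfl⟩ | ⟨rfl, rfl⟩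
      · rw [hbv2, hav2, hav3]; ring
      · rw [hbv2, hav3, hav2]; ring
    · rw [if_neg h13, if_neg h23]
      have hbb : bV u * bV v = 0 := by
        by_cases hu : u = v1
        · subst hu
          have hv3 : v ≠ v3 := fun hv => h13 (by rw [hv])
          rw [hb0 v (Ne.symm huv) hv3, mul_zero]
        by_cases hu3 : u = v3
        · subst hu3
          have hv1 : v ≠ v1 := by
            intro hv; subst hv; exact h13 Sym2.eq_swap
          rw [hb0 v hv1 (Ne.symm huv), mul_zero]
        · rw [hb0 u hu hu3, zero_mul]
      have haa : aV u * aV v = 0 := by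
        by_cases hu : u = v2
        · subst hu
          have hv3 : v ≠ v3 := fun hv => h23 (by rw [hv])
          rw [ha0 v (Ne.symm huv) hv3, mul_zero]
        by_cases hu3 : u = v3
        · subst hu3
          have hv2 : v ≠ v2 := by
            intro hv; subst hv; exact h23 Sym2.eq_swap
          rw [ha0 v hv2 (Ne.symm huv), mul_zero]
        · rw [ha0 u hu hu3, zero_mul]
      rw [hbb, haa]
  have hLL : T'.lap - T.lap = w2 • (vecMulVec bV bV - vecMulVec aV aV) := by
    ext u v
    simp only [Matrix.sub_apply, Matrix.smul_apply, vecMulVec_apply, WGraph.lap,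
      Matrix.of_apply, smul_eq_mul]
    rcases eq_or_ne u v with rfl | huv
    · rw [if_pos rfl, if_pos rfl]
      have hsuu : s(u,u) ≠ s(v1,v3) := by
        rw [ne_eq, Sym2.eq_iff]
        rintro (⟨h1, h2⟩ | ⟨h1, h2⟩)
        · exact hne13 (h1.symm.trans h2)
        · exact hne13 (h2.symm.trans h1)
      have hsuu' : s(u,u) ≠ s(v2,v3) := by
        rw [ne_eq, Sym2.eq_iff]
        rintro (⟨h1, h2⟩ | ⟨h1, h2⟩)
        · exact hne23 (h1.symm.trans h2)
        · exact hne23 (h2.symm.trans h1)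
      rw [hwoth u u hsuu hsuu']
      have hd := hdeg' u
      by_cases hu1 : u = v1
      · subst hu1
        rw [hbv1, hav1]
        rw [if_pos rfl, if_neg hne12] at hd
        linarith [hd]
      by_cases hu2 : u = v2
      · subst hu2
        rw [hbv2, hav2]
        rw [if_neg hne21, if_pos rfl] at hd
        linarith [hd]
      by_cases hu3 : u = v3
      · subst hu3
        rw [hbv3, hav3]
        rw [if_neg hne31, if_neg hne32] at hd
        linarith [hd]
      · rw [hb0 u hu1 hu3, ha0 u hu2 hu3]
        rw [if_neg hu1, if_neg hu2] at hd
        linarith [hd]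
    · rw [if_neg huv, if_neg huv, hkey u v huv]
      have hd := hw'w u v
      linarith [hd]
  -- symmetry of the inverse
  have hM'symm : M'ᵀ = M' := by
    have hl : T'.lapᵀ = T'.lap := by
      have hh := T'.lap_isHermitian
      ext i j
      calc T'.lapᵀ i j = T'.lap j i := rfl
        _ = star (T'.lap j i) := (star_trivial _).symm
        _ = T'.lapᴴ i j := rfl
        _ = T'.lap i j := by rw [hh]
    have hJt : Jᵀ = J := by
      ext i j
      rw [Matrix.transpose_apply, hJdef]
      simp [honedef]
    rw [hM'def, Matrix.transpose_add, hl, Matrix.transpose_smul, hJt]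
  have hM'invsymm : (M'⁻¹)ᵀ = M'⁻¹ := by
    rw [Matrix.transpose_nonsing_inv, hM'symm]
  have hvecMulInv : ∀ x : Fin n → ℝ, x ᵥ* M'⁻¹ = M'⁻¹ *ᵥ x := by
    intro x
    conv_lhs => rw [← hM'invsymm]
    rw [Matrix.vecMul_transpose]
  have hdiffM : M⁻¹ - M'⁻¹ = M⁻¹ * (M' - M) * M'⁻¹ := by
    rw [Matrix.mul_sub, Matrix.sub_mul, Matrix.mul_assoc,
      Matrix.mul_nonsing_inv _ hdetM', Matrix.mul_one, Matrix.nonsing_inv_mul _ hdetM,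
      Matrix.one_mul]
  have hME : M' - M = w2 • (vecMulVec bV bV - vecMulVec aV aV) := by
    have hstep : M' - M = T'.lap - T.lap := by
      rw [hMdef, hM'def, add_sub_add_right_eq_sub]
    rw [hstep, hLL]
  have htrace : M⁻¹.trace - M'⁻¹.trace
      = w2 * (((q - ((∑ v, q v)/n) • one) ⬝ᵥ y)
        - (y ⬝ᵥ (p - ((∑ v, p v)/n) • one))) := by
    rw [← Matrix.trace_sub, hdiffM, hME, Matrix.mul_smul, Matrix.smul_mul,
      Matrix.trace_smul, Matrix.mul_sub, Matrix.sub_mul, Matrix.trace_sub,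
      mul_vecMulVec_mul, mul_vecMulVec_mul, _root_.trace_vecMulVec, _root_.trace_vecMulVec,
      hvecMulInv, hvecMulInv, hMinvb, hMinva, hM'invb, hM'inva, smul_eq_mul]
  have hy0 : ∑ u, y u = 0 := by
    rw [hydef]
    simp only [Pi.smul_apply, Pi.sub_apply, smul_eq_mul, honedef]
    rw [← Finset.mul_sum, Finset.sum_sub_distrib, Finset.sum_const, Finset.card_univ,
      Fintype.card_fin, nsmul_eq_mul]
    field_simp
    ring
  have hy1 : one ⬝ᵥ y = 0 := by
    rw [← hy0]
    simp [dotProduct, honedef]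
  have hy1' : y ⬝ᵥ one = 0 := by
    rw [dotProduct_comm]
    exact hy1
  have hqty : (q - ((∑ v, q v)/n) • one) ⬝ᵥ y = q ⬝ᵥ y := by
    rw [sub_dotProduct, smul_dotProduct, hy1, smul_zero, sub_zero]
  have hytp : y ⬝ᵥ (p - ((∑ v, p v)/n) • one) = y ⬝ᵥ p := by
    rw [dotProduct_sub, dotProduct_smul, hy1', smul_zero, sub_zero]
  have hterm : ∀ u : Fin n, y u * (q u - p u)
      = (if H.Reachable u v1 then (S3:ℝ)/(n*w1*w2) else 0)
        - (if H.Reachable u v2 then (S3:ℝ)/(n*w1*w2) else 0) := by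
    intro u
    have hyu : y u = -w2⁻¹ * (z u - (S3:ℝ)/n) := by
      rw [hydef]
      simp only [Pi.smul_apply, Pi.sub_apply, smul_eq_mul, honedef]
      rw [hSz]
      ring
    rcases cover u with h1 | h2 | h3
    · have h2' : ¬ H.Reachable u v2 := fun hh => hR12 u h1 hh
      have h3' : ¬ H.Reachable u v3 := fun hh => hR13 u h1 hh
      have hzu : z u = 0 := by simp only [hzdef]; rw [if_neg h3']
      have hqu : q u = 0 := by simp only [hqdef]; rw [if_neg h2', if_neg h3']
      have hpu : p u = -w1⁻¹ := by simp only [hpdef]; rw [if_pos h1]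
      rw [if_pos h1, if_neg h2', hyu, hzu, hqu, hpu]
      ring
    · have h1' : ¬ H.Reachable u v1 := fun hh => hR12 u hh h2
      have h3' : ¬ H.Reachable u v3 := fun hh => hR23 u h2 hh
      have hzu : z u = 0 := by simp only [hzdef]; rw [if_neg h3']
      have hqu : q u = -w1⁻¹ := by simp only [hqdef]; rw [if_pos h2]
      have hpu : p u = 0 := by simp only [hpdef]; rw [if_neg h1', if_neg h3']
      rw [if_neg h1', if_pos h2, hyu, hzu, hqu, hpu]
      ring
    · have h1' : ¬ H.Reachable u v1 := fun hh => hR13 u hh h3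
      have h2' : ¬ H.Reachable u v2 := fun hh => hR23 u hh h3
      have hqu : q u = -(w1⁻¹ + w2⁻¹) := by
        simp only [hqdef]; rw [if_neg h2', if_pos h3]
      have hpu : p u = -(w1⁻¹ + w2⁻¹) := by
        simp only [hpdef]; rw [if_neg h1', if_pos h3]
      rw [if_neg h1', if_neg h2', hqu, hpu]
      ring
  have hsumterm : q ⬝ᵥ y - y ⬝ᵥ p
      = (S3:ℝ)/(n*w1*w2) * S1 - (S3:ℝ)/(n*w1*w2) * S2 := by
    have h1 : q ⬝ᵥ y - y ⬝ᵥ p = ∑ u, y u * (q u - p u) := by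
      simp only [dotProduct]
      rw [← Finset.sum_sub_distrib]
      exact Finset.sum_congr rfl fun u _ => by ring
    rw [h1, Finset.sum_congr rfl (fun u _ => hterm u), Finset.sum_sub_distrib]
    congr 1
    · rw [← Finset.sum_filter, Finset.sum_const, nsmul_eq_mul, ← hS1def, mul_comm]
    · rw [← Finset.sum_filter, Finset.sum_const, nsmul_eq_mul, ← hS2def, mul_comm]
  have hfinal : M⁻¹.trace - M'⁻¹.trace = (S3:ℝ) * ((S1:ℝ) - S2) / (n * w1) := by
    rw [htrace, hqty, hytp, hsumterm]
    field_simp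
  have hpos : 0 < M⁻¹.trace - M'⁻¹.trace := by
    rw [hfinal]
    apply div_pos
    · apply mul_pos
      · exact_mod_cast hS3pos
      · have hlt : (S2:ℝ) < S1 := by exact_mod_cast hS12
        linarith
    · exact mul_pos hnR hw1
  rw [htrM, htrM']
  linarith
end
end

section
/- Let T be a weighted tree that edge-transfers to the weighted tree T' with respect to size, using adjacent edges e_1 = v_1v_2 and e_2 = v_2v_3 and components T_1, T_2, T_3 of T minus {e_1, e_2} containing v_1, v_2, v_3 respectively. Then S(T∖e_1) − S(T'∖e_1) = (|T_1| − |T_2|)·|T_3| > 0, where S of a 2-forest is the product of the vertex counts of its two components; moreover, for every edge e of T other than e_1 and e_2, the 2-forests T∖e and T'∖e induce the same partition of the vertex set into two components, so S(T∖e) = S(T'∖e). -/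
open scoped Classical

noncomputable section

section MyHelpers
open SimpleGraph
variable {V : Type*}

lemma my_reach_of_adj_reach {K₁ K₂ : SimpleGraph V}
    (h : ∀ x y, K₁.Adj x y → K₂.Reachable x y) {x y : V} (hr : K₁.Reachable x y) :
    K₂.Reachable x y := by
  obtain ⟨p⟩ := hr
  induction p with
  | nil => exact Reachable.refl _
  | cons ha _ ih => exact (h _ _ ha).trans ih

lemma my_reach_elim {K : SimpleGraph V} (a b : V) {x y : V} (hr : K.Reachable x y) :
    (K.deleteEdges {s(a,b)}).Reachable x y ∨ (K.deleteEdges {s(a,b)}).Reachable x a ∨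
      (K.deleteEdges {s(a,b)}).Reachable x b := by
  obtain ⟨p⟩ := hr
  induction p with
  | nil => exact Or.inl (Reachable.refl _)
  | @cons x z y ha p ih =>
    by_cases he : s(x, z) = s(a, b)
    · rcases Sym2.eq_iff.mp he with ⟨rfl, rfl⟩ | ⟨rfl, rfl⟩
      · exact Or.inr (Or.inl (Reachable.refl _))
      · exact Or.inr (Or.inr (Reachable.refl _))
    · have hadj : (K.deleteEdges {s(a,b)}).Adj x z := by
        simp only [deleteEdges_adj, Set.mem_singleton_iff]
        exact ⟨ha, he⟩
      rcases ih with h' | h' | h'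
      · exact Or.inl (hadj.reachable.trans h')
      · exact Or.inr (Or.inl (hadj.reachable.trans h'))
      · exact Or.inr (Or.inr (hadj.reachable.trans h'))

lemma my_tree_not_reach {G : SimpleGraph V} (hG : G.IsAcyclic) {u v : V} (h : G.Adj u v) :
    ¬ (G.deleteEdges {s(u,v)}).Reachable u v :=
  (SimpleGraph.isBridge_iff.mp ((SimpleGraph.isAcyclic_iff_forall_adj_isBridge.mp hG) h))

variable {G : SimpleGraph V} {u v w : V}
variable (hG : G.IsTree) (huv : G.Adj u v) (hvw : G.Adj v w) (huw : u ≠ w)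

include hG in
lemma my_two_sides (x : V) :
    (G.deleteEdges {s(u,v)}).Reachable x u ∨ (G.deleteEdges {s(u,v)}).Reachable x v := by
  rcases my_reach_elim u v (hG.isConnected.preconnected x u) with h | h | h
  · exact Or.inl h
  · exact Or.inl h
  · exact Or.inr h

lemma my_HF : (G.deleteEdges {s(u,v)}).deleteEdges {s(v,w)} =
    G.deleteEdges {s(u,v), s(v,w)} := by
  rw [deleteEdges_deleteEdges, Set.singleton_union]

include hG huv in
lemma my_hFuv : ¬ (G.deleteEdges {s(u,v)}).Reachable u v :=
  my_tree_not_reach hG.IsAcyclic huv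

include hG hvw in
lemma my_hHvw : ¬ (G.deleteEdges {s(u,v), s(v,w)}).Reachable v w := fun hr =>
  my_tree_not_reach hG.IsAcyclic hvw
    (hr.mono (deleteEdges_anti (by simp : ({s(v,w)} : Set (Sym2 V)) ⊆ {s(u,v), s(v,w)})))

include huv huw in
lemma my_adjFvw : (G.deleteEdges {s(u,v)}).Adj v w ↔ G.Adj v w := by
  simp only [deleteEdges_adj, Set.mem_singleton_iff]
  refine ⟨fun h => h.1, fun h => ⟨h, fun hc => ?_⟩⟩
  rcases Sym2.eq_iff.mp hc with ⟨rfl, _⟩ | ⟨_, rfl⟩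
  · exact huv.ne rfl
  · exact huw rfl

include hG huv hvw huw in
lemma my_suppFu (x : V) :
    (G.deleteEdges {s(u,v)}).Reachable x u ↔
      (G.deleteEdges {s(u,v), s(v,w)}).Reachable x u := by
  constructor
  · intro hx
    rcases my_reach_elim v w hx with h | h | h
    · rwa [my_HF] at h
    · rw [my_HF] at h
      exact absurd (hx.symm.trans (h.mono (deleteEdges_anti
          (by simp [Set.subset_insert])))) (my_hFuv hG huv)
    · rw [my_HF] at h
      have hxw : (G.deleteEdges {s(u,v)}).Reachable x w :=
        h.mono (deleteEdges_anti (by simp [Set.subset_insert]))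
      have : (G.deleteEdges {s(u,v)}).Reachable u v :=
        hx.symm.trans (hxw.trans ((my_adjFvw huv huw).mpr hvw).symm.reachable)
      exact absurd this (my_hFuv hG huv)
  · intro hx
    exact hx.mono (deleteEdges_anti (by simp [Set.subset_insert]))

omit hG in
include huv hvw huw in
lemma my_suppFv (x : V) :
    (G.deleteEdges {s(u,v)}).Reachable x v ↔
      ((G.deleteEdges {s(u,v), s(v,w)}).Reachable x v ∨
       (G.deleteEdges {s(u,v), s(v,w)}).Reachable x w) := by
  constructor
  · intro hx
    rcases my_reach_elim v w hx with h | h | h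
    · rw [my_HF] at h; exact Or.inl h
    · rw [my_HF] at h; exact Or.inl h
    · rw [my_HF] at h; exact Or.inr h
  · rintro (h | h)
    · exact h.mono (deleteEdges_anti (by simp [Set.subset_insert]))
    · exact (h.mono (deleteEdges_anti (by simp [Set.subset_insert]))).trans
        ((my_adjFvw huv huw).mpr hvw).symm.reachable

end MyHelpers

section MySVal
open SimpleGraph

lemma my_SVal_two {n : ℕ} {F : SimpleGraph (Fin n)} {u v : Fin n}
    (hne : ¬ F.Reachable u v) (hall : ∀ x, F.Reachable x u ∨ F.Reachable x v) :
    SVal F = (Nat.card (F.connectedComponentMk u).supp : ℝ) *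
      (Nat.card (F.connectedComponentMk v).supp : ℝ) := by
  haveI : Fintype F.ConnectedComponent := Fintype.ofFinite _
  rw [SVal, finprod_eq_prod_of_fintype]
  have hmk : F.connectedComponentMk u ≠ F.connectedComponentMk v := fun hc =>
    hne (SimpleGraph.ConnectedComponent.eq.mp hc)
  have huniv : (Finset.univ : Finset F.ConnectedComponent) =
      {F.connectedComponentMk u, F.connectedComponentMk v} := by
    ext c
    simp only [Finset.mem_univ, true_iff, Finset.mem_insert, Finset.mem_singleton]
    refine SimpleGraph.ConnectedComponent.ind (fun x => ?_) c
    rcases hall x with h | h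
    · exact Or.inl (SimpleGraph.ConnectedComponent.eq.mpr h)
    · exact Or.inr (SimpleGraph.ConnectedComponent.eq.mpr h)
  rw [huniv, Finset.prod_pair hmk]

lemma my_SVal_eq_of_reach_iff {n : ℕ} {K₁ K₂ : SimpleGraph (Fin n)}
    (h : ∀ x y, K₁.Reachable x y ↔ K₂.Reachable x y) : SVal K₁ = SVal K₂ := by
  refine finprod_eq_of_bijective
    (Quot.map id (fun a b hab => (h a b).mp hab)) ⟨?_, ?_⟩ ?_
  · intro c c' hcc'
    induction c using SimpleGraph.ConnectedComponent.ind with | _ a =>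
    induction c' using SimpleGraph.ConnectedComponent.ind with | _ b =>
    have : K₂.connectedComponentMk a = K₂.connectedComponentMk b := hcc'
    exact SimpleGraph.ConnectedComponent.eq.mpr
      ((h a b).mpr (SimpleGraph.ConnectedComponent.eq.mp this))
  · intro c
    induction c using SimpleGraph.ConnectedComponent.ind with | _ a =>
    exact ⟨K₁.connectedComponentMk a, rfl⟩
  · intro c
    induction c using SimpleGraph.ConnectedComponent.ind with | _ a =>
    have hsupp : (K₁.connectedComponentMk a).supp = (K₂.connectedComponentMk a).supp := by
      ext x
      simp only [SimpleGraph.ConnectedComponent.mem_supp_iff,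
        SimpleGraph.ConnectedComponent.eq]
      exact h x a
    show (Nat.card (K₁.connectedComponentMk a).supp : ℝ) =
      (Nat.card (K₂.connectedComponentMk a).supp : ℝ)
    rw [hsupp]

lemma my_card_union {n : ℕ} {s t : Set (Fin n)} (h : Disjoint s t) :
    Nat.card (s ∪ t : Set (Fin n)) = Nat.card s + Nat.card t := by
  simp only [Nat.card_coe_set_eq]
  exact Set.ncard_union_eq h (Set.toFinite s) (Set.toFinite t)

end MySVal

theorem stmt10 {n : ℕ} (T T' : WGraph n) (hT : T.G.IsTree) (hT' : T'.G.IsTree)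
    (v1 v2 v3 : Fin n) (h : EdgeTransferSize T T' v1 v2 v3) :
    (SVal (T.G.deleteEdges {s(v1, v2)}) - SVal (T'.G.deleteEdges {s(v1, v2)}) =
        ((compSize (T.G.deleteEdges {s(v1, v2), s(v2, v3)}) v1 : ℝ) -
          (compSize (T.G.deleteEdges {s(v1, v2), s(v2, v3)}) v2 : ℝ)) *
          (compSize (T.G.deleteEdges {s(v1, v2), s(v2, v3)}) v3 : ℝ)) ∧
    (0 < SVal (T.G.deleteEdges {s(v1, v2)}) - SVal (T'.G.deleteEdges {s(v1, v2)})) ∧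
    (∀ e ∈ T.G.edgeSet, e ≠ s(v1, v2) → e ≠ s(v2, v3) →
      (∀ x y : Fin n,
          (T.G.deleteEdges {e}).Reachable x y ↔ (T'.G.deleteEdges {e}).Reachable x y) ∧
      SVal (T.G.deleteEdges {e}) = SVal (T'.G.deleteEdges {e})) := by
  obtain ⟨⟨h12, h23, h13, hTG', -, -⟩, hsize⟩ := h
  have hne12 : v1 ≠ v2 := h12.ne
  have hne23 : v2 ≠ v3 := h23.ne
  have hn13 : ¬ T.G.Adj v1 v3 := by
    intro hadj
    have a1 : (T.G.deleteEdges {s(v2,v3)}).Adj v2 v1 := by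
      simp only [SimpleGraph.deleteEdges_adj, Set.mem_singleton_iff]
      refine ⟨h12.symm, fun hc => ?_⟩
      rcases Sym2.eq_iff.mp hc with ⟨-, h'⟩ | ⟨h', -⟩
      · exact h13 h'
      · exact hne23 h'
    have a2 : (T.G.deleteEdges {s(v2,v3)}).Adj v1 v3 := by
      simp only [SimpleGraph.deleteEdges_adj, Set.mem_singleton_iff]
      refine ⟨hadj, fun hc => ?_⟩
      rcases Sym2.eq_iff.mp hc with ⟨h', -⟩ | ⟨h', -⟩
      · exact hne12 h'
      · exact h13 h'
    exact my_tree_not_reach hT.IsAcyclic h23 (a1.reachable.trans a2.reachable)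
  have hT'adj : ∀ x y : Fin n, T'.G.Adj x y ↔
      ((T.G.Adj x y ∧ s(x,y) ≠ s(v2,v3)) ∨ (s(x,y) = s(v1,v3) ∧ x ≠ y)) := by
    intro x y
    rw [hTG']
    simp only [SimpleGraph.sup_adj, SimpleGraph.deleteEdges_adj,
      SimpleGraph.fromEdgeSet_adj, Set.mem_singleton_iff]
  have h21' : T'.G.Adj v2 v1 := by
    rw [hT'adj]
    refine Or.inl ⟨h12.symm, fun hc => ?_⟩
    rcases Sym2.eq_iff.mp hc with ⟨-, h'⟩ | ⟨h', -⟩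
    · exact h13 h'
    · exact hne23 h'
  have h13' : T'.G.Adj v1 v3 := by
    rw [hT'adj]; exact Or.inr ⟨rfl, h13⟩
  have hswap : s(v2,v1) = s(v1,v2) := Sym2.eq_swap
  have hH'H : T'.G.deleteEdges {s(v2,v1), s(v1,v3)} =
      T.G.deleteEdges {s(v1,v2), s(v2,v3)} := by
    ext x y
    simp only [SimpleGraph.deleteEdges_adj, Set.mem_insert_iff, Set.mem_singleton_iff,
      hT'adj, hswap]
    constructor
    · rintro ⟨(⟨hadj, hne2⟩ | ⟨heq, -⟩), hnot⟩
      · exact ⟨hadj, fun hc => hc.elim (fun h' => hnot (Or.inl h')) (fun h' => hne2 h')⟩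
      · exact absurd (Or.inr heq) hnot
    · rintro ⟨hadj, hnot⟩
      have hne3 : s(x,y) ≠ s(v1,v3) := by
        intro hc
        exact hn13 (by rw [← SimpleGraph.mem_edgeSet, ← hc, SimpleGraph.mem_edgeSet]; exact hadj)
      exact ⟨Or.inl ⟨hadj, fun h' => hnot (Or.inr h')⟩,
        fun hc => hc.elim (fun h' => hnot (Or.inl h')) hne3⟩
  set H := T.G.deleteEdges {s(v1,v2), s(v2,v3)} with hHdef
  set F := T.G.deleteEdges {s(v1,v2)} with hFdef
  set F' := T'.G.deleteEdges {s(v1,v2)} with hF'def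
  have hF'eq : F' = T'.G.deleteEdges {s(v2,v1)} := by rw [hswap]
  have hsF1 : (F.connectedComponentMk v1).supp = (H.connectedComponentMk v1).supp := by
    ext x
    simp only [SimpleGraph.ConnectedComponent.mem_supp_iff, SimpleGraph.ConnectedComponent.eq]
    exact my_suppFu hT h12 h23 h13 x
  have hsF2 : (F.connectedComponentMk v2).supp =
      (H.connectedComponentMk v2).supp ∪ (H.connectedComponentMk v3).supp := by
    ext x
    simp only [Set.mem_union, SimpleGraph.ConnectedComponent.mem_supp_iff,
      SimpleGraph.ConnectedComponent.eq]
    exact my_suppFv h12 h23 h13 x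
  have hdisj23 : Disjoint (H.connectedComponentMk v2).supp (H.connectedComponentMk v3).supp := by
    rw [Set.disjoint_left]
    intro x hx2 hx3
    simp only [SimpleGraph.ConnectedComponent.mem_supp_iff,
      SimpleGraph.ConnectedComponent.eq] at hx2 hx3
    exact my_hHvw (u := v1) hT h23 (hx2.symm.trans hx3)
  have hdisj13 : Disjoint (H.connectedComponentMk v1).supp (H.connectedComponentMk v3).supp := by
    rw [Set.disjoint_left]
    intro x hx1 hx3
    simp only [SimpleGraph.ConnectedComponent.mem_supp_iff,
      SimpleGraph.ConnectedComponent.eq] at hx1 hx3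
    have hr : H.Reachable v1 v3 := hx1.symm.trans hx3
    rw [← hH'H] at hr
    exact my_hHvw (u := v2) hT' h13' hr
  have hSF : SVal F = ((Nat.card (H.connectedComponentMk v1).supp : ℝ)) *
      ((Nat.card (H.connectedComponentMk v2).supp : ℝ) +
        (Nat.card (H.connectedComponentMk v3).supp : ℝ)) := by
    rw [my_SVal_two (my_hFuv hT h12) (my_two_sides hT), hsF1, hsF2, my_card_union hdisj23]
    push_cast; ring
  have hsF'2 : (F'.connectedComponentMk v2).supp = (H.connectedComponentMk v2).supp := by
    ext x
    simp only [SimpleGraph.ConnectedComponent.mem_supp_iff, SimpleGraph.ConnectedComponent.eq]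
    rw [hF'eq, ← hH'H]
    exact my_suppFu hT' h21' h13' hne23 x
  have hsF'1 : (F'.connectedComponentMk v1).supp =
      (H.connectedComponentMk v1).supp ∪ (H.connectedComponentMk v3).supp := by
    ext x
    simp only [Set.mem_union, SimpleGraph.ConnectedComponent.mem_supp_iff,
      SimpleGraph.ConnectedComponent.eq]
    rw [hF'eq, ← hH'H]
    exact my_suppFv h21' h13' hne23 x
  have hSF' : SVal F' = (Nat.card (H.connectedComponentMk v2).supp : ℝ) *
      ((Nat.card (H.connectedComponentMk v1).supp : ℝ) +
        (Nat.card (H.connectedComponentMk v3).supp : ℝ)) := by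
    have hne' : ¬ F'.Reachable v2 v1 := by rw [hF'eq]; exact my_hFuv hT' h21'
    have hall' : ∀ x, F'.Reachable x v2 ∨ F'.Reachable x v1 := by
      intro x; rw [hF'eq]; exact my_two_sides hT' x
    rw [my_SVal_two hne' hall', hsF'2, hsF'1, my_card_union hdisj13]
    push_cast; ring
  have hc_pos : 0 < Nat.card (H.connectedComponentMk v3).supp := by
    haveI : Nonempty ((H.connectedComponentMk v3).supp) :=
      ⟨⟨v3, (SimpleGraph.ConnectedComponent.mem_supp_iff _ _).mpr rfl⟩⟩
    exact Nat.card_pos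
  have key : SVal F - SVal F' =
      ((compSize H v1 : ℝ) - (compSize H v2 : ℝ)) * (compSize H v3 : ℝ) := by
    rw [hSF, hSF']
    simp only [compSize]
    push_cast; ring
  refine ⟨key, ?_, ?_⟩
  · rw [key]
    have hlt : (compSize H v2 : ℝ) < (compSize H v1 : ℝ) := by exact_mod_cast hsize
    have hcp : (0 : ℝ) < (compSize H v3 : ℝ) := by
      simp only [compSize]; exact_mod_cast hc_pos
    exact mul_pos (by linarith) hcp
  · intro e he hee1 hee2
    have hee3 : e ≠ s(v1,v3) := by
      intro hc; rw [hc] at he; exact hn13 ((SimpleGraph.mem_edgeSet T.G).mp he)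
    have fwd : ∀ x y, (T.G.deleteEdges {e}).Adj x y → (T'.G.deleteEdges {e}).Reachable x y := by
      have a1 : (T'.G.deleteEdges {e}).Adj v2 v1 := by
        simp only [SimpleGraph.deleteEdges_adj, Set.mem_singleton_iff]
        exact ⟨h21', by rw [hswap]; exact fun hc => hee1 hc.symm⟩
      have a2 : (T'.G.deleteEdges {e}).Adj v1 v3 := by
        simp only [SimpleGraph.deleteEdges_adj, Set.mem_singleton_iff]
        exact ⟨h13', fun hc => hee3 hc.symm⟩
      have h23r : (T'.G.deleteEdges {e}).Reachable v2 v3 := a1.reachable.trans a2.reachable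
      intro x y hxy
      simp only [SimpleGraph.deleteEdges_adj, Set.mem_singleton_iff] at hxy
      obtain ⟨hadj, hne⟩ := hxy
      by_cases hc : s(x,y) = s(v2,v3)
      · rcases Sym2.eq_iff.mp hc with ⟨rfl, rfl⟩ | ⟨rfl, rfl⟩
        · exact h23r
        · exact h23r.symm
      · refine SimpleGraph.Adj.reachable ?_
        simp only [SimpleGraph.deleteEdges_adj, Set.mem_singleton_iff]
        exact ⟨(hT'adj x y).mpr (Or.inl ⟨hadj, hc⟩), hne⟩
    have bwd : ∀ x y, (T'.G.deleteEdges {e}).Adj x y → (T.G.deleteEdges {e}).Reachable x y := by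
      have b1 : (T.G.deleteEdges {e}).Adj v1 v2 := by
        simp only [SimpleGraph.deleteEdges_adj, Set.mem_singleton_iff]
        exact ⟨h12, fun hc => hee1 hc.symm⟩
      have b2 : (T.G.deleteEdges {e}).Adj v2 v3 := by
        simp only [SimpleGraph.deleteEdges_adj, Set.mem_singleton_iff]
        exact ⟨h23, fun hc => hee2 hc.symm⟩
      have r13 : (T.G.deleteEdges {e}).Reachable v1 v3 := b1.reachable.trans b2.reachable
      intro x y hxy
      simp only [SimpleGraph.deleteEdges_adj, Set.mem_singleton_iff] at hxy
      obtain ⟨hadj', hne⟩ := hxy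
      rcases (hT'adj x y).mp hadj' with ⟨hadj, -⟩ | ⟨heq, -⟩
      · refine SimpleGraph.Adj.reachable ?_
        simp only [SimpleGraph.deleteEdges_adj, Set.mem_singleton_iff]
        exact ⟨hadj, hne⟩
      · rcases Sym2.eq_iff.mp heq with ⟨rfl, rfl⟩ | ⟨rfl, rfl⟩
        · exact r13
        · exact r13.symm
    have hiff : ∀ x y, (T.G.deleteEdges {e}).Reachable x y ↔
        (T'.G.deleteEdges {e}).Reachable x y :=
      fun x y => ⟨my_reach_of_adj_reach fwd, my_reach_of_adj_reach bwd⟩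
    exact ⟨hiff, my_SVal_eq_of_reach_iff hiff⟩
end
end

section
/- Let T be a weighted tree that edge-transfers to the weighted tree T' with respect to volume, using adjacent edges e_1 = v_1v_2 and e_2 = v_2v_3 (with weights ω_1 = ω(e_1), ω_2 = ω(e_2)) and components T_1, T_2, T_3 of T minus {e_1, e_2} containing v_1, v_2, v_3 respectively. Then V_T(T∖e_1) − V_{T'}(T'∖e_1) = (vol_{T_3}(T_3) + 2ω_2)·(vol_{T_1}(T_1) − vol_{T_2}(T_2)) > 0, where for a tree H and edge e, V_H(H∖e) is the product of vol_H of the two components of H∖e. -/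
open scoped Classical

noncomputable section

section EtAux

open SimpleGraph

theorem et_reach_del {V : Type*} {G : SimpleGraph V} (s : Set (Sym2 V)) {u v : V}
    (p : G.Walk u v) :
    ∃ x, (x = v ∨ ∃ e ∈ s, x ∈ e) ∧ (G.deleteEdges s).Reachable u x := by
  induction p with
  | nil => exact ⟨_, Or.inl rfl, Reachable.refl _⟩
  | @cons a b c h p ih =>
    obtain ⟨x, hx, hr⟩ := ih
    by_cases he : s(a, b) ∈ s
    · exact ⟨a, Or.inr ⟨_, he, Sym2.mem_mk_left a b⟩, Reachable.refl a⟩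
    · exact ⟨x, hx, (SimpleGraph.Adj.reachable
        (by simp [he, h] : (G.deleteEdges s).Adj a b)).trans hr⟩

theorem et_bridge {V : Type*} {G : SimpleGraph V} (h : G.IsAcyclic) {a b : V} (hab : G.Adj a b) :
    ¬ (G.deleteEdges {s(a, b)}).Reachable a b :=
  (isBridge_iff.mp (isAcyclic_iff_forall_edge_isBridge.mp h (G.mem_edgeSet.mpr hab)))

theorem et_struct {V : Type*} {G : SimpleGraph V} (hG : G.IsTree) {a b c : V}
    (hab : G.Adj a b) (hbc : G.Adj b c) (hac : a ≠ c) :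
    (¬ (G.deleteEdges {s(a, b), s(b, c)}).Reachable a b) ∧
    (¬ (G.deleteEdges {s(a, b), s(b, c)}).Reachable b c) ∧
    (¬ (G.deleteEdges {s(a, b), s(b, c)}).Reachable a c) ∧
    (∀ u, (G.deleteEdges {s(a, b), s(b, c)}).Reachable u a ∨
      (G.deleteEdges {s(a, b), s(b, c)}).Reachable u b ∨
      (G.deleteEdges {s(a, b), s(b, c)}).Reachable u c) := by
  have hmono1 : G.deleteEdges {s(a, b), s(b, c)} ≤ G.deleteEdges {s(a, b)} :=
    SimpleGraph.deleteEdges_anti (by simp)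
  have hmono2 : G.deleteEdges {s(a, b), s(b, c)} ≤ G.deleteEdges {s(b, c)} :=
    SimpleGraph.deleteEdges_anti (by simp)
  have hne_e : s(b, c) ≠ s(a, b) := by
    intro hEq0
    rcases Sym2.eq_iff.mp hEq0 with ⟨h1, -⟩ | ⟨-, h2⟩
    · exact hab.ne h1.symm
    · exact hac h2.symm
  have hbc1 : (G.deleteEdges {s(a, b)}).Adj b c := by
    simp only [SimpleGraph.deleteEdges_adj, Set.mem_singleton_iff]
    exact ⟨hbc, hne_e⟩
  refine ⟨fun hr => et_bridge hG.2 hab (hr.mono hmono1),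
    fun hr => et_bridge hG.2 hbc (hr.mono hmono2), fun hr => ?_, fun u => ?_⟩
  · exact et_bridge hG.2 hab ((hr.mono hmono1).trans hbc1.symm.reachable)
  · obtain ⟨x, hx, hr⟩ := et_reach_del {s(a, b), s(b, c)} ((hG.1.preconnected u a).some)
    rcases hx with rfl | ⟨e, he, hxe⟩
    · exact Or.inl hr
    · simp only [Set.mem_insert_iff, Set.mem_singleton_iff] at he
      rcases he with rfl | rfl
      · rcases Sym2.mem_iff.mp hxe with rfl | rfl
        · exact Or.inl hr
        · exact Or.inr (Or.inl hr)
      · rcases Sym2.mem_iff.mp hxe with rfl | rfl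
        · exact Or.inr (Or.inl hr)
        · exact Or.inr (Or.inr hr)

theorem et_supp_a {V : Type*} {G : SimpleGraph V} (hG : G.IsTree) {a b c : V}
    (hab : G.Adj a b) (hbc : G.Adj b c) (hac : a ≠ c) :
    ((G.deleteEdges {s(a, b)}).connectedComponentMk a).supp
      = ((G.deleteEdges {s(a, b), s(b, c)}).connectedComponentMk a).supp := by
  obtain ⟨nab, nbc, nac, cover⟩ := et_struct hG hab hbc hac
  have hmono1 : G.deleteEdges {s(a, b), s(b, c)} ≤ G.deleteEdges {s(a, b)} :=
    SimpleGraph.deleteEdges_anti (by simp)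
  have hne_e : s(b, c) ≠ s(a, b) := by
    intro hEq0
    rcases Sym2.eq_iff.mp hEq0 with ⟨h1, -⟩ | ⟨-, h2⟩
    · exact hab.ne h1.symm
    · exact hac h2.symm
  have hbc1 : (G.deleteEdges {s(a, b)}).Adj b c := by
    simp only [SimpleGraph.deleteEdges_adj, Set.mem_singleton_iff]
    exact ⟨hbc, hne_e⟩
  ext u
  simp only [SimpleGraph.ConnectedComponent.mem_supp_iff, SimpleGraph.ConnectedComponent.eq]
  constructor
  · intro h
    rcases cover u with h1 | h1 | h1
    · exact h1
    · exact absurd (h.symm.trans (h1.mono hmono1)) (et_bridge hG.2 hab)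
    · exact absurd (h.symm.trans ((h1.mono hmono1).trans hbc1.symm.reachable))
        (et_bridge hG.2 hab)
  · exact fun h => h.mono hmono1

theorem et_supp_b {V : Type*} {G : SimpleGraph V} (hG : G.IsTree) {a b c : V}
    (hab : G.Adj a b) (hbc : G.Adj b c) (hac : a ≠ c) :
    ((G.deleteEdges {s(a, b)}).connectedComponentMk b).supp
      = ((G.deleteEdges {s(a, b), s(b, c)}).connectedComponentMk b).supp
        ∪ ((G.deleteEdges {s(a, b), s(b, c)}).connectedComponentMk c).supp := by
  obtain ⟨nab, nbc, nac, cover⟩ := et_struct hG hab hbc hac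
  have hmono1 : G.deleteEdges {s(a, b), s(b, c)} ≤ G.deleteEdges {s(a, b)} :=
    SimpleGraph.deleteEdges_anti (by simp)
  have hne_e : s(b, c) ≠ s(a, b) := by
    intro hEq0
    rcases Sym2.eq_iff.mp hEq0 with ⟨h1, -⟩ | ⟨-, h2⟩
    · exact hab.ne h1.symm
    · exact hac h2.symm
  have hbc1 : (G.deleteEdges {s(a, b)}).Adj b c := by
    simp only [SimpleGraph.deleteEdges_adj, Set.mem_singleton_iff]
    exact ⟨hbc, hne_e⟩
  ext u
  simp only [Set.mem_union, SimpleGraph.ConnectedComponent.mem_supp_iff,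
    SimpleGraph.ConnectedComponent.eq]
  constructor
  · intro h
    rcases cover u with h1 | h1 | h1
    · exact absurd ((h1.mono hmono1).symm.trans h) (et_bridge hG.2 hab)
    · exact Or.inl h1
    · exact Or.inr h1
  · rintro (h | h)
    · exact h.mono hmono1
    · exact (h.mono hmono1).trans hbc1.symm.reachable

theorem et_comp_cover {V : Type*} {G : SimpleGraph V} (hG : G.IsTree) {a b c : V}
    (hab : G.Adj a b) (hbc : G.Adj b c) (hac : a ≠ c) :
    ∀ K : (G.deleteEdges {s(a, b)}).ConnectedComponent,
      K = (G.deleteEdges {s(a, b)}).connectedComponentMk a ∨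
      K = (G.deleteEdges {s(a, b)}).connectedComponentMk b := by
  obtain ⟨nab, nbc, nac, cover⟩ := et_struct hG hab hbc hac
  have hmono1 : G.deleteEdges {s(a, b), s(b, c)} ≤ G.deleteEdges {s(a, b)} :=
    SimpleGraph.deleteEdges_anti (by simp)
  have hne_e : s(b, c) ≠ s(a, b) := by
    intro hEq0
    rcases Sym2.eq_iff.mp hEq0 with ⟨h1, -⟩ | ⟨-, h2⟩
    · exact hab.ne h1.symm
    · exact hac h2.symm
  have hbc1 : (G.deleteEdges {s(a, b)}).Adj b c := by
    simp only [SimpleGraph.deleteEdges_adj, Set.mem_singleton_iff]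
    exact ⟨hbc, hne_e⟩
  intro K
  induction K using SimpleGraph.ConnectedComponent.ind with
  | _ u =>
    rcases cover u with h | h | h
    · exact Or.inl (SimpleGraph.ConnectedComponent.eq.mpr (h.mono hmono1))
    · exact Or.inr (SimpleGraph.ConnectedComponent.eq.mpr (h.mono hmono1))
    · exact Or.inr (SimpleGraph.ConnectedComponent.eq.mpr
        ((h.mono hmono1).trans hbc1.symm.reachable))

theorem et_comp_ne {V : Type*} {G : SimpleGraph V} (h : G.IsAcyclic) {a b : V}
    (hab : G.Adj a b) :
    (G.deleteEdges {s(a, b)}).connectedComponentMk a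
      ≠ (G.deleteEdges {s(a, b)}).connectedComponentMk b :=
  fun hEq => et_bridge h hab (SimpleGraph.ConnectedComponent.eq.mp hEq)

/-- Sum of `f` over the set `S`, as a `Finset` sum over `Fin n`. -/
def sumIn {n : ℕ} (S : Set (Fin n)) (f : Fin n → ℝ) : ℝ := ∑ u, if u ∈ S then f u else 0

theorem finsum_mem_eq_sumIn {n : ℕ} (S : Set (Fin n)) (f : Fin n → ℝ) :
    ∑ᶠ u ∈ S, f u = sumIn S f := by
  rw [finsum_mem_def, finsum_eq_sum_of_fintype]
  simp only [sumIn, Set.indicator_apply]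

theorem sumIn_congr {n : ℕ} {S : Set (Fin n)} {f g : Fin n → ℝ} (h : ∀ u ∈ S, f u = g u) :
    sumIn S f = sumIn S g := by
  unfold sumIn
  refine Finset.sum_congr rfl fun u _ => ?_
  by_cases hu : u ∈ S
  · simp only [hu, if_true]
    exact h u hu
  · simp only [hu, if_false]

theorem sumIn_add3 {n : ℕ} (S : Set (Fin n)) (f g h : Fin n → ℝ) :
    sumIn S (fun u => f u + g u + h u) = sumIn S f + sumIn S g + sumIn S h := by
  unfold sumIn
  rw [← Finset.sum_add_distrib, ← Finset.sum_add_distrib]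
  refine Finset.sum_congr rfl fun u _ => ?_
  by_cases hu : u ∈ S <;> simp [hu]

theorem sumIn_union {n : ℕ} {S S' : Set (Fin n)} (h : ∀ u, u ∈ S → u ∈ S' → False)
    (f : Fin n → ℝ) :
    sumIn (S ∪ S') f = sumIn S f + sumIn S' f := by
  unfold sumIn
  rw [← Finset.sum_add_distrib]
  refine Finset.sum_congr rfl fun u _ => ?_
  by_cases h1 : u ∈ S
  · have h2 : u ∉ S' := fun h2 => h u h1 h2
    simp [h1, h2, Set.mem_union]
  · by_cases h2 : u ∈ S' <;> simp [h1, h2, Set.mem_union]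

theorem sum_eq_sumIn3 {n : ℕ} {S1 S2 S3 : Set (Fin n)}
    (hc : ∀ u, u ∈ S1 ∨ u ∈ S2 ∨ u ∈ S3)
    (h12 : ∀ u, u ∈ S1 → u ∈ S2 → False)
    (h13 : ∀ u, u ∈ S1 → u ∈ S3 → False)
    (h23 : ∀ u, u ∈ S2 → u ∈ S3 → False) (f : Fin n → ℝ) :
    ∑ u, f u = sumIn S1 f + sumIn S2 f + sumIn S3 f := by
  unfold sumIn
  rw [← Finset.sum_add_distrib, ← Finset.sum_add_distrib]
  refine Finset.sum_congr rfl fun u _ => ?_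
  rcases hc u with h | h | h
  · have h2 : u ∉ S2 := fun hx => h12 u h hx
    have h3 : u ∉ S3 := fun hx => h13 u h hx
    simp [h, h2, h3]
  · have h1 : u ∉ S1 := fun hx => h12 u hx h
    have h3 : u ∉ S3 := fun hx => h23 u h hx
    simp [h, h1, h3]
  · have h1 : u ∉ S1 := fun hx => h13 u hx h
    have h2 : u ∉ S2 := fun hx => h23 u hx h
    simp [h, h1, h2]

theorem sumIn_zero {n : ℕ} {S S' : Set (Fin n)} {w : Fin n → Fin n → ℝ}
    (hz : ∀ u x, u ∈ S → x ∈ S' → w u x = 0) :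
    sumIn S (fun u => sumIn S' (w u)) = 0 := by
  unfold sumIn
  refine Finset.sum_eq_zero fun u _ => ?_
  by_cases hu : u ∈ S
  · simp only [hu, if_true]
    refine Finset.sum_eq_zero fun x _ => ?_
    by_cases hx : x ∈ S'
    · simp [hx, hz u x hu hx]
    · simp [hx]
  · simp [hu]

theorem sumIn_cross {n : ℕ} {S S' : Set (Fin n)} {w : Fin n → Fin n → ℝ} {p q : Fin n}
    (hp : p ∈ S) (hq : q ∈ S')
    (hz : ∀ u x, u ∈ S → x ∈ S' → ¬(u = p ∧ x = q) → w u x = 0) :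
    sumIn S (fun u => sumIn S' (w u)) = w p q := by
  unfold sumIn
  have key : ∀ u, (if u ∈ S then ∑ x, if x ∈ S' then w u x else 0 else 0) =
      if u = p then w p q else 0 := by
    intro u
    by_cases hu : u ∈ S
    · simp only [hu, if_true]
      by_cases hup : u = p
      · subst hup
        rw [if_pos rfl]
        have key2 : ∀ x, (if x ∈ S' then w u x else 0) = if x = q then w u q else 0 := by
          intro x
          by_cases hx : x ∈ S'
          · by_cases hxq : x = q
            · subst hxq
              simp [hx]
            · simp [hx, hxq, hz u x hu hx fun hc => hxq hc.2]
          · have hxq : x ≠ q := fun hc => hx (hc ▸ hq)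
            simp [hx, hxq]
        refine (Finset.sum_congr rfl fun x _ => key2 x).trans ?_
        simp
      · rw [if_neg hup]
        refine Finset.sum_eq_zero fun x _ => ?_
        by_cases hx : x ∈ S'
        · simp [hx, hz u x hu hx fun hc => hup hc.1]
        · simp [hx]
    · have hup : u ≠ p := fun hc => hu (hc ▸ hp)
      simp [hu, hup]
  refine (Finset.sum_congr rfl fun u _ => key u).trans ?_
  simp

theorem sumIn_nonneg {n : ℕ} (S : Set (Fin n)) {f : Fin n → ℝ} (h : ∀ u, 0 ≤ f u) :
    0 ≤ sumIn S f := by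
  unfold sumIn
  refine Finset.sum_nonneg fun u _ => ?_
  by_cases hu : u ∈ S <;> simp [hu, h u]

theorem compVol_eq_sumIn {n : ℕ} (W : WGraph n) (H : SimpleGraph (Fin n)) (v : Fin n) :
    compVol W H v = sumIn ((H.connectedComponentMk v).supp)
      (fun u => sumIn ((H.connectedComponentMk v).supp) (W.w u)) := by
  unfold compVol
  rw [finsum_mem_eq_sumIn]
  exact sumIn_congr fun u _ => finsum_mem_eq_sumIn _ _

theorem VVal_eq_two {n : ℕ} (W : WGraph n) (H : SimpleGraph (Fin n)) (x y : Fin n)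
    (hcov : ∀ K : H.ConnectedComponent,
      K = H.connectedComponentMk x ∨ K = H.connectedComponentMk y)
    (hne : H.connectedComponentMk x ≠ H.connectedComponentMk y) :
    VVal W H = (∑ᶠ u ∈ (H.connectedComponentMk x).supp, W.deg u) *
      (∑ᶠ u ∈ (H.connectedComponentMk y).supp, W.deg u) := by
  unfold VVal
  rw [finprod_eq_prod_of_fintype]
  have huniv : (Finset.univ : Finset H.ConnectedComponent)
      = {H.connectedComponentMk x, H.connectedComponentMk y} := by
    ext K
    simp only [Finset.mem_univ, true_iff, Finset.mem_insert, Finset.mem_singleton]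
    exact hcov K
  rw [huniv, Finset.prod_insert (Finset.notMem_singleton.mpr hne), Finset.prod_singleton]

theorem et_numeric {n : ℕ} (T T' : WGraph n) (v1 v2 v3 : Fin n)
    (S1 S2 S3 : Set (Fin n))
    (m1 : v1 ∈ S1) (m2 : v2 ∈ S2) (m3 : v3 ∈ S3)
    (cover : ∀ u, u ∈ S1 ∨ u ∈ S2 ∨ u ∈ S3)
    (d12 : ∀ u, u ∈ S1 → u ∈ S2 → False)
    (d13 : ∀ u, u ∈ S1 → u ∈ S3 → False)
    (d23 : ∀ u, u ∈ S2 → u ∈ S3 → False)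
    (hz12 : ∀ u x, u ∈ S1 → x ∈ S2 → ¬(u = v1 ∧ x = v2) → T.w u x = 0)
    (hz23 : ∀ u x, u ∈ S2 → x ∈ S3 → ¬(u = v2 ∧ x = v3) → T.w u x = 0)
    (hz13 : ∀ u x, u ∈ S1 → x ∈ S3 → T.w u x = 0)
    (hw13 : T'.w v1 v3 = T.w v2 v3)
    (hw23 : T'.w v2 v3 = 0)
    (hwother : ∀ u x : Fin n, s(u, x) ≠ s(v1, v3) → s(u, x) ≠ s(v2, v3) → T'.w u x = T.w u x)
    (hne12 : v1 ≠ v2) (hne13 : v1 ≠ v3) (hne23 : v2 ≠ v3) :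
    sumIn S1 T.deg * (sumIn S2 T.deg + sumIn S3 T.deg)
      - sumIn S2 T'.deg * (sumIn S1 T'.deg + sumIn S3 T'.deg)
      = (sumIn S3 (fun u => sumIn S3 (T.w u)) + 2 * T.w v2 v3)
          * (sumIn S1 (fun u => sumIn S1 (T.w u)) - sumIn S2 (fun u => sumIn S2 (T.w u))) := by
  have hz21 : ∀ u x, u ∈ S2 → x ∈ S1 → ¬(u = v2 ∧ x = v1) → T.w u x = 0 := fun u x hu hx hne => by
    rw [T.symm]; exact hz12 x u hx hu fun hc => hne ⟨hc.2, hc.1⟩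
  have hz32 : ∀ u x, u ∈ S3 → x ∈ S2 → ¬(u = v3 ∧ x = v2) → T.w u x = 0 := fun u x hu hx hne => by
    rw [T.symm]; exact hz23 x u hx hu fun hc => hne ⟨hc.2, hc.1⟩
  have hz31 : ∀ u x, u ∈ S3 → x ∈ S1 → T.w u x = 0 := fun u x hu hx => by
    rw [T.symm]; exact hz13 x u hx hu
  have hdeg : ∀ u, T.deg u = sumIn S1 (T.w u) + sumIn S2 (T.w u) + sumIn S3 (T.w u) :=
    fun u => sum_eq_sumIn3 cover d12 d13 d23 (T.w u)
  have hdeg' : ∀ u, T'.deg u = sumIn S1 (T'.w u) + sumIn S2 (T'.w u) + sumIn S3 (T'.w u) :=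
    fun u => sum_eq_sumIn3 cover d12 d13 d23 (T'.w u)
  have heq11 : ∀ u x, u ∈ S1 → x ∈ S1 → T'.w u x = T.w u x := by
    intro u x hu hx
    refine hwother u x ?_ ?_ <;> (intro hEq0; rcases Sym2.eq_iff.mp hEq0 with ⟨rfl, rfl⟩ | ⟨rfl, rfl⟩)
    · exact d13 _ hx m3
    · exact d13 _ hu m3
    · exact d12 _ hu m2
    · exact d13 _ hu m3
  have heq22 : ∀ u x, u ∈ S2 → x ∈ S2 → T'.w u x = T.w u x := by
    intro u x hu hx
    refine hwother u x ?_ ?_ <;> (intro hEq0; rcases Sym2.eq_iff.mp hEq0 with ⟨rfl, rfl⟩ | ⟨rfl, rfl⟩)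
    · exact d12 _ m1 hu
    · exact d23 _ hu m3
    · exact d23 _ hx m3
    · exact d23 _ hu m3
  have heq33 : ∀ u x, u ∈ S3 → x ∈ S3 → T'.w u x = T.w u x := by
    intro u x hu hx
    refine hwother u x ?_ ?_ <;> (intro hEq0; rcases Sym2.eq_iff.mp hEq0 with ⟨rfl, rfl⟩ | ⟨rfl, rfl⟩)
    · exact d13 _ m1 hu
    · exact d13 _ m1 hx
    · exact d23 _ m2 hu
    · exact d23 _ m2 hx
  have hv12 : T'.w v1 v2 = T.w v1 v2 := by
    refine hwother v1 v2 ?_ ?_ <;> (intro hEq0; rcases Sym2.eq_iff.mp hEq0 with ⟨h1, h2⟩ | ⟨h1, h2⟩)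
    · exact hne23 h2
    · exact hne13 h1
    · exact hne12 h1
    · exact hne13 h1
  have hv21 : T'.w v2 v1 = T.w v2 v1 := by
    rw [T'.symm, T.symm]; exact hv12
  have hv31 : T'.w v3 v1 = T.w v2 v3 := by
    rw [T'.symm]; exact hw13
  have hw32 : T'.w v3 v2 = 0 := by
    rw [T'.symm]; exact hw23
  have hz'12 : ∀ u x, u ∈ S1 → x ∈ S2 → ¬(u = v1 ∧ x = v2) → T'.w u x = 0 := by
    intro u x hu hx hne
    have heq : T'.w u x = T.w u x := by
      refine hwother u x ?_ ?_ <;> (intro hEq0; rcases Sym2.eq_iff.mp hEq0 with ⟨rfl, rfl⟩ | ⟨rfl, rfl⟩)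
      · exact d23 _ hx m3
      · exact d13 _ hu m3
      · exact d12 _ hu m2
      · exact d13 _ hu m3
    rw [heq]; exact hz12 u x hu hx hne
  have hz'21 : ∀ u x, u ∈ S2 → x ∈ S1 → ¬(u = v2 ∧ x = v1) → T'.w u x = 0 := fun u x hu hx hne => by
    rw [T'.symm]; exact hz'12 x u hx hu fun hc => hne ⟨hc.2, hc.1⟩
  have hz'13 : ∀ u x, u ∈ S1 → x ∈ S3 → ¬(u = v1 ∧ x = v3) → T'.w u x = 0 := by
    intro u x hu hx hne
    have heq : T'.w u x = T.w u x := by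
      refine hwother u x ?_ ?_ <;> (intro hEq0; rcases Sym2.eq_iff.mp hEq0 with ⟨rfl, rfl⟩ | ⟨rfl, rfl⟩)
      · exact hne ⟨rfl, rfl⟩
      · exact d13 _ hu m3
      · exact d12 _ hu m2
      · exact d13 _ hu m3
    rw [heq]; exact hz13 u x hu hx
  have hz'31 : ∀ u x, u ∈ S3 → x ∈ S1 → ¬(u = v3 ∧ x = v1) → T'.w u x = 0 := fun u x hu hx hne => by
    rw [T'.symm]; exact hz'13 x u hx hu fun hc => hne ⟨hc.2, hc.1⟩
  have hz'23 : ∀ u x, u ∈ S2 → x ∈ S3 → T'.w u x = 0 := by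
    intro u x hu hx
    by_cases hux : u = v2 ∧ x = v3
    · rw [hux.1, hux.2]; exact hw23
    · have heq : T'.w u x = T.w u x := by
        refine hwother u x ?_ ?_ <;> (intro hEq0; rcases Sym2.eq_iff.mp hEq0 with ⟨rfl, rfl⟩ | ⟨rfl, rfl⟩)
        · exact d12 _ m1 hu
        · exact d23 _ hu m3
        · exact hux ⟨rfl, rfl⟩
        · exact d23 _ hu m3
      rw [heq]; exact hz23 u x hu hx hux
  have hz'32 : ∀ u x, u ∈ S3 → x ∈ S2 → T'.w u x = 0 := fun u x hu hx => by
    rw [T'.symm]; exact hz'23 x u hx hu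
  have e11 : sumIn S1 (fun u => sumIn S1 (T'.w u)) = sumIn S1 (fun u => sumIn S1 (T.w u)) :=
    sumIn_congr fun u hu => sumIn_congr fun x hx => heq11 u x hu hx
  have e22 : sumIn S2 (fun u => sumIn S2 (T'.w u)) = sumIn S2 (fun u => sumIn S2 (T.w u)) :=
    sumIn_congr fun u hu => sumIn_congr fun x hx => heq22 u x hu hx
  have e33 : sumIn S3 (fun u => sumIn S3 (T'.w u)) = sumIn S3 (fun u => sumIn S3 (T.w u)) :=
    sumIn_congr fun u hu => sumIn_congr fun x hx => heq33 u x hu hx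
  have ra : sumIn S1 T.deg = sumIn S1 (fun u => sumIn S1 (T.w u)) + T.w v1 v2 + 0 := by
    calc sumIn S1 T.deg
        = sumIn S1 (fun u => sumIn S1 (T.w u) + sumIn S2 (T.w u) + sumIn S3 (T.w u)) :=
          sumIn_congr fun u _ => hdeg u
      _ = sumIn S1 (fun u => sumIn S1 (T.w u)) + sumIn S1 (fun u => sumIn S2 (T.w u))
            + sumIn S1 (fun u => sumIn S3 (T.w u)) := sumIn_add3 _ _ _ _
      _ = _ := by rw [sumIn_cross m1 m2 hz12, sumIn_zero hz13]
  have rb : sumIn S2 T.deg = T.w v2 v1 + sumIn S2 (fun u => sumIn S2 (T.w u)) + T.w v2 v3 := by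
    calc sumIn S2 T.deg
        = sumIn S2 (fun u => sumIn S1 (T.w u) + sumIn S2 (T.w u) + sumIn S3 (T.w u)) :=
          sumIn_congr fun u _ => hdeg u
      _ = sumIn S2 (fun u => sumIn S1 (T.w u)) + sumIn S2 (fun u => sumIn S2 (T.w u))
            + sumIn S2 (fun u => sumIn S3 (T.w u)) := sumIn_add3 _ _ _ _
      _ = _ := by rw [sumIn_cross m2 m1 hz21, sumIn_cross m2 m3 hz23]
  have rc : sumIn S3 T.deg = 0 + T.w v3 v2 + sumIn S3 (fun u => sumIn S3 (T.w u)) := by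
    calc sumIn S3 T.deg
        = sumIn S3 (fun u => sumIn S1 (T.w u) + sumIn S2 (T.w u) + sumIn S3 (T.w u)) :=
          sumIn_congr fun u _ => hdeg u
      _ = sumIn S3 (fun u => sumIn S1 (T.w u)) + sumIn S3 (fun u => sumIn S2 (T.w u))
            + sumIn S3 (fun u => sumIn S3 (T.w u)) := sumIn_add3 _ _ _ _
      _ = _ := by rw [sumIn_zero hz31, sumIn_cross m3 m2 hz32]
  have ra' : sumIn S1 T'.deg = sumIn S1 (fun u => sumIn S1 (T.w u)) + T.w v1 v2 + T.w v2 v3 := by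
    calc sumIn S1 T'.deg
        = sumIn S1 (fun u => sumIn S1 (T'.w u) + sumIn S2 (T'.w u) + sumIn S3 (T'.w u)) :=
          sumIn_congr fun u _ => hdeg' u
      _ = sumIn S1 (fun u => sumIn S1 (T'.w u)) + sumIn S1 (fun u => sumIn S2 (T'.w u))
            + sumIn S1 (fun u => sumIn S3 (T'.w u)) := sumIn_add3 _ _ _ _
      _ = _ := by rw [e11, sumIn_cross m1 m2 hz'12, sumIn_cross m1 m3 hz'13, hv12, hw13]
  have rb' : sumIn S2 T'.deg = T.w v2 v1 + sumIn S2 (fun u => sumIn S2 (T.w u)) + 0 := by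
    calc sumIn S2 T'.deg
        = sumIn S2 (fun u => sumIn S1 (T'.w u) + sumIn S2 (T'.w u) + sumIn S3 (T'.w u)) :=
          sumIn_congr fun u _ => hdeg' u
      _ = sumIn S2 (fun u => sumIn S1 (T'.w u)) + sumIn S2 (fun u => sumIn S2 (T'.w u))
            + sumIn S2 (fun u => sumIn S3 (T'.w u)) := sumIn_add3 _ _ _ _
      _ = _ := by rw [e22, sumIn_cross m2 m1 hz'21, sumIn_zero hz'23, hv21]
  have rc' : sumIn S3 T'.deg = T.w v2 v3 + 0 + sumIn S3 (fun u => sumIn S3 (T.w u)) := by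
    calc sumIn S3 T'.deg
        = sumIn S3 (fun u => sumIn S1 (T'.w u) + sumIn S2 (T'.w u) + sumIn S3 (T'.w u)) :=
          sumIn_congr fun u _ => hdeg' u
      _ = sumIn S3 (fun u => sumIn S1 (T'.w u)) + sumIn S3 (fun u => sumIn S2 (T'.w u))
            + sumIn S3 (fun u => sumIn S3 (T'.w u)) := sumIn_add3 _ _ _ _
      _ = _ := by rw [e33, sumIn_cross m3 m1 hz'31, sumIn_zero hz'32, hv31]
  rw [ra, rb, rc, ra', rb', rc', T.symm v2 v1, T.symm v3 v2]
  ring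

end EtAux

theorem stmt11 {n : ℕ} (T T' : WGraph n) (hT : T.G.IsTree) (hT' : T'.G.IsTree)
    (v1 v2 v3 : Fin n) (h : EdgeTransferVol T T' v1 v2 v3) :
    (VVal T (T.G.deleteEdges {s(v1, v2)}) - VVal T' (T'.G.deleteEdges {s(v1, v2)}) =
        (compVol T (T.G.deleteEdges {s(v1, v2), s(v2, v3)}) v3 + 2 * T.w v2 v3) *
          (compVol T (T.G.deleteEdges {s(v1, v2), s(v2, v3)}) v1 -
            compVol T (T.G.deleteEdges {s(v1, v2), s(v2, v3)}) v2)) ∧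
    (0 < VVal T (T.G.deleteEdges {s(v1, v2)}) - VVal T' (T'.G.deleteEdges {s(v1, v2)})) := by
  obtain ⟨⟨adj12, adj23, hne13, hG', hw13, hwother⟩, hlt⟩ := h
  have hne12 : v1 ≠ v2 := adj12.ne
  have hne23 : v2 ≠ v3 := adj23.ne
  obtain ⟨nr12, nr23, nr13, cover0⟩ := et_struct hT adj12 adj23 hne13
  obtain ⟨S1, hS1⟩ : ∃ S : Set (Fin n),
      S = ((T.G.deleteEdges {s(v1, v2), s(v2, v3)}).connectedComponentMk v1).supp := ⟨_, rfl⟩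
  obtain ⟨S2, hS2⟩ : ∃ S : Set (Fin n),
      S = ((T.G.deleteEdges {s(v1, v2), s(v2, v3)}).connectedComponentMk v2).supp := ⟨_, rfl⟩
  obtain ⟨S3, hS3⟩ : ∃ S : Set (Fin n),
      S = ((T.G.deleteEdges {s(v1, v2), s(v2, v3)}).connectedComponentMk v3).supp := ⟨_, rfl⟩
  have hmemS1 : ∀ u, u ∈ S1 ↔ (T.G.deleteEdges {s(v1, v2), s(v2, v3)}).Reachable u v1 := by
    intro u
    rw [hS1, SimpleGraph.ConnectedComponent.mem_supp_iff, SimpleGraph.ConnectedComponent.eq]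
  have hmemS2 : ∀ u, u ∈ S2 ↔ (T.G.deleteEdges {s(v1, v2), s(v2, v3)}).Reachable u v2 := by
    intro u
    rw [hS2, SimpleGraph.ConnectedComponent.mem_supp_iff, SimpleGraph.ConnectedComponent.eq]
  have hmemS3 : ∀ u, u ∈ S3 ↔ (T.G.deleteEdges {s(v1, v2), s(v2, v3)}).Reachable u v3 := by
    intro u
    rw [hS3, SimpleGraph.ConnectedComponent.mem_supp_iff, SimpleGraph.ConnectedComponent.eq]
  have m1 : v1 ∈ S1 := (hmemS1 v1).mpr (SimpleGraph.Reachable.refl v1)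
  have m2 : v2 ∈ S2 := (hmemS2 v2).mpr (SimpleGraph.Reachable.refl v2)
  have m3 : v3 ∈ S3 := (hmemS3 v3).mpr (SimpleGraph.Reachable.refl v3)
  have d12 : ∀ u, u ∈ S1 → u ∈ S2 → False := fun u h1 h2 =>
    nr12 (((hmemS1 u).mp h1).symm.trans ((hmemS2 u).mp h2))
  have d13 : ∀ u, u ∈ S1 → u ∈ S3 → False := fun u h1 h2 =>
    nr13 (((hmemS1 u).mp h1).symm.trans ((hmemS3 u).mp h2))
  have d23 : ∀ u, u ∈ S2 → u ∈ S3 → False := fun u h1 h2 =>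
    nr23 (((hmemS2 u).mp h1).symm.trans ((hmemS3 u).mp h2))
  have cover : ∀ u, u ∈ S1 ∨ u ∈ S2 ∨ u ∈ S3 := by
    intro u
    rcases cover0 u with h | h | h
    · exact Or.inl ((hmemS1 u).mpr h)
    · exact Or.inr (Or.inl ((hmemS2 u).mpr h))
    · exact Or.inr (Or.inr ((hmemS3 u).mpr h))
  have hz_gen : ∀ (u x p q : Fin n),
      (T.G.deleteEdges {s(v1, v2), s(v2, v3)}).Reachable u p →
      (T.G.deleteEdges {s(v1, v2), s(v2, v3)}).Reachable x q →
      ¬ (T.G.deleteEdges {s(v1, v2), s(v2, v3)}).Reachable p q →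
      s(u, x) ≠ s(v1, v2) → s(u, x) ≠ s(v2, v3) → T.w u x = 0 := by
    intro u x p q hu hx hpq h1 h2
    by_contra hw0
    have hadj : T.G.Adj u x := by
      by_contra hA
      exact hw0 (T.zero u x hA)
    have hadj' : (T.G.deleteEdges {s(v1, v2), s(v2, v3)}).Adj u x := by
      simp only [SimpleGraph.deleteEdges_adj, Set.mem_insert_iff, Set.mem_singleton_iff]
      exact ⟨hadj, by tauto⟩
    exact hpq (hu.symm.trans (hadj'.reachable.trans hx))
  have hz12 : ∀ u x, u ∈ S1 → x ∈ S2 → ¬(u = v1 ∧ x = v2) → T.w u x = 0 := by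
    intro u x hu hx hne
    refine hz_gen u x v1 v2 ((hmemS1 u).mp hu) ((hmemS2 x).mp hx) nr12 ?_ ?_ <;>
      (intro hEq0; rcases Sym2.eq_iff.mp hEq0 with ⟨rfl, rfl⟩ | ⟨rfl, rfl⟩)
    · exact hne ⟨rfl, rfl⟩
    · exact d12 _ hu m2
    · exact d12 _ hu m2
    · exact d13 _ hu m3
  have hz23 : ∀ u x, u ∈ S2 → x ∈ S3 → ¬(u = v2 ∧ x = v3) → T.w u x = 0 := by
    intro u x hu hx hne
    refine hz_gen u x v2 v3 ((hmemS2 u).mp hu) ((hmemS3 x).mp hx) nr23 ?_ ?_ <;>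
      (intro hEq0; rcases Sym2.eq_iff.mp hEq0 with ⟨rfl, rfl⟩ | ⟨rfl, rfl⟩)
    · exact d12 _ m1 hu
    · exact d13 _ m1 hx
    · exact hne ⟨rfl, rfl⟩
    · exact d23 _ hu m3
  have hz13 : ∀ u x, u ∈ S1 → x ∈ S3 → T.w u x = 0 := by
    intro u x hu hx
    refine hz_gen u x v1 v3 ((hmemS1 u).mp hu) ((hmemS3 x).mp hx) nr13 ?_ ?_ <;>
      (intro hEq0; rcases Sym2.eq_iff.mp hEq0 with ⟨rfl, rfl⟩ | ⟨rfl, rfl⟩)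
    · exact d23 _ m2 hx
    · exact d12 _ hu m2
    · exact d12 _ hu m2
    · exact d13 _ hu m3
  -- facts about T'
  have hnadj13 : ¬ T.G.Adj v1 v3 := by
    intro hadj
    apply et_bridge hT.2 hadj
    have h1 : (T.G.deleteEdges {s(v1, v3)}).Adj v1 v2 := by
      simp only [SimpleGraph.deleteEdges_adj, Set.mem_singleton_iff]
      refine ⟨adj12, ?_⟩
      intro hEq0
      rcases Sym2.eq_iff.mp hEq0 with ⟨-, h⟩ | ⟨h, -⟩
      · exact hne23 h
      · exact hne13 h
    have h2 : (T.G.deleteEdges {s(v1, v3)}).Adj v2 v3 := by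
      simp only [SimpleGraph.deleteEdges_adj, Set.mem_singleton_iff]
      refine ⟨adj23, ?_⟩
      intro hEq0
      rcases Sym2.eq_iff.mp hEq0 with ⟨h, -⟩ | ⟨h, -⟩
      · exact hne12 h.symm
      · exact hne23 h
    exact h1.reachable.trans h2.reachable
  have hnadj23' : ¬ T'.G.Adj v2 v3 := by
    rw [hG']
    simp only [SimpleGraph.sup_adj, SimpleGraph.deleteEdges_adj, SimpleGraph.fromEdgeSet_adj,
      Set.mem_singleton_iff]
    rintro (⟨-, hne'⟩ | ⟨hEq, -⟩)
    · exact hne' trivial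
    · rw [Sym2.eq_iff] at hEq
      rcases hEq with ⟨h1, -⟩ | ⟨-, h2⟩
      · exact hne12 h1.symm
      · exact hne13 h2.symm
  have hw23' : T'.w v2 v3 = 0 := T'.zero v2 v3 hnadj23'
  have adj21' : T'.G.Adj v2 v1 := by
    rw [hG', SimpleGraph.sup_adj]
    left
    simp only [SimpleGraph.deleteEdges_adj, Set.mem_singleton_iff]
    refine ⟨adj12.symm, ?_⟩
    intro hEq0
    rcases Sym2.eq_iff.mp hEq0 with ⟨-, h⟩ | ⟨h, -⟩
    · exact hne13 h
    · exact hne23 h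
  have adj13' : T'.G.Adj v1 v3 := by
    rw [hG', SimpleGraph.sup_adj, SimpleGraph.fromEdgeSet_adj]
    exact Or.inr ⟨rfl, hne13⟩
  have hD' : T'.G.deleteEdges {s(v2, v1), s(v1, v3)}
      = T.G.deleteEdges {s(v1, v2), s(v2, v3)} := by
    ext u x
    rw [hG']
    simp only [SimpleGraph.deleteEdges_adj, SimpleGraph.sup_adj, SimpleGraph.fromEdgeSet_adj,
      Set.mem_insert_iff, Set.mem_singleton_iff]
    constructor
    · rintro ⟨hA | hE, hn⟩
      · refine ⟨hA.1, ?_⟩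
        rintro (hh | hh)
        · exact hn (Or.inl (hh.trans Sym2.eq_swap))
        · exact hA.2 hh
      · exact absurd (Or.inr hE.1) hn
    · rintro ⟨hA, hn⟩
      refine ⟨Or.inl ⟨hA, fun hh => hn (Or.inr hh)⟩, ?_⟩
      rintro (hh | hh)
      · exact hn (Or.inl (hh.trans Sym2.eq_swap))
      · rw [Sym2.eq_iff] at hh
        rcases hh with ⟨rfl, rfl⟩ | ⟨rfl, rfl⟩
        · exact hnadj13 hA
        · exact hnadj13 hA.symm
  -- numeric identity
  have E := et_numeric T T' v1 v2 v3 S1 S2 S3 m1 m2 m3 cover d12 d13 d23 hz12 hz23 hz13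
    hw13 hw23' hwother hne12 hne13 hne23
  -- VVal for T
  have hsa := et_supp_a hT adj12 adj23 hne13
  rw [← hS1] at hsa
  have hsb := et_supp_b hT adj12 adj23 hne13
  rw [← hS2, ← hS3] at hsb
  have hVT : VVal T (T.G.deleteEdges {s(v1, v2)})
      = sumIn S1 T.deg * (sumIn S2 T.deg + sumIn S3 T.deg) := by
    rw [VVal_eq_two T (T.G.deleteEdges {s(v1, v2)}) v1 v2
        (et_comp_cover hT adj12 adj23 hne13) (et_comp_ne hT.2 adj12),
      hsa, hsb, finsum_mem_eq_sumIn, finsum_mem_eq_sumIn, sumIn_union d23]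
  -- VVal for T'
  have hsa' := et_supp_a hT' adj21' adj13' hne23
  rw [hD', ← hS2, show s(v2, v1) = s(v1, v2) from Sym2.eq_swap] at hsa'
  have hsb' := et_supp_b hT' adj21' adj13' hne23
  rw [hD', ← hS1, ← hS3, show s(v2, v1) = s(v1, v2) from Sym2.eq_swap] at hsb'
  have hcov' := et_comp_cover hT' adj21' adj13' hne23
  rw [show s(v2, v1) = s(v1, v2) from Sym2.eq_swap] at hcov'
  have hcne' := et_comp_ne hT'.2 adj21'
  rw [show s(v2, v1) = s(v1, v2) from Sym2.eq_swap] at hcne'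
  have hVT' : VVal T' (T'.G.deleteEdges {s(v1, v2)})
      = sumIn S2 T'.deg * (sumIn S1 T'.deg + sumIn S3 T'.deg) := by
    rw [VVal_eq_two T' (T'.G.deleteEdges {s(v1, v2)}) v2 v1 hcov' hcne',
      hsa', hsb', finsum_mem_eq_sumIn, finsum_mem_eq_sumIn, sumIn_union d13]
  have hcv1 : compVol T (T.G.deleteEdges {s(v1, v2), s(v2, v3)}) v1
      = sumIn S1 (fun u => sumIn S1 (T.w u)) := by
    rw [compVol_eq_sumIn, ← hS1]
  have hcv2 : compVol T (T.G.deleteEdges {s(v1, v2), s(v2, v3)}) v2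
      = sumIn S2 (fun u => sumIn S2 (T.w u)) := by
    rw [compVol_eq_sumIn, ← hS2]
  have hcv3 : compVol T (T.G.deleteEdges {s(v1, v2), s(v2, v3)}) v3
      = sumIn S3 (fun u => sumIn S3 (T.w u)) := by
    rw [compVol_eq_sumIn, ← hS3]
  have key : VVal T (T.G.deleteEdges {s(v1, v2)}) - VVal T' (T'.G.deleteEdges {s(v1, v2)})
      = (compVol T (T.G.deleteEdges {s(v1, v2), s(v2, v3)}) v3 + 2 * T.w v2 v3) *
          (compVol T (T.G.deleteEdges {s(v1, v2), s(v2, v3)}) v1 -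
            compVol T (T.G.deleteEdges {s(v1, v2), s(v2, v3)}) v2) := by
    rw [hVT, hVT', hcv1, hcv2, hcv3]
    exact E
  refine ⟨key, ?_⟩
  rw [key]
  have hwnn : ∀ u x : Fin n, 0 ≤ T.w u x := by
    intro u x
    by_cases hA : T.G.Adj u x
    · exact (T.pos u x hA).le
    · rw [T.zero u x hA]
  have hpos2 : 0 < T.w v2 v3 := T.pos v2 v3 adj23
  have hc3 : 0 ≤ sumIn S3 (fun u => sumIn S3 (T.w u)) :=
    sumIn_nonneg _ fun u => sumIn_nonneg _ fun x => hwnn u x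
  apply mul_pos
  · rw [hcv3]
    linarith
  · have := hlt
    linarith
end
end

section
/- Let W be a finite multiset of positive reals and let T' ∈ 𝒯_W be a weighted tree whose underlying graph is not a path. Then there exists a weighted tree T ∈ 𝒯_W, not isomorphic to T', such that T edge-transfers to T' with respect to size. (That is, the maximal elements of the poset (𝒯_W, ⪰_s) are exactly the weighted paths; conversely, no weighted path can be the result of an edge-transfer.) -/
open scoped Classical

noncomputable section

section AuxLemmas

open SimpleGraph

variable {V : Type*}


variable {V : Type*}

/-- Edge-wise reachability monotonicity. -/
lemma reach_mono {G H : SimpleGraph V}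
    (h : ∀ a b, G.Adj a b → H.Reachable a b) {x y : V} (hr : G.Reachable x y) :
    H.Reachable x y := by
  obtain ⟨p⟩ := hr
  induction p with
  | nil => exact Reachable.refl _
  | cons ha _ ih => exact (h _ _ ha).trans ih

/-- Deleting one edge: reachability decomposition. -/
lemma reach_del {G : SimpleGraph V} {a b x y : V}
    (h : G.Reachable x y) :
    (G.deleteEdges {s(a,b)}).Reachable x y ∨
    ((G.deleteEdges {s(a,b)}).Reachable x a ∧ (G.deleteEdges {s(a,b)}).Reachable b y) ∨
    ((G.deleteEdges {s(a,b)}).Reachable x b ∧ (G.deleteEdges {s(a,b)}).Reachable a y) := by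
  obtain ⟨p⟩ := h
  induction p with
  | nil => exact Or.inl (Reachable.refl _)
  | @cons x z y ha p ih =>
    by_cases he : s(x, z) = s(a, b)
    · rw [Sym2.eq_iff] at he
      rcases he with ⟨rfl, rfl⟩ | ⟨rfl, rfl⟩
      · rcases ih with h1 | ⟨h1, h2⟩ | ⟨h1, h2⟩
        · exact Or.inr (Or.inl ⟨Reachable.refl _, h1⟩)
        · exact Or.inr (Or.inl ⟨Reachable.refl _, h2⟩)
        · exact Or.inl h2
      · rcases ih with h1 | ⟨h1, h2⟩ | ⟨h1, h2⟩
        · exact Or.inr (Or.inr ⟨Reachable.refl _, h1⟩)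
        · exact Or.inl h2
        · exact Or.inr (Or.inr ⟨Reachable.refl _, h2⟩)
    · have hxz : (G.deleteEdges {s(a,b)}).Adj x z := by
        rw [deleteEdges_adj]; exact ⟨ha, by simpa using he⟩
      rcases ih with h1 | ⟨h1, h2⟩ | ⟨h1, h2⟩
      · exact Or.inl (hxz.reachable.trans h1)
      · exact Or.inr (Or.inl ⟨hxz.reachable.trans h1, h2⟩)
      · exact Or.inr (Or.inr ⟨hxz.reachable.trans h1, h2⟩)

/-- In an acyclic graph, after deleting a set containing edge `ab`, `a` and `b`
are not reachable from each other. -/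
lemma no_reach_del1 {G : SimpleGraph V} (hG : G.IsAcyclic) {a b : V} (hab : G.Adj a b)
    {S : Set (Sym2 V)} (hS : s(a,b) ∈ S) : ¬ (G.deleteEdges S).Reachable a b := by
  rintro ⟨p⟩
  classical
  have hsub : ∀ e ∈ p.bypass.edges, e ∈ G.edgeSet := by
    intro e he
    have := p.bypass.edges_subset_edgeSet he
    rw [edgeSet_deleteEdges] at this
    exact this.1
  have hnot : s(a,b) ∉ p.bypass.edges := by
    intro he
    have := p.bypass.edges_subset_edgeSet he
    rw [edgeSet_deleteEdges] at this
    exact this.2 hS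
  let q : G.Walk a b := (p.bypass).transfer G hsub
  have hq : q.IsPath := (Walk.bypass_isPath p).transfer _
  have := hG.path_unique ⟨q, hq⟩ (Path.singleton hab)
  have hmem : s(a,b) ∈ q.edges := by
    have h2 := congrArg (fun r : G.Path a b => (r : G.Walk a b).edges) this
    simp only at h2
    rw [h2]
    simp [Path.singleton]
  rw [Walk.edges_transfer] at hmem
  exact hnot hmem

/-- The two-step path. -/
def twoStep {G : SimpleGraph V} {a b c : V} (h1 : G.Adj a b) (h2 : G.Adj b c) :
    G.Walk a c := Walk.cons h1 (Walk.cons h2 Walk.nil)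

lemma twoStep_isPath {G : SimpleGraph V} {a b c : V} (h1 : G.Adj a b) (h2 : G.Adj b c)
    (hac : a ≠ c) : (twoStep h1 h2).IsPath := by
  simp [twoStep, Walk.isPath_def, h1.ne, h2.ne, hac]

lemma no_reach_del2 {G : SimpleGraph V} (hG : G.IsAcyclic) {a b c : V}
    (h1 : G.Adj a b) (h2 : G.Adj b c) (hac : a ≠ c)
    {S : Set (Sym2 V)} (hS : s(a,b) ∈ S) : ¬ (G.deleteEdges S).Reachable a c := by
  rintro ⟨p⟩
  classical
  have hsub : ∀ e ∈ p.bypass.edges, e ∈ G.edgeSet := by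
    intro e he
    have := p.bypass.edges_subset_edgeSet he
    rw [edgeSet_deleteEdges] at this
    exact this.1
  have hnot : s(a,b) ∉ p.bypass.edges := by
    intro he
    have := p.bypass.edges_subset_edgeSet he
    rw [edgeSet_deleteEdges] at this
    exact this.2 hS
  let q : G.Walk a c := (p.bypass).transfer G hsub
  have hq : q.IsPath := (Walk.bypass_isPath p).transfer _
  have := hG.path_unique ⟨q, hq⟩ ⟨twoStep h1 h2, twoStep_isPath h1 h2 hac⟩
  have hmem : s(a,b) ∈ q.edges := by
    have h4 := congrArg (fun r : G.Path a c => (r : G.Walk a c).edges) this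
    simp only at h4
    rw [h4]
    simp [twoStep]
  rw [Walk.edges_transfer] at hmem
  exact hnot hmem

/-- Acyclic: adjacency triangle impossible. -/
lemma no_triangle {G : SimpleGraph V} (hG : G.IsAcyclic) {a b c : V}
    (h1 : G.Adj a b) (h2 : G.Adj b c) (hac : a ≠ c) : ¬ G.Adj a c := by
  intro h3
  have := hG.path_unique (Path.singleton h3) ⟨twoStep h1 h2, twoStep_isPath h1 h2 hac⟩
  have : (Path.singleton h3 : G.Walk a c).length = (twoStep h1 h2).length :=
    congrArg (fun p : G.Path a c => p.1.length) this
  simp [Path.singleton, twoStep] at this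

variable {n : ℕ}

lemma supp_eq (H : SimpleGraph (Fin n)) (v : Fin n) :
    (H.connectedComponentMk v).supp = {u | H.Reachable u v} := by
  ext u
  simp [ConnectedComponent.mem_supp_iff, ConnectedComponent.eq]

lemma compSize_eq_card (H : SimpleGraph (Fin n)) (v : Fin n) :
    compSize H v = Nat.card {u | H.Reachable u v} := by
  rw [compSize, supp_eq]

lemma compSize_congr {H H' : SimpleGraph (Fin n)} {v w : Fin n}
    (h : ∀ u, H.Reachable u v ↔ H'.Reachable u w) : compSize H v = compSize H' w := by
  rw [compSize_eq_card, compSize_eq_card]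
  have : {u | H.Reachable u v} = {u | H'.Reachable u w} := Set.ext h
  rw [this]

lemma compSize_pos (H : SimpleGraph (Fin n)) (v : Fin n) : 0 < compSize H v := by
  rw [compSize_eq_card]
  have : v ∈ {u | H.Reachable u v} := Reachable.refl _
  exact Nat.card_pos_iff.mpr ⟨⟨v, this⟩, Set.Finite.to_subtype (Set.toFinite _)⟩

lemma compSize_union {H K : SimpleGraph (Fin n)} {v x y : Fin n}
    (h : ∀ u, H.Reachable u v ↔ K.Reachable u x ∨ K.Reachable u y)
    (hxy : ¬ K.Reachable x y) :
    compSize H v = compSize K x + compSize K y := by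
  rw [compSize_eq_card, compSize_eq_card, compSize_eq_card]
  have : {u | H.Reachable u v} = {u | K.Reachable u x} ∪ {u | K.Reachable u y} := by
    ext u; exact h u
  rw [this]
  rw [Nat.card_coe_set_eq, Nat.card_coe_set_eq, Nat.card_coe_set_eq,
    Set.ncard_union_eq ?_ (Set.toFinite _) (Set.toFinite _)]
  rw [Set.disjoint_left]
  intro u hux huy
  exact hxy ((hux.symm.trans huy : K.Reachable x y))

lemma compSize_le {H K : SimpleGraph (Fin n)} {v : Fin n}
    (h : ∀ u, H.Reachable u v → K.Reachable u v) : compSize H v ≤ compSize K v := by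
  rw [compSize_eq_card, compSize_eq_card, Nat.card_coe_set_eq, Nat.card_coe_set_eq]
  exact Set.ncard_le_ncard (fun u hu => h u hu) (Set.toFinite _)

lemma compSize_iso {G G' : SimpleGraph (Fin n)} (φ : G ≃g G') (v : Fin n) :
    compSize G v = compSize G' (φ v) := by
  rw [compSize_eq_card, compSize_eq_card]
  apply Nat.card_congr
  refine Equiv.subtypeEquiv φ.toEquiv (fun u => ?_)
  simp only [Set.mem_setOf_eq]
  constructor
  · intro h
    have := (Iso.reachable_iff (φ := φ) (u := u) (v := v)).mpr h
    exact this
  · intro h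
    exact (Iso.reachable_iff (φ := φ) (u := u) (v := v)).mp h

/-- Transport an iso to edge-deleted graphs. -/
def isoDel {G G' : SimpleGraph (Fin n)} (φ : G ≃g G') (a b : Fin n) :
    G.deleteEdges {s(a,b)} ≃g G'.deleteEdges {s(φ a, φ b)} where
  toEquiv := φ.toEquiv
  map_rel_iff' := by
    intro u v
    simp only [deleteEdges_adj, Set.mem_singleton_iff, Equiv.coe_fn_mk]
    have hinj : Function.Injective φ := φ.toEquiv.injective
    have hsym : (s(φ.toEquiv u, φ.toEquiv v) = s(φ a, φ b)) ↔ s(u,v) = s(a,b) := by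
      rw [Sym2.eq_iff, Sym2.eq_iff]
      constructor
      · rintro (⟨h1, h2⟩ | ⟨h1, h2⟩)
        · exact Or.inl ⟨hinj h1, hinj h2⟩
        · exact Or.inr ⟨hinj h1, hinj h2⟩
      · rintro (⟨rfl, rfl⟩ | ⟨rfl, rfl⟩)
        · exact Or.inl ⟨rfl, rfl⟩
        · exact Or.inr ⟨rfl, rfl⟩
    rw [hsym]
    constructor
    · rintro ⟨h1, h2⟩
      exact ⟨φ.map_adj_iff.mp h1, h2⟩
    · rintro ⟨h1, h2⟩
      exact ⟨φ.map_adj_iff.mpr h1, h2⟩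

noncomputable def Phi (G : SimpleGraph (Fin n)) : ℕ :=
  ∑ u, ∑ v, if G.Adj u v then (compSize (G.deleteEdges {s(u,v)}) u)^2 else 0

lemma Phi_iso {G G' : SimpleGraph (Fin n)} (φ : G ≃g G') : Phi G = Phi G' := by
  unfold Phi
  rw [← Equiv.sum_comp φ.toEquiv
    (fun u => ∑ v, if G'.Adj u v then (compSize (G'.deleteEdges {s(u,v)}) u)^2 else 0)]
  apply Finset.sum_congr rfl
  intro u _
  rw [← Equiv.sum_comp φ.toEquiv
    (fun v => if G'.Adj (φ.toEquiv u) v then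
      (compSize (G'.deleteEdges {s(φ.toEquiv u, v)}) (φ.toEquiv u))^2 else 0)]
  apply Finset.sum_congr rfl
  intro v _
  have hadj : G'.Adj (φ.toEquiv u) (φ.toEquiv v) ↔ G.Adj u v := φ.map_adj_iff
  by_cases h : G.Adj u v
  · rw [if_pos (hadj.mpr h), if_pos h]
    rw [compSize_iso (isoDel φ u v) u]
    rfl
  · rw [if_neg (fun hc => h (hadj.mp hc)), if_neg h]

section Main

variable {G G' : SimpleGraph (Fin n)} {v1 v2 v3 : Fin n}

/-- Per-pair contribution to `Phi`. -/
noncomputable def F (G : SimpleGraph (Fin n)) (u v : Fin n) : ℕ :=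
  if G.Adj u v then (compSize (G.deleteEdges {s(u,v)}) u)^2 else 0

lemma Phi_eq (G : SimpleGraph (Fin n)) :
    Phi G = ∑ p ∈ Finset.univ ×ˢ Finset.univ, F G p.1 p.2 := by
  rw [Finset.sum_product]
  rfl

set_option maxHeartbeats 2000000 in
lemma Phi_lt_of_transfer (hG : G.IsTree) (hG' : G'.IsTree)
    (h12 : G.Adj v1 v2) (h23 : G.Adj v2 v3) (h13 : v1 ≠ v3)
    (hEq : G' = G.deleteEdges {s(v2,v3)} ⊔ SimpleGraph.fromEdgeSet {s(v1,v3)})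
    (hsize : compSize (G.deleteEdges {s(v1,v2), s(v2,v3)}) v2 <
      compSize (G.deleteEdges {s(v1,v2), s(v2,v3)}) v1) :
    Phi G < Phi G' := by
  have hne12 : v1 ≠ v2 := h12.ne
  have hne23 : v2 ≠ v3 := h23.ne
  set K := G.deleteEdges {s(v1,v2), s(v2,v3)} with hK
  -- adjacency description of G'
  have hG'adj : ∀ u v, G'.Adj u v ↔
      (G.Adj u v ∧ s(u,v) ≠ s(v2,v3)) ∨ (s(u,v) = s(v1,v3) ∧ u ≠ v) := by
    intro u v
    rw [hEq]
    simp [deleteEdges_adj, fromEdgeSet_adj, sup_adj]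
  have he12ne23 : s(v1,v2) ≠ s(v2,v3) := by
    intro h; rw [Sym2.eq_iff] at h
    rcases h with ⟨h1, h2⟩ | ⟨h1, h2⟩ <;> simp_all
  have he12ne13 : s(v1,v2) ≠ s(v1,v3) := by
    intro h; rw [Sym2.eq_iff] at h
    rcases h with ⟨h1, h2⟩ | ⟨h1, h2⟩ <;> simp_all
  have he23ne13 : s(v2,v3) ≠ s(v1,v3) := by
    intro h; rw [Sym2.eq_iff] at h
    rcases h with ⟨h1, h2⟩ | ⟨h1, h2⟩ <;> simp_all
  have hn13 : ¬ G.Adj v1 v3 := no_triangle hG.2 h12 h23 h13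
  have h'12 : G'.Adj v1 v2 := (hG'adj v1 v2).mpr (Or.inl ⟨h12, he12ne23⟩)
  have h'13 : G'.Adj v1 v3 := (hG'adj v1 v3).mpr (Or.inr ⟨rfl, h13⟩)
  have hn'23 : ¬ G'.Adj v2 v3 := by
    rw [hG'adj]
    rintro (⟨_, h⟩ | ⟨h, _⟩)
    · exact h rfl
    · exact he23ne13 h
  -- G' minus {e1,e3} equals K
  have hK' : G'.deleteEdges {s(v1,v2), s(v1,v3)} = K := by
    ext u v
    simp only [deleteEdges_adj, hG'adj, hK, Set.mem_insert_iff, Set.mem_singleton_iff]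
    have hadj13 : ∀ x y : Fin n, G.Adj x y → s(x,y) = s(v1,v3) → False := by
      intro x y hxy hs
      rw [Sym2.eq_iff] at hs
      rcases hs with ⟨rfl, rfl⟩ | ⟨rfl, rfl⟩
      · exact hn13 hxy
      · exact hn13 hxy.symm
    constructor
    · rintro ⟨(⟨ha2, hb⟩ | ⟨hb, _⟩), hc⟩
      · push_neg at hc
        exact ⟨ha2, by
          intro hmem
          rcases hmem with hh | hh
          · exact hc.1 hh
          · exact hb hh⟩
      · exact absurd (Or.inr hb) hc
    · rintro ⟨ha2, hb⟩
      push_neg at hb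
      refine ⟨Or.inl ⟨ha2, hb.2⟩, ?_⟩
      intro hmem
      rcases hmem with hh | hh
      · exact hb.1 hh
      · exact hadj13 _ _ ha2 hh
  -- non-reachability in K
  have nR12 : ¬ K.Reachable v1 v2 := no_reach_del1 hG.2 h12 (by simp)
  have nR23 : ¬ K.Reachable v2 v3 := no_reach_del1 hG.2 h23 (by simp)
  have nR13 : ¬ K.Reachable v1 v3 := no_reach_del2 hG.2 h12 h23 h13 (by simp)
  set a := compSize K v1 with ha
  set b := compSize K v2 with hb
  set c := compSize K v3 with hc
  have hba : b < a := hsize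
  have hc1 : 1 ≤ c := compSize_pos K v3
  -- the graphs with one edge deleted
  set H1 := G.deleteEdges {s(v1,v2)} with hH1
  set H1' := G'.deleteEdges {s(v1,v2)} with hH1'
  have hKH1 : H1.deleteEdges {s(v2,v3)} = K := by
    rw [hH1, deleteEdges_deleteEdges, hK]
    congr 1
  have hKH1' : H1'.deleteEdges {s(v1,v3)} = K := by
    rw [hH1', deleteEdges_deleteEdges, ← hK']
    congr 1
  have hKleH1 : ∀ x y, K.Adj x y → H1.Adj x y := by
    intro x y hxy
    rw [← hKH1] at hxy
    exact hxy.1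
  have hKleH1' : ∀ x y, K.Adj x y → H1'.Adj x y := by
    intro x y hxy
    rw [← hKH1'] at hxy
    exact hxy.1
  -- component computations
  have comp1 : ∀ u, H1.Reachable u v1 ↔ K.Reachable u v1 := by
    intro u
    constructor
    · intro h
      have := reach_del (a := v2) (b := v3) h
      rw [hKH1] at this
      rcases this with h1 | ⟨h1, h2⟩ | ⟨h1, h2⟩
      · exact h1
      · exact absurd h2.symm nR13
      · exact absurd h2.symm nR12
    · exact fun h => reach_mono (fun x y hxy => (hKleH1 x y hxy).reachable) h
  have comp2 : ∀ u, H1.Reachable u v2 ↔ K.Reachable u v2 ∨ K.Reachable u v3 := by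
    intro u
    constructor
    · intro h
      have := reach_del (a := v2) (b := v3) h
      rw [hKH1] at this
      rcases this with h1 | ⟨h1, _⟩ | ⟨h1, _⟩
      · exact Or.inl h1
      · exact Or.inl h1
      · exact Or.inr h1
    · rintro (h | h)
      · exact reach_mono (fun x y hxy => (hKleH1 x y hxy).reachable) h
      · refine (reach_mono (fun x y hxy => (hKleH1 x y hxy).reachable) h).trans ?_
        have : H1.Adj v3 v2 := by
          rw [hH1, deleteEdges_adj]
          refine ⟨h23.symm, ?_⟩
          simp only [Set.mem_singleton_iff]
          rw [Sym2.eq_swap]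
          exact fun hh => he12ne23 hh.symm
        exact this.reachable
  have comp3 : ∀ u, H1'.Reachable u v1 ↔ K.Reachable u v1 ∨ K.Reachable u v3 := by
    intro u
    constructor
    · intro h
      have := reach_del (a := v1) (b := v3) h
      rw [hKH1'] at this
      rcases this with h1 | ⟨h1, _⟩ | ⟨h1, _⟩
      · exact Or.inl h1
      · exact Or.inl h1
      · exact Or.inr h1
    · rintro (h | h)
      · exact reach_mono (fun x y hxy => (hKleH1' x y hxy).reachable) h
      · refine (reach_mono (fun x y hxy => (hKleH1' x y hxy).reachable) h).trans ?_
        have : H1'.Adj v3 v1 := by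
          rw [hH1', deleteEdges_adj]
          refine ⟨h'13.symm, ?_⟩
          simp only [Set.mem_singleton_iff]
          rw [Sym2.eq_swap]
          exact fun hh => he12ne13 hh.symm
        exact this.reachable
  have comp4 : ∀ u, H1'.Reachable u v2 ↔ K.Reachable u v2 := by
    intro u
    constructor
    · intro h
      have := reach_del (a := v1) (b := v3) h
      rw [hKH1'] at this
      rcases this with h1 | ⟨_, h2⟩ | ⟨_, h2⟩
      · exact h1
      · exact absurd h2.symm nR23
      · exact absurd h2 nR12
    · exact fun h => reach_mono (fun x y hxy => (hKleH1' x y hxy).reachable) h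
  have cs1 : compSize H1 v1 = a := compSize_congr comp1
  have cs2 : compSize H1 v2 = b + c := compSize_union comp2 nR23
  have cs3 : compSize H1' v1 = a + c := compSize_union comp3 nR13
  have cs4 : compSize H1' v2 = b := compSize_congr comp4
  have hne21 : v2 ≠ v1 := hne12.symm
  have hne32 : v3 ≠ v2 := hne23.symm
  have hne31 : v3 ≠ v1 := h13.symm
  set S6 : Finset (Fin n × Fin n) :=
    {(v1,v2),(v2,v1),(v1,v3),(v3,v1),(v2,v3),(v3,v2)} with hS6
  have key : ∀ u v : Fin n, (u,v) ∉ S6 → F G u v = F G' u v := by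
    intro u v hmem
    rw [hS6] at hmem
    simp only [Finset.mem_insert, Finset.mem_singleton] at hmem
    push_neg at hmem
    obtain ⟨q1, q2, q3, q4, q5, q6⟩ := hmem
    have se1 : s(u,v) ≠ s(v1,v2) := by
      intro h; rw [Sym2.eq_iff] at h
      rcases h with ⟨h1, h2⟩ | ⟨h1, h2⟩
      · exact q1 (by rw [h1, h2])
      · exact q2 (by rw [h1, h2])
    have se2 : s(u,v) ≠ s(v2,v3) := by
      intro h; rw [Sym2.eq_iff] at h
      rcases h with ⟨h1, h2⟩ | ⟨h1, h2⟩
      · exact q5 (by rw [h1, h2])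
      · exact q6 (by rw [h1, h2])
    have se3 : s(u,v) ≠ s(v1,v3) := by
      intro h; rw [Sym2.eq_iff] at h
      rcases h with ⟨h1, h2⟩ | ⟨h1, h2⟩
      · exact q3 (by rw [h1, h2])
      · exact q4 (by rw [h1, h2])
    have hadj : G.Adj u v ↔ G'.Adj u v := by
      rw [hG'adj]
      constructor
      · intro h; exact Or.inl ⟨h, se2⟩
      · rintro (⟨h, _⟩ | ⟨h, _⟩)
        · exact h
        · exact absurd h se3
    by_cases hA : G.Adj u v
    · have hA' := hadj.mp hA
      have fwd : ∀ p q, (G.deleteEdges {s(u,v)}).Adj p q →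
          (G'.deleteEdges {s(u,v)}).Reachable p q := by
        intro p q hpq
        rw [deleteEdges_adj, Set.mem_singleton_iff] at hpq
        obtain ⟨hpq1, hpq2⟩ := hpq
        by_cases hs : s(p,q) = s(v2,v3)
        · have a1 : (G'.deleteEdges {s(u,v)}).Adj v2 v1 := by
            rw [deleteEdges_adj, Set.mem_singleton_iff]
            refine ⟨h'12.symm, ?_⟩
            intro hh; rw [Sym2.eq_iff] at hh
            rcases hh with ⟨h1, h2⟩ | ⟨h1, h2⟩
            · exact q2 (by rw [h1, h2])
            · exact q1 (by rw [h1, h2])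
          have a2 : (G'.deleteEdges {s(u,v)}).Adj v1 v3 := by
            rw [deleteEdges_adj, Set.mem_singleton_iff]
            refine ⟨h'13, ?_⟩
            intro hh; rw [Sym2.eq_iff] at hh
            rcases hh with ⟨h1, h2⟩ | ⟨h1, h2⟩
            · exact q3 (by rw [h1, h2])
            · exact q4 (by rw [h1, h2])
          have hstep : (G'.deleteEdges {s(u,v)}).Reachable v2 v3 :=
            a1.reachable.trans a2.reachable
          rw [Sym2.eq_iff] at hs
          rcases hs with ⟨h1, h2⟩ | ⟨h1, h2⟩
          · rw [h1, h2]; exact hstep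
          · rw [h1, h2]; exact hstep.symm
        · have hadjpq : G'.Adj p q := (hG'adj p q).mpr (Or.inl ⟨hpq1, hs⟩)
          exact Adj.reachable (by
            rw [deleteEdges_adj, Set.mem_singleton_iff]
            exact ⟨hadjpq, hpq2⟩)
      have bwd : ∀ p q, (G'.deleteEdges {s(u,v)}).Adj p q →
          (G.deleteEdges {s(u,v)}).Reachable p q := by
        intro p q hpq
        rw [deleteEdges_adj, Set.mem_singleton_iff] at hpq
        obtain ⟨hpq1, hpq2⟩ := hpq
        rw [hG'adj] at hpq1
        rcases hpq1 with ⟨hA2, _⟩ | ⟨hs, _⟩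
        · exact Adj.reachable (by
            rw [deleteEdges_adj, Set.mem_singleton_iff]
            exact ⟨hA2, hpq2⟩)
        · have a1 : (G.deleteEdges {s(u,v)}).Adj v1 v2 := by
            rw [deleteEdges_adj, Set.mem_singleton_iff]
            exact ⟨h12, fun hh => se1 hh.symm⟩
          have a2 : (G.deleteEdges {s(u,v)}).Adj v2 v3 := by
            rw [deleteEdges_adj, Set.mem_singleton_iff]
            exact ⟨h23, fun hh => se2 hh.symm⟩
          have hstep : (G.deleteEdges {s(u,v)}).Reachable v1 v3 :=
            a1.reachable.trans a2.reachable
          rw [Sym2.eq_iff] at hs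
          rcases hs with ⟨h1, h2⟩ | ⟨h1, h2⟩
          · rw [h1, h2]; exact hstep
          · rw [h1, h2]; exact hstep.symm
      rw [F, F, if_pos hA, if_pos hA']
      congr 1
      exact compSize_congr (fun x =>
        ⟨fun hx => reach_mono fwd hx, fun hx => reach_mono bwd hx⟩)
    · rw [F, F, if_neg hA, if_neg (fun h => hA (hadj.mpr h))]
  -- split the sums
  have hsub : S6 ⊆ Finset.univ ×ˢ Finset.univ := by
    intro p _
    exact Finset.mem_product.mpr ⟨Finset.mem_univ _, Finset.mem_univ _⟩
  have split : ∀ J : SimpleGraph (Fin n),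
      Phi J = ∑ p ∈ Finset.univ ×ˢ Finset.univ \ S6, F J p.1 p.2 + ∑ p ∈ S6, F J p.1 p.2 := by
    intro J
    rw [Phi_eq]
    exact (Finset.sum_sdiff hsub).symm
  have hrest : ∑ p ∈ Finset.univ ×ˢ Finset.univ \ S6, F G p.1 p.2 =
      ∑ p ∈ Finset.univ ×ˢ Finset.univ \ S6, F G' p.1 p.2 := by
    apply Finset.sum_congr rfl
    intro p hp
    exact key p.1 p.2 (Finset.mem_sdiff.mp hp).2
  -- evaluate the sums over the six special pairs
  have hsum6 : ∀ J : SimpleGraph (Fin n), ∑ p ∈ S6, F J p.1 p.2 =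
      F J v1 v2 + (F J v2 v1 + (F J v1 v3 + (F J v3 v1 + (F J v2 v3 + F J v3 v2)))) := by
    intro J
    rw [hS6]
    rw [Finset.sum_insert (by simp [Prod.ext_iff, hne12, hne21, hne23, hne32, h13, hne31])]
    rw [Finset.sum_insert (by simp [Prod.ext_iff, hne12, hne21, hne23, hne32, h13, hne31])]
    rw [Finset.sum_insert (by simp [Prod.ext_iff, hne12, hne21, hne23, hne32, h13, hne31])]
    rw [Finset.sum_insert (by simp [Prod.ext_iff, hne12, hne21, hne23, hne32, h13, hne31])]
    rw [Finset.sum_insert (by simp [Prod.ext_iff, hne12, hne21, hne23, hne32, h13, hne31])]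
    rw [Finset.sum_singleton]
  -- values of the special terms
  set M := G.deleteEdges {s(v2,v3)} with hM
  have hMM : G'.deleteEdges {s(v1,v3)} = M := by
    ext x y
    rw [hM, deleteEdges_adj, deleteEdges_adj, hG'adj, Set.mem_singleton_iff,
      Set.mem_singleton_iff]
    constructor
    · rintro ⟨(⟨hxy, hs⟩ | ⟨hs, _⟩), hs3⟩
      · exact ⟨hxy, hs⟩
      · exact absurd hs hs3
    · rintro ⟨hxy, hs⟩
      refine ⟨Or.inl ⟨hxy, hs⟩, ?_⟩
      intro hh; rw [Sym2.eq_iff] at hh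
      rcases hh with ⟨h1, h2⟩ | ⟨h1, h2⟩
      · rw [h1, h2] at hxy; exact hn13 hxy
      · rw [h1, h2] at hxy; exact hn13 hxy.symm
  have hMadj : M.Adj v1 v2 := by
    rw [hM, deleteEdges_adj, Set.mem_singleton_iff]
    exact ⟨h12, he12ne23⟩
  have hM12 : compSize M v1 = compSize M v2 :=
    compSize_congr (fun x => ⟨fun hx => hx.trans hMadj.reachable,
      fun hx => hx.trans hMadj.symm.reachable⟩)
  have swap21 : s(v2,v1) = s(v1,v2) := Sym2.eq_swap
  have swap31 : s(v3,v1) = s(v1,v3) := Sym2.eq_swap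
  have swap32 : s(v3,v2) = s(v2,v3) := Sym2.eq_swap
  have e1 : F G v1 v2 = a^2 := by rw [F, if_pos h12, ← hH1, cs1]
  have e2 : F G v2 v1 = (b+c)^2 := by rw [F, if_pos h12.symm, swap21, ← hH1, cs2]
  have e3 : F G v1 v3 = 0 := by rw [F, if_neg hn13]
  have e4 : F G v3 v1 = 0 := by rw [F, if_neg (fun h => hn13 h.symm)]
  have e5 : F G v2 v3 = (compSize M v2)^2 := by rw [F, if_pos h23, ← hM]
  have e6 : F G v3 v2 = (compSize M v3)^2 := by rw [F, if_pos h23.symm, swap32, ← hM]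
  have e1' : F G' v1 v2 = (a+c)^2 := by rw [F, if_pos h'12, ← hH1', cs3]
  have e2' : F G' v2 v1 = b^2 := by rw [F, if_pos h'12.symm, swap21, ← hH1', cs4]
  have e3' : F G' v1 v3 = (compSize M v2)^2 := by
    rw [F, if_pos h'13, hMM, hM12]
  have e4' : F G' v3 v1 = (compSize M v3)^2 := by
    rw [F, if_pos h'13.symm, swap31, hMM]
  have e5' : F G' v2 v3 = 0 := by rw [F, if_neg hn'23]
  have e6' : F G' v3 v2 = 0 := by rw [F, if_neg (fun h => hn'23 h.symm)]
  rw [split G, split G', hrest, hsum6 G, hsum6 G',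
    e1, e2, e3, e4, e5, e6, e1', e2', e3', e4', e5', e6']
  have hmul : b * c < a * c := Nat.mul_lt_mul_of_lt_of_le hba (le_refl c) (by omega)
  apply Nat.add_lt_add_left
  nlinarith [hmul]

end Main

/-- In the path graph every vertex has at most two neighbours. -/
lemma pathGraph_three_nbrs {m : ℕ} (i x y z : Fin m)
    (hx : (pathGraph m).Adj i x) (hy : (pathGraph m).Adj i y)
    (hz : (pathGraph m).Adj i z) (hxy : x ≠ y) (hxz : x ≠ z) (hyz : y ≠ z) : False := by
  rw [pathGraph_adj] at hx hy hz
  have hvx : x.val ≠ y.val := fun h => hxy (Fin.ext h)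
  have hvy : x.val ≠ z.val := fun h => hxz (Fin.ext h)
  have hvz : y.val ≠ z.val := fun h => hyz (Fin.ext h)
  omega

/-- Part 2: no weighted path is obtained by an edge-transfer w.r.t. size. -/
lemma no_transfer_to_path {P : WGraph n} (hiso : Nonempty (P.G ≃g pathGraph n))
    (T : WGraph n) (hT : T.G.IsTree) (v1 v2 v3 : Fin n) :
    ¬ EdgeTransferSize T P v1 v2 v3 := by
  rintro ⟨⟨h12, h23, h13, hEq, -, -⟩, hsize⟩
  obtain ⟨φ⟩ := hiso
  have hne12 : v1 ≠ v2 := h12.ne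
  have hne23 : v2 ≠ v3 := h23.ne
  have hPadj : ∀ u v, P.G.Adj u v ↔
      (T.G.Adj u v ∧ s(u,v) ≠ s(v2,v3)) ∨ (s(u,v) = s(v1,v3) ∧ u ≠ v) := by
    intro u v
    rw [hEq]
    simp [deleteEdges_adj, fromEdgeSet_adj, sup_adj]
  have he12ne23 : s(v1,v2) ≠ s(v2,v3) := by
    intro h; rw [Sym2.eq_iff] at h
    rcases h with ⟨h1, h2⟩ | ⟨h1, h2⟩ <;> simp_all
  have hn13 : ¬ T.G.Adj v1 v3 := no_triangle hT.2 h12 h23 h13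
  have hP12 : P.G.Adj v1 v2 := (hPadj v1 v2).mpr (Or.inl ⟨h12, he12ne23⟩)
  have hP13 : P.G.Adj v1 v3 := (hPadj v1 v3).mpr (Or.inr ⟨rfl, h13⟩)
  -- every T-neighbour of v1 is v2
  have honly : ∀ x, T.G.Adj v1 x → x = v2 := by
    intro x hx
    by_contra hxne
    have hxne3 : x ≠ v3 := by
      rintro rfl; exact hn13 hx
    have hPx : P.G.Adj v1 x := by
      refine (hPadj v1 x).mpr (Or.inl ⟨hx, ?_⟩)
      intro h; rw [Sym2.eq_iff] at h
      rcases h with ⟨h1, h2⟩ | ⟨h1, h2⟩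
      · exact hne12 h1
      · exact h13 h1
    exact pathGraph_three_nbrs (φ v1) (φ x) (φ v2) (φ v3)
      (φ.map_adj_iff.mpr hPx) (φ.map_adj_iff.mpr hP12) (φ.map_adj_iff.mpr hP13)
      (fun h => hxne (φ.toEquiv.injective h))
      (fun h => hxne3 (φ.toEquiv.injective h))
      (fun h => hne23 (φ.toEquiv.injective h))
  -- v1 is isolated in K
  set K := T.G.deleteEdges {s(v1,v2), s(v2,v3)} with hK
  have hiso1 : ∀ x, ¬ K.Adj v1 x := by
    intro x hx
    rw [hK, deleteEdges_adj] at hx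
    obtain ⟨hx1, hx2⟩ := hx
    have := honly x hx1
    subst this
    exact hx2 (by simp)
  have hcs1 : compSize K v1 = 1 := by
    rw [compSize_eq_card]
    have : {u | K.Reachable u v1} = {v1} := by
      ext u
      simp only [Set.mem_setOf_eq, Set.mem_singleton_iff]
      constructor
      · intro h
        obtain ⟨w⟩ := h.symm
        cases w with
        | nil => rfl
        | cons h p => exact absurd h (hiso1 _)
      · rintro rfl; exact Reachable.refl _
    rw [this]
    simp
  have := compSize_pos K v2
  omega

lemma tree_path_class {G : SimpleGraph (Fin n)} (hG : G.IsTree)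
    (hdeg : ∀ v, G.degree v ≤ 2) : Nonempty (G ≃g pathGraph n) := by
  have hconn := hG.isConnected
  have hne : n ≠ 0 := by
    rintro rfl
    exact (hconn.nonempty).elim (fun v => v.elim0)
  by_cases hn1 : n = 1
  · subst hn1
    refine ⟨⟨Equiv.refl _, ?_⟩⟩
    intro u v
    have huv : u = v := Subsingleton.elim u v
    subst huv
    simp only [Equiv.refl_apply]
    constructor
    · intro h; exact absurd rfl h.ne
    · intro h; exact absurd rfl h.ne
  · have hn2 : 2 ≤ n := by omega
    -- find a vertex of degree ≤ 1
    have hedge : G.edgeFinset.card + 1 = n := by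
      simpa using hG.card_edgeFinset
    obtain ⟨v0, hv0⟩ : ∃ v0, G.degree v0 ≤ 1 := by
      by_contra hcon
      push_neg at hcon
      have : ∑ v : Fin n, G.degree v = 2 * G.edgeFinset.card :=
        SimpleGraph.sum_degrees_eq_twice_card_edges G
      have h2 : ∑ v : Fin n, G.degree v ≥ ∑ _v : Fin n, 2 :=
        Finset.sum_le_sum (fun v _ => hcon v)
      simp only [Finset.sum_const, Finset.card_univ, Fintype.card_fin, smul_eq_mul] at h2
      omega
    set d : Fin n → ℕ := fun v => G.dist v0 v with hd
    have dlt : ∀ v, d v < n := by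
      intro v
      obtain ⟨p⟩ := hconn.preconnected v0 v
      have h1 : d v ≤ p.bypass.length := SimpleGraph.dist_le _
      have h2 : p.bypass.length < n := by
        have := (Walk.bypass_isPath p).length_lt
        simpa using this
      omega
    have hadj_dist : ∀ u v, G.Adj u v → d v ≤ d u + 1 := by
      intro u v huv
      have h1 : G.dist v0 v ≤ G.dist v0 u + G.dist u v := hconn.dist_triangle
      have h2 : G.dist u v ≤ 1 := by
        have := SimpleGraph.dist_le (Walk.cons huv Walk.nil)
        simpa using this
      simp only [hd]
      omega
    have hd0 : ∀ v, d v = 0 ↔ v0 = v := by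
      intro v
      simp only [hd]
      exact hconn.dist_eq_zero_iff
    have hpred : ∀ v, d v ≠ 0 → ∃ z, G.Adj z v ∧ d z + 1 = d v := by
      intro v hv
      obtain ⟨p, hp⟩ := (hconn.preconnected v0 v).exists_walk_length_eq_dist
      rcases hq : p.reverse with _ | ⟨hzv, q⟩
      · exfalso
        have : p.reverse.length = 0 := by rw [hq]; rfl
        rw [Walk.length_reverse] at this
        rw [hp] at this
        exact hv this
      · rename_i z
        refine ⟨z, hzv.symm, ?_⟩
        have hlen : p.length = q.length + 1 := by
          have := congrArg Walk.length hq
          rwa [Walk.length_reverse] at this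
        have h1 : d z ≤ q.length := by
          have := SimpleGraph.dist_le q.reverse
          simpa [hd] using this
        have h2 : d v ≤ d z + 1 := hadj_dist z v hzv.symm
        simp only [hd] at h1 h2 ⊢
        omega
    have hinj : ∀ k u v, d u = k → d v = k → u = v := by
      intro k
      induction k with
      | zero =>
        intro u v hu hv
        rw [← (hd0 u).mp hu, ← (hd0 v).mp hv]
      | succ k ih =>
        intro u v hu hv
        by_contra huv
        obtain ⟨zu, hzu, hzu'⟩ := hpred u (by omega)
        obtain ⟨zv, hzv, hzv'⟩ := hpred v (by omega)
        have hz : zu = zv := ih zu zv (by omega) (by omega)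
        subst hz
        have hmemu : u ∈ G.neighborFinset zu := by
          rw [SimpleGraph.mem_neighborFinset]; exact hzu
        have hmemv : v ∈ G.neighborFinset zu := by
          rw [SimpleGraph.mem_neighborFinset]; exact hzv
        rcases Nat.eq_zero_or_pos k with hk | hk
        · -- zu = v0, degree ≤ 1
          have : zu = v0 := ((hd0 zu).mp (by omega)).symm
          subst this
          have hsub : ({u, v} : Finset (Fin n)) ⊆ G.neighborFinset zu := by
            intro x hx
            rcases Finset.mem_insert.mp hx with rfl | hx
            · exact hmemu
            · rw [Finset.mem_singleton.mp hx]; exact hmemv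
          have hcard : ({u, v} : Finset (Fin n)).card = 2 := by
            rw [Finset.card_insert_of_notMem (by simpa using huv), Finset.card_singleton]
          have := Finset.card_le_card hsub
          rw [hcard] at this
          have : 2 ≤ G.degree zu := this
          omega
        · obtain ⟨y, hy, hy'⟩ := hpred zu (by omega)
          have hmemy : y ∈ G.neighborFinset zu := by
            rw [SimpleGraph.mem_neighborFinset]; exact hy.symm
          have hyu : y ≠ u := fun h => by rw [h] at hy'; omega
          have hyv : y ≠ v := fun h => by rw [h] at hy'; omega
          have hsub : ({u, v, y} : Finset (Fin n)) ⊆ G.neighborFinset zu := by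
            intro x hx
            rcases Finset.mem_insert.mp hx with rfl | hx
            · exact hmemu
            · rcases Finset.mem_insert.mp hx with rfl | hx
              · exact hmemv
              · rw [Finset.mem_singleton.mp hx]; exact hmemy
          have hcard : ({u, v, y} : Finset (Fin n)).card = 3 := by
            rw [Finset.card_insert_of_notMem, Finset.card_insert_of_notMem, Finset.card_singleton]
            · simpa using hyv.symm
            · simp only [Finset.mem_insert, Finset.mem_singleton]
              push_neg
              exact ⟨huv, hyu.symm⟩
          have := Finset.card_le_card hsub
          rw [hcard] at this
          have : 3 ≤ G.degree zu := this
          have := hdeg zu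
          omega
    have hadj_of_succ : ∀ u v, d v = d u + 1 → G.Adj u v := by
      intro u v hv
      obtain ⟨z, hz, hz'⟩ := hpred v (by omega)
      have : z = u := hinj (d u) z u (by omega) rfl
      rw [← this]
      exact hz
    set f : Fin n → Fin n := fun v => ⟨d v, dlt v⟩ with hf
    have hfinj : Function.Injective f := by
      intro u v huv
      have : d u = d v := by
        have := congrArg Fin.val huv
        simpa [hf] using this
      exact hinj (d v) u v this rfl
    have hbij : Function.Bijective f := (Finite.injective_iff_bijective).mp hfinj
    refine ⟨⟨Equiv.ofBijective f hbij, ?_⟩⟩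
    intro u v
    simp only [Equiv.ofBijective_apply]
    rw [pathGraph_adj]
    simp only [hf]
    constructor
    · rintro (h | h)
      · exact hadj_of_succ u v (by omega)
      · exact (hadj_of_succ v u (by omega)).symm
    · intro h
      have h1 : d v ≤ d u + 1 := hadj_dist u v h
      have h2 : d u ≤ d v + 1 := hadj_dist v u h.symm
      have h3 : d u ≠ d v := fun hc => h.ne (hinj (d v) u v hc rfl)
      omega

lemma edgeWeights_eq_of {n : ℕ} (T : WGraph n) (F : Finset (Sym2 (Fin n)))
    (h : ∀ e, e ∈ F ↔ e ∈ T.G.edgeSet) : T.edgeWeights = F.val.map T.ew := by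
  rw [WGraph.edgeWeights]
  have hF : T.G.edgeFinset = F :=
    Finset.ext (fun e => by rw [SimpleGraph.mem_edgeFinset, h e])
  rw [hF]

set_option maxHeartbeats 2000000 in
lemma exists_transfer_source {T' : WGraph n} (hT' : T'.G.IsTree)
    (hnp : ¬ Nonempty (T'.G ≃g pathGraph n)) :
    ∃ T : WGraph n, T.G.IsTree ∧ T.edgeWeights = T'.edgeWeights ∧ ¬ WIso T T' ∧
      ∃ v1 v2 v3, EdgeTransferSize T T' v1 v2 v3 := by
  classical
  -- a vertex of degree at least 3
  obtain ⟨v1, hd3⟩ : ∃ v1, 3 ≤ T'.G.degree v1 := by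
    by_contra hcon
    push_neg at hcon
    exact hnp (tree_path_class hT' (fun v => by have := hcon v; omega))
  set N := T'.G.neighborFinset v1 with hN
  have hNcard : 3 ≤ N.card := hd3
  set β : Fin n → ℕ := fun u => compSize (T'.G.deleteEdges {s(v1,u)}) u with hβ
  obtain ⟨v2, hv2N, hv2min⟩ := N.exists_min_image β (by
    rw [← Finset.card_pos]; omega)
  obtain ⟨v3, hv3⟩ : ∃ v3, v3 ∈ N.erase v2 := by
    apply Finset.card_pos.mp
    have := Finset.card_erase_of_mem hv2N
    omega
  have hv3N : v3 ∈ N := Finset.mem_of_mem_erase hv3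
  have hne23 : v2 ≠ v3 := (Finset.ne_of_mem_erase hv3).symm
  obtain ⟨u0, hu0⟩ : ∃ u0, u0 ∈ (N.erase v2).erase v3 := by
    apply Finset.card_pos.mp
    have h1 := Finset.card_erase_of_mem hv2N
    have h2 := Finset.card_erase_of_mem hv3
    omega
  have hu0N : u0 ∈ N := Finset.mem_of_mem_erase (Finset.mem_of_mem_erase hu0)
  have hu0v3 : u0 ≠ v3 := Finset.ne_of_mem_erase hu0
  have hu0v2 : u0 ≠ v2 := Finset.ne_of_mem_erase (Finset.mem_of_mem_erase hu0)
  have hA2 : T'.G.Adj v1 v2 := by rwa [hN, SimpleGraph.mem_neighborFinset] at hv2N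
  have hA3 : T'.G.Adj v1 v3 := by rwa [hN, SimpleGraph.mem_neighborFinset] at hv3N
  have hAu0 : T'.G.Adj v1 u0 := by rwa [hN, SimpleGraph.mem_neighborFinset] at hu0N
  have hne12 : v1 ≠ v2 := hA2.ne
  have hne13 : v1 ≠ v3 := hA3.ne
  have hn23 : ¬ T'.G.Adj v2 v3 := no_triangle hT'.2 hA2.symm hA3 hne23
  -- the basic Sym2 inequalities
  have he12ne13 : s(v1,v2) ≠ s(v1,v3) := by
    intro h; rw [Sym2.eq_iff] at h
    rcases h with ⟨h1, h2⟩ | ⟨h1, h2⟩ <;> simp_all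
  have he23ne13 : s(v2,v3) ≠ s(v1,v3) := by
    intro h; rw [Sym2.eq_iff] at h
    rcases h with ⟨h1, h2⟩ | ⟨h1, h2⟩ <;> simp_all
  have he12ne23 : s(v1,v2) ≠ s(v2,v3) := by
    intro h; rw [Sym2.eq_iff] at h
    rcases h with ⟨h1, h2⟩ | ⟨h1, h2⟩ <;> simp_all
  -- the new graph
  set G0 : SimpleGraph (Fin n) :=
    T'.G.deleteEdges {s(v1,v3)} ⊔ SimpleGraph.fromEdgeSet {s(v2,v3)} with hG0
  have hG0adj : ∀ u v, G0.Adj u v ↔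
      (T'.G.Adj u v ∧ s(u,v) ≠ s(v1,v3)) ∨ (s(u,v) = s(v2,v3) ∧ u ≠ v) := by
    intro u v
    rw [hG0]
    simp [deleteEdges_adj, fromEdgeSet_adj, sup_adj]
  have hadj13 : ∀ x y : Fin n, s(x,y) = s(v1,v3) → T'.G.Adj x y := by
    intro x y h
    rw [Sym2.eq_iff] at h
    rcases h with ⟨h1, h2⟩ | ⟨h1, h2⟩
    · rw [h1, h2]; exact hA3
    · rw [h1, h2]; exact hA3.symm
  have hnadj23 : ∀ x y : Fin n, s(x,y) = s(v2,v3) → ¬ T'.G.Adj x y := by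
    intro x y h
    rw [Sym2.eq_iff] at h
    rcases h with ⟨h1, h2⟩ | ⟨h1, h2⟩
    · rw [h1, h2]; exact hn23
    · rw [h1, h2]; exact fun hc => hn23 hc.symm
  have hne_of23 : ∀ x y : Fin n, s(x,y) = s(v2,v3) → x ≠ y := by
    intro x y h
    rw [Sym2.eq_iff] at h
    rcases h with ⟨h1, h2⟩ | ⟨h1, h2⟩
    · rw [h1, h2]; exact hne23
    · rw [h1, h2]; exact hne23.symm
  -- the weight function
  set w0 : Fin n → Fin n → ℝ := fun u v =>
    if s(u,v) = s(v2,v3) then T'.w v1 v3 else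
      if s(u,v) = s(v1,v3) then 0 else T'.w u v with hw0
  have hw0symm : ∀ u v, w0 u v = w0 v u := by
    intro u v
    rw [hw0]
    simp only
    rw [show s(v,u) = s(u,v) from Sym2.eq_swap, T'.symm u v]
  have hG023 : G0.Adj v2 v3 := (hG0adj v2 v3).mpr (Or.inr ⟨rfl, hne23⟩)
  have hG012 : G0.Adj v1 v2 := (hG0adj v1 v2).mpr (Or.inl ⟨hA2, he12ne13⟩)
  have hG0n13 : ¬ G0.Adj v1 v3 := by
    rw [hG0adj]
    rintro (⟨_, h⟩ | ⟨h, _⟩)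
    · exact h rfl
    · exact he23ne13 h.symm
  have hw0pos : ∀ u v, G0.Adj u v → 0 < w0 u v := by
    intro u v huv
    rw [hw0]
    simp only
    by_cases h2 : s(u,v) = s(v2,v3)
    · rw [if_pos h2]; exact T'.pos v1 v3 hA3
    · rw [if_neg h2]
      rcases (hG0adj u v).mp huv with ⟨ha, hb⟩ | ⟨hb, _⟩
      · rw [if_neg hb]; exact T'.pos u v ha
      · exact absurd hb h2
  have hw0zero : ∀ u v, ¬ G0.Adj u v → w0 u v = 0 := by
    intro u v huv
    rw [hw0]
    simp only
    by_cases h2 : s(u,v) = s(v2,v3)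
    · exact absurd ((hG0adj u v).mpr (Or.inr ⟨h2, hne_of23 u v h2⟩)) huv
    · rw [if_neg h2]
      by_cases h3 : s(u,v) = s(v1,v3)
      · rw [if_pos h3]
      · rw [if_neg h3]
        apply T'.zero
        intro hc
        exact huv ((hG0adj u v).mpr (Or.inl ⟨hc, h3⟩))
  set T : WGraph n := ⟨G0, w0, hw0symm, hw0pos, hw0zero⟩ with hT
  -- the key graph equality : deleting any set plus the new edge recovers T' minus old edge
  have hDel2 : ∀ E : Sym2 (Fin n),
      G0.deleteEdges {E, s(v2,v3)} = T'.G.deleteEdges {E, s(v1,v3)} := by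
    intro E
    ext x y
    simp only [deleteEdges_adj, Set.mem_insert_iff, Set.mem_singleton_iff, hG0adj]
    constructor
    · rintro ⟨(⟨ha, hb⟩ | ⟨hb, _⟩), hc⟩
      · push_neg at hc
        exact ⟨ha, by push_neg; exact ⟨hc.1, hb⟩⟩
      · exact absurd (Or.inr hb) hc
    · rintro ⟨ha, hb⟩
      push_neg at hb
      refine ⟨Or.inl ⟨ha, hb.2⟩, ?_⟩
      push_neg
      exact ⟨hb.1, fun hc => hnadj23 x y hc ha⟩
  have hDel1 : G0.deleteEdges {s(v2,v3)} = T'.G.deleteEdges {s(v1,v3)} := by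
    ext x y
    simp only [deleteEdges_adj, Set.mem_singleton_iff, hG0adj]
    constructor
    · rintro ⟨(⟨ha, hb⟩ | ⟨hb, _⟩), hc⟩
      · exact ⟨ha, hb⟩
      · exact absurd hb hc
    · rintro ⟨ha, hb⟩
      exact ⟨Or.inl ⟨ha, hb⟩, fun hc => hnadj23 x y hc ha⟩
  -- the transfer equation
  have hEqBack : T'.G = G0.deleteEdges {s(v2, v3)} ⊔ SimpleGraph.fromEdgeSet {s(v1, v3)} := by
    rw [hDel1]
    ext x y
    simp only [sup_adj, deleteEdges_adj, fromEdgeSet_adj, Set.mem_singleton_iff]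
    constructor
    · intro h
      by_cases h3 : s(x,y) = s(v1,v3)
      · exact Or.inr ⟨h3, h.ne⟩
      · exact Or.inl ⟨h, h3⟩
    · rintro (⟨h, _⟩ | ⟨h, _⟩)
      · exact h
      · exact hadj13 x y h
  -- connectivity of G0
  have hG0conn : G0.Connected := by
    have hpre : G0.Preconnected := by
      intro x y
      refine reach_mono ?_ (hT'.isConnected.preconnected x y)
      intro p q hpq
      by_cases h3 : s(p,q) = s(v1,v3)
      · have hstep : G0.Reachable v1 v3 := (hG012.reachable).trans hG023.reachable
        rw [Sym2.eq_iff] at h3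
        rcases h3 with ⟨h1, h2⟩ | ⟨h1, h2⟩
        · rw [h1, h2]; exact hstep
        · rw [h1, h2]; exact hstep.symm
      · exact ((hG0adj p q).mpr (Or.inl ⟨hpq, h3⟩)).reachable
    haveI : Nonempty (Fin n) := hT'.isConnected.nonempty
    exact ⟨hpre⟩
  -- acyclicity of G0
  have hG0acyc : G0.IsAcyclic := by
    rw [isAcyclic_iff_forall_adj_isBridge]
    intro x y hxy
    rw [isBridge_iff]
    show ¬ (G0.deleteEdges {s(x,y)}).Reachable x y
    by_cases h2 : s(x,y) = s(v2,v3)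
    · -- the new edge
      have hkey : ¬ (T'.G.deleteEdges {s(v1,v3)}).Reachable v2 v3 := by
        intro h
        exact no_reach_del2 hT'.2 hA3.symm hA2 hne23.symm
          (by rw [show s(v3,v1) = s(v1,v3) from Sym2.eq_swap]; simp) h.symm
      have h2' : G0.deleteEdges {s(x,y)} = T'.G.deleteEdges {s(v1,v3)} := by
        rw [h2, hDel1]
      rw [h2']
      rw [Sym2.eq_iff] at h2
      rcases h2 with ⟨h1', h2'⟩ | ⟨h1', h2'⟩
      · rw [h1', h2']; exact hkey
      · rw [h1', h2']; exact fun h => hkey h.symm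
    · -- an old edge
      have hT'xy : T'.G.Adj x y ∧ s(x,y) ≠ s(v1,v3) := by
        rcases (hG0adj x y).mp hxy with h | ⟨hb, _⟩
        · exact h
        · exact absurd hb h2
      obtain ⟨hT'adj, h3⟩ := hT'xy
      intro hreach
      have hKN : (G0.deleteEdges {s(x,y)}).deleteEdges {s(v2,v3)} =
          T'.G.deleteEdges {s(x,y), s(v1,v3)} := by
        rw [deleteEdges_deleteEdges, ← hDel2 (s(x,y))]
        congr 1
      have hmono : ∀ p q, (T'.G.deleteEdges {s(x,y), s(v1,v3)}).Adj p q →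
          (T'.G.deleteEdges {s(x,y)}).Reachable p q := by
        intro p q hpq
        rw [deleteEdges_adj] at hpq
        refine Adj.reachable ?_
        rw [deleteEdges_adj, Set.mem_singleton_iff]
        exact ⟨hpq.1, fun hc => hpq.2 (by rw [hc]; simp)⟩
      have hfinal : ¬ (T'.G.deleteEdges {s(x,y)}).Reachable x y :=
        no_reach_del1 hT'.2 hT'adj (by simp)
      have := reach_del (a := v2) (b := v3) hreach
      rw [hKN] at this
      by_cases h1 : s(x,y) = s(v1,v2)
      · -- the central edge
        have hnr12 : ¬ (T'.G.deleteEdges {s(x,y), s(v1,v3)}).Reachable v1 v2 := by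
          rw [h1]
          exact no_reach_del1 hT'.2 hA2 (by simp)
        have hnr13 : ¬ (T'.G.deleteEdges {s(x,y), s(v1,v3)}).Reachable v1 v3 :=
          no_reach_del1 hT'.2 hA3 (by simp)
        rw [h1] at this hnr12 hnr13
        -- x,y ∈ {v1,v2}
        have h1' := h1
        rw [Sym2.eq_iff] at h1'
        rcases h1' with ⟨hx1, hy1⟩ | ⟨hx1, hy1⟩ <;> subst hx1 <;> subst hy1
        · rcases this with h | ⟨ha, hb⟩ | ⟨ha, hb⟩
          · exact hnr12 h
          · exact hnr12 ha
          · exact hnr13 ha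
        · rcases this with h | ⟨ha, hb⟩ | ⟨ha, hb⟩
          · exact hnr12 h.symm
          · exact hnr13 hb.symm
          · exact hnr12 hb.symm
      · -- a generic edge
        have hadj21 : (T'.G.deleteEdges {s(x,y)}).Adj v2 v1 := by
          rw [deleteEdges_adj, Set.mem_singleton_iff]
          refine ⟨hA2.symm, ?_⟩
          rw [show s(v2,v1) = s(v1,v2) from Sym2.eq_swap]
          exact fun hc => h1 hc.symm
        have hadj13' : (T'.G.deleteEdges {s(x,y)}).Adj v1 v3 := by
          rw [deleteEdges_adj, Set.mem_singleton_iff]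
          exact ⟨hA3, fun hc => h3 hc.symm⟩
        rcases this with h | ⟨ha, hb⟩ | ⟨ha, hb⟩
        · exact hfinal (reach_mono (fun p q hpq => hmono p q hpq) h)
        · exact hfinal (((reach_mono (fun p q hpq => hmono p q hpq) ha).trans
            (hadj21.reachable.trans (hadj13'.reachable.trans
              (reach_mono (fun p q hpq => hmono p q hpq) hb)))))
        · exact hfinal (((reach_mono (fun p q hpq => hmono p q hpq) ha).trans
            ((hadj13'.symm.reachable.trans hadj21.symm.reachable).trans
              (reach_mono (fun p q hpq => hmono p q hpq) hb))))
  have hTtree : G0.IsTree := ⟨hG0conn, hG0acyc⟩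
  -- the size condition
  set K' := T'.G.deleteEdges {s(v1,v2), s(v1,v3)} with hK'
  have hble : compSize K' v2 ≤ β v2 := by
    apply compSize_le
    intro u hu
    refine reach_mono ?_ hu
    intro p q hpq
    rw [hK', deleteEdges_adj] at hpq
    refine Adj.reachable ?_
    rw [deleteEdges_adj, Set.mem_singleton_iff]
    exact ⟨hpq.1, fun hc => hpq.2 (by rw [hc]; simp)⟩
  have hnr_u0 : ¬ (T'.G.deleteEdges {s(v1,u0)}).Reachable v1 u0 :=
    no_reach_del1 hT'.2 hAu0 (by simp)
  have hsub0 : ∀ x, (T'.G.deleteEdges {s(v1,u0)}).Reachable x u0 → K'.Reachable x v1 := by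
    intro x hx
    obtain ⟨p⟩ := hx
    have hv1s : v1 ∉ p.bypass.support := by
      intro hmem
      exact hnr_u0 ⟨p.bypass.dropUntil v1 hmem⟩
    have hedges : ∀ e ∈ p.bypass.edges, e ∈ K'.edgeSet := by
      intro e he
      have he' := p.bypass.edges_subset_edgeSet he
      rw [edgeSet_deleteEdges] at he'
      rw [hK', edgeSet_deleteEdges]
      refine ⟨he'.1, ?_⟩
      intro hmem
      rcases hmem with h | h
      · subst h
        exact hv1s (p.bypass.fst_mem_support_of_mem_edges he)
      · rw [Set.mem_singleton_iff] at h
        subst h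
        exact hv1s (p.bypass.fst_mem_support_of_mem_edges he)
    have hreach : K'.Reachable x u0 := ⟨p.bypass.transfer K' hedges⟩
    have hadj : K'.Adj u0 v1 := by
      rw [hK', deleteEdges_adj]
      refine ⟨hAu0.symm, ?_⟩
      intro hmem
      rcases hmem with h | h
      · rw [Sym2.eq_iff] at h
        rcases h with ⟨h1, h2⟩ | ⟨h1, h2⟩
        · exact hAu0.ne' h1
        · exact hu0v2 h1
      · rw [Set.mem_singleton_iff, Sym2.eq_iff] at h
        rcases h with ⟨h1, h2⟩ | ⟨h1, h2⟩
        · exact hAu0.ne' h1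
        · exact hu0v3 h1
    exact hreach.trans hadj.reachable
  have hstep : β u0 + 1 ≤ compSize K' v1 := by
    have h1 : insert v1 {x | (T'.G.deleteEdges {s(v1,u0)}).Reachable x u0} ⊆
        {x | K'.Reachable x v1} := by
      intro x hx
      rcases Set.mem_insert_iff.mp hx with rfl | hx
      · exact Reachable.refl _
      · exact hsub0 x hx
    have h2 : v1 ∉ {x | (T'.G.deleteEdges {s(v1,u0)}).Reachable x u0} := hnr_u0
    have h3 := Set.ncard_insert_of_notMem h2 (Set.toFinite _)
    have h4 := Set.ncard_le_ncard h1 (Set.toFinite _)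
    rw [h3] at h4
    rw [hβ]
    simp only
    rw [compSize_eq_card, compSize_eq_card, Nat.card_coe_set_eq, Nat.card_coe_set_eq]
    omega
  have hminle : β v2 ≤ β u0 := hv2min u0 hu0N
  have hsize' : compSize K' v2 < compSize K' v1 := by omega
  have hKK : G0.deleteEdges {s(v1,v2), s(v2,v3)} = K' := by
    rw [hK']
    exact hDel2 (s(v1,v2))
  -- the transfer
  have hTransfer : EdgeTransferSize T T' v1 v2 v3 := by
    refine ⟨⟨hG012, hG023, hne13, hEqBack, ?_, ?_⟩, ?_⟩
    · show T'.w v1 v3 = w0 v2 v3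
      rw [hw0]
      simp
    · intro u v hu3 hu2
      show T'.w u v = w0 u v
      rw [hw0]
      simp only
      rw [if_neg hu2, if_neg hu3]
    · show compSize (G0.deleteEdges {s(v1,v2), s(v2,v3)}) v2 <
        compSize (G0.deleteEdges {s(v1,v2), s(v2,v3)}) v1
      rw [hKK]
      exact hsize'
  -- edge weights are preserved
  have he2notin : s(v2,v3) ∉ T'.G.edgeFinset := by
    rw [SimpleGraph.mem_edgeFinset, SimpleGraph.mem_edgeSet]
    exact hn23
  have he3in : s(v1,v3) ∈ T'.G.edgeFinset := by
    rw [SimpleGraph.mem_edgeFinset, SimpleGraph.mem_edgeSet]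
    exact hA3
  have hES : G0.edgeSet = insert (s(v2,v3)) (T'.G.edgeSet \ {s(v1,v3)}) := by
    rw [hG0, edgeSet_sup, edgeSet_deleteEdges, edgeSet_fromEdgeSet]
    have hdiag : ({s(v2,v3)} : Set (Sym2 (Fin n))) \ {e | e.IsDiag} = {s(v2,v3)} := by
      ext e
      simp only [Set.mem_diff, Set.mem_singleton_iff, Set.mem_setOf_eq, and_iff_left_iff_imp]
      rintro rfl
      rw [Sym2.mk_isDiag_iff]
      exact hne23
    rw [Sym2.diagSet_eq_setOfPred_isDiag, hdiag]
    rw [Set.union_comm, Set.singleton_union]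
  have hw1 : T.edgeWeights =
      (insert (s(v2,v3)) (T'.G.edgeFinset.erase (s(v1,v3)))).val.map T.ew := by
    apply edgeWeights_eq_of
    intro e
    rw [Finset.mem_insert, Finset.mem_erase, SimpleGraph.mem_edgeFinset,
      show T.G.edgeSet = G0.edgeSet from rfl, hES,
      Set.mem_insert_iff, Set.mem_diff, Set.mem_singleton_iff]
    tauto
  have hw2 : T'.edgeWeights = (T'.G.edgeFinset.val).map T'.ew :=
    edgeWeights_eq_of T' _ (fun e => SimpleGraph.mem_edgeFinset)
  have he2noterase : s(v2,v3) ∉ T'.G.edgeFinset.erase (s(v1,v3)) := by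
    intro h
    exact he2notin (Finset.mem_of_mem_erase h)
  have hval : (insert (s(v2,v3)) (T'.G.edgeFinset.erase (s(v1,v3)))).val =
      s(v2,v3) ::ₘ (T'.G.edgeFinset.erase (s(v1,v3))).val := by
    rw [Finset.insert_val_of_notMem he2noterase]
  have hvalE' : T'.G.edgeFinset.val =
      s(v1,v3) ::ₘ (T'.G.edgeFinset.erase (s(v1,v3))).val := by
    rw [Finset.erase_val]
    exact (Multiset.cons_erase (Finset.mem_def.mp he3in)).symm
  have hewe2 : T.ew (s(v2,v3)) = T'.ew (s(v1,v3)) := by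
    rw [WGraph.ew, WGraph.ew, Sym2.lift_mk, Sym2.lift_mk]
    show w0 v2 v3 = T'.w v1 v3
    rw [hw0]
    simp
  have hmapcongr : ((T'.G.edgeFinset.erase (s(v1,v3))).val).map T.ew =
      ((T'.G.edgeFinset.erase (s(v1,v3))).val).map T'.ew := by
    apply Multiset.map_congr rfl
    intro e he
    have hene3 : e ≠ s(v1,v3) := Finset.ne_of_mem_erase (Finset.mem_def.mpr he)
    have hene2 : e ≠ s(v2,v3) := by
      rintro rfl
      exact he2notin (Finset.mem_of_mem_erase (Finset.mem_def.mpr he))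
    clear he
    revert hene3 hene2
    refine Sym2.ind (fun x y h2 h3 => ?_) e
    rw [WGraph.ew, WGraph.ew, Sym2.lift_mk, Sym2.lift_mk]
    show w0 x y = T'.w x y
    rw [hw0]
    simp only
    rw [if_neg h2, if_neg h3]
  have hweights : T.edgeWeights = T'.edgeWeights := by
    rw [hw1, hw2, hval, hvalE', Multiset.map_cons,
      Multiset.map_cons, hewe2, hmapcongr]
  have hPhi : Phi G0 < Phi T'.G :=
    Phi_lt_of_transfer hTtree hT' hG012 hG023 hne13 hEqBack (by rw [hKK]; exact hsize')
  have hnotiso : ¬ WIso T T' := by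
    rintro ⟨f, -⟩
    have : Phi G0 = Phi T'.G := Phi_iso f
    omega
  exact ⟨T, hTtree, hweights, hnotiso, v1, v2, v3, hTransfer⟩

end AuxLemmas

theorem stmt12 (W : Multiset ℝ) (hW : ∀ x ∈ W, 0 < x) {n : ℕ}
    (T' : WGraph n) (hT' : T'.G.IsTree) (hw' : T'.edgeWeights = W)
    (hnp : ¬ Nonempty (T'.G ≃g SimpleGraph.pathGraph n)) :
    (∃ T : WGraph n, T.G.IsTree ∧ T.edgeWeights = W ∧ ¬ WIso T T' ∧
      ∃ v1 v2 v3 : Fin n, EdgeTransferSize T T' v1 v2 v3) ∧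
    (∀ P : WGraph n, P.G.IsTree → P.edgeWeights = W →
      Nonempty (P.G ≃g SimpleGraph.pathGraph n) →
      ∀ (T : WGraph n), T.G.IsTree → ∀ v1 v2 v3 : Fin n, ¬ EdgeTransferSize T P v1 v2 v3) := by
  constructor
  · obtain ⟨T, h1, h2, h3, v1, v2, v3, h4⟩ := exists_transfer_source hT' hnp
    exact ⟨T, h1, by rw [h2, hw'], h3, v1, v2, v3, h4⟩
  · intro P _hPtree _hPw hPiso T hTtree v1 v2 v3
    exact no_transfer_to_path hPiso T hTtree v1 v2 v3
end
end
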